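/- arXiv:2111.10849 — 4 statements merged into one kernel-verified Lean document; each statement's English description precedes it below -/
import Mathlib

section
/- Let 1 < p < ∞ and τ > 0, and fix x₀, ξ₀ ∈ ℝⁿ. Then for all u ∈ L^p(ℝⁿ) and v ∈ L^{p'}(ℝⁿ), where 1/p + 1/p' = 1, the pairing (R_{λ,τ}(x₀,ξ₀)u, v) = ∫_{ℝⁿ} (R_{λ,τ}(x₀,ξ₀)u)(x) \overline{v(x)} dx tends to 0 as λ → ∞. -/
open MeasureTheory Real Filter
open scoped RealInnerProductSpace BigOperators ENNReal

noncomputable section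

/-- Euclidean space ℝⁿ. -/
abbrev En (n : ℕ) : Type := EuclideanSpace ℝ (Fin n)

/-- Partial derivative in the `i`-th coordinate direction. -/
def pd {n : ℕ} {F : Type*} [NormedAddCommGroup F] [NormedSpace ℝ F]
    (i : Fin n) (f : En n → F) : En n → F :=
  fun x => fderiv ℝ f x (EuclideanSpace.single i 1)

/-- Iterated partial derivative `∂^α` for a multi-index `α`. -/
def mpd {n : ℕ} {F : Type*} [NormedAddCommGroup F] [NormedSpace ℝ F]
    (α : Fin n → ℕ) (f : En n → F) : En n → F :=
  (List.finRange n).foldr (fun i g => (pd i)^[α i] g) f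

/-- Mixed derivative `∂_x^α ∂_ξ^β σ` of a symbol. -/
def mixpd {n : ℕ} (α β : Fin n → ℕ) (σ : En n → En n → ℂ) : En n → En n → ℂ :=
  fun x ξ => mpd α (fun y => mpd β (σ y) ξ) x

/-- `Λ` is a weight function of polynomial growth with parameters `μ₀ ≤ μ₁ ≤ μ`. -/
structure IsWeight (n : ℕ) (Λ : En n → ℝ) (μ₀ μ₁ μ : ℝ) : Prop where
  pos : ∀ ξ, 0 < Λ ξ
  smooth : ContDiff ℝ (⊤ : ℕ∞) Λ
  growth : ∃ C₀ C₁ : ℝ, 0 < C₀ ∧ C₀ ≤ C₁ ∧ ∀ ξ : En n,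
    C₀ * (1 + ‖ξ‖) ^ μ₀ ≤ Λ ξ ∧ Λ ξ ≤ C₁ * (1 + ‖ξ‖) ^ μ₁
  hμ₀ : 0 < μ₀
  hμ₀₁ : μ₀ ≤ μ₁
  hμ₁ : μ₁ ≤ μ
  deriv_bound : ∀ (α γ : Fin n → ℕ), (∀ i, γ i ≤ 1) →
    ∃ C > 0, ∀ ξ : En n,
      |(∏ i, ξ i ^ γ i) * mpd (α + γ) Λ ξ| ≤ C * Λ ξ ^ (1 - (∑ i, (α i : ℝ)) / μ)

/-- The symbol class `S^m_{ρ,Λ}`. -/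
def SClass {n : ℕ} (Λ : En n → ℝ) (ρ m : ℝ) (σ : En n → En n → ℂ) : Prop :=
  ContDiff ℝ (⊤ : ℕ∞) (fun q : En n × En n => σ q.1 q.2) ∧
  ∀ α β : Fin n → ℕ, ∃ C > 0, ∀ x ξ : En n,
    ‖mixpd α β σ x ξ‖ ≤ C * Λ ξ ^ (m - ρ * ∑ i, (β i : ℝ))

/-- The symbol class `M^m_{ρ,Λ}`. -/
def MClass {n : ℕ} (Λ : En n → ℝ) (ρ m : ℝ) (σ : En n → En n → ℂ) : Prop :=
  ∀ γ : Fin n → ℕ, (∀ i, γ i ≤ 1) →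
    SClass Λ ρ m (fun x ξ => ((∏ i, ξ i ^ γ i : ℝ) : ℂ) * mixpd 0 γ σ x ξ)

/-- The Fourier transform `φ̂(ξ) = (2π)^{-n/2} ∫ e^{-ix·ξ} φ(x) dx`. -/
def ft {n : ℕ} (φ : En n → ℂ) (ξ : En n) : ℂ :=
  (((2 * Real.pi) ^ (-(n : ℝ) / 2) : ℝ) : ℂ) *
    ∫ (x : En n), Complex.exp (-Complex.I * (⟪x, ξ⟫ : ℂ)) * φ x

/-- The pseudo-differential operator `T_σ`. -/
def pdo {n : ℕ} (σ : En n → En n → ℂ) (φ : En n → ℂ) (x : En n) : ℂ :=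
  (((2 * Real.pi) ^ (-(n : ℝ) / 2) : ℝ) : ℂ) *
    ∫ (ξ : En n), Complex.exp (Complex.I * (⟪x, ξ⟫ : ℂ)) * σ x ξ * ft φ ξ

end

noncomputable section

/-- The SG symbol class `S^{m₁,m₂}_{ρ,Λ}`. -/
def SGClass {n : ℕ} (Λ : En n → ℝ) (ρ m₁ m₂ : ℝ) (σ : En n → En n → ℂ) : Prop :=
  ContDiff ℝ (⊤ : ℕ∞) (fun q : En n × En n => σ q.1 q.2) ∧
  ∀ α β : Fin n → ℕ, ∃ C > 0, ∀ x ξ : En n,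
    ‖mixpd α β σ x ξ‖ ≤
      C * Λ x ^ (m₂ - ρ * ∑ i, (α i : ℝ)) * Λ ξ ^ (m₁ - ρ * ∑ i, (β i : ℝ))

/-- The SG symbol class `M^{m₁,m₂}_{ρ,Λ}`. -/
def SGMClass {n : ℕ} (Λ : En n → ℝ) (ρ m₁ m₂ : ℝ) (σ : En n → En n → ℂ) : Prop :=
  ∀ γ δ : Fin n → ℕ, (∀ i, γ i ≤ 1) → (∀ i, δ i ≤ 1) →
    SGClass Λ ρ m₁ m₂ (fun x ξ =>
      ((∏ i, x i ^ δ i : ℝ) : ℂ) * ((∏ i, ξ i ^ γ i : ℝ) : ℂ) * mixpd δ γ σ x ξ)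

end
section Aux
open MeasureTheory Complex

variable {n : ℕ}

private lemma memLp_comp_aux {r : ℝ≥0∞} {f : En n → ℂ}
    (hf : MemLp f r (volume : Measure (En n))) {s : ℝ} (hs : s ≠ 0) (x₀ : En n) :
    MemLp (fun x : En n => f (s • (x - x₀))) r (volume : Measure (En n)) := by
  have h1 : MemLp (fun y : En n => f (s • y)) r (volume : Measure (En n)) := by
    have hmap := MeasureTheory.Measure.map_addHaar_smul (volume : Measure (En n)) hs
    have h2 : MemLp f r (Measure.map (fun y : En n => s • y) volume) := by
      rw [show (fun y : En n => s • y) = (s • ·) from rfl, hmap]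
      exact hf.smul_measure ENNReal.ofReal_ne_top
    exact h2.comp_of_map (continuous_const_smul s).measurable.aemeasurable
  exact h1.comp_measurePreserving (measurePreserving_sub_right volume x₀)

private lemma integral_comp_shift (g : En n → ℝ) (s : ℝ) (x₀ : En n) :
    ∫ x : En n, g (s • (x - x₀)) = |((s ^ n : ℝ))⁻¹| * ∫ x : En n, g x := by
  calc ∫ x : En n, g (s • (x - x₀)) = ∫ x : En n, (fun y : En n => g (s • y)) (x - x₀) := rfl
    _ = ∫ x : En n, g (s • x) := integral_sub_right_eq_self (fun y : En n => g (s • y)) x₀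
    _ = |((s ^ n : ℝ))⁻¹| * ∫ x : En n, g x := by
        rw [MeasureTheory.Measure.integral_comp_smul volume (fun y : En n => g y) s]
        simp [finrank_euclideanSpace, smul_eq_mul]
end Aux

section Aux2
open MeasureTheory Complex

variable {n : ℕ}

private lemma phase_cont (l : ℝ) (ξ₀ : En n) :
    Continuous fun x : En n => Complex.exp (Complex.I * ((l * ⟪x, ξ₀⟫ : ℝ) : ℂ)) := by
  have h1 : Continuous fun x : En n => ⟪x, ξ₀⟫ := continuous_id.inner continuous_const
  exact Complex.continuous_exp.comp
    (continuous_const.mul (Complex.continuous_ofReal.comp (continuous_const.mul h1)))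

private lemma phase_norm (l : ℝ) (ξ₀ : En n) (x : En n) :
    ‖Complex.exp (Complex.I * ((l * ⟪x, ξ₀⟫ : ℝ) : ℂ))‖ = 1 := by
  rw [mul_comm]
  simp [Complex.norm_exp]

private lemma memLp_phase (l : ℝ) (ξ₀ : En n) :
    MemLp (fun x : En n => Complex.exp (Complex.I * ((l * ⟪x, ξ₀⟫ : ℝ) : ℂ))) ∞
      (volume : Measure (En n)) :=
  memLp_top_of_bound (phase_cont l ξ₀).aestronglyMeasurable 1
    (Filter.Eventually.of_forall fun x => le_of_eq (phase_norm l ξ₀ x))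

private lemma memLp_first {p τ : ℝ} {f : En n → ℂ}
    (hf : MemLp f (ENNReal.ofReal p) (volume : Measure (En n))) (x₀ ξ₀ : En n)
    {l : ℝ} (hl : 0 < l) :
    MemLp (fun x : En n => ((l ^ (τ * n / p) : ℝ) : ℂ) *
        Complex.exp (Complex.I * ((l * ⟪x, ξ₀⟫ : ℝ) : ℂ)) * f ((l ^ τ : ℝ) • (x - x₀)))
      (ENNReal.ofReal p) (volume : Measure (En n)) := by
  have hs : (l : ℝ) ^ τ ≠ 0 := (Real.rpow_pos_of_pos hl τ).ne'
  have h1 := memLp_comp_aux hf hs x₀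
  have h2 : MemLp (fun x : En n =>
      Complex.exp (Complex.I * ((l * ⟪x, ξ₀⟫ : ℝ) : ℂ)) * f ((l ^ τ : ℝ) • (x - x₀)))
      (ENNReal.ofReal p) (volume : Measure (En n)) := h1.smul (memLp_phase l ξ₀)
  have h3 := h2.const_mul ((l ^ (τ * n / p) : ℝ) : ℂ)
  simpa [mul_assoc] using h3

private lemma memLp_conj {r : ℝ≥0∞} {w : En n → ℂ}
    (hw : MemLp w r (volume : Measure (En n))) :
    MemLp (fun x : En n => (starRingEnd ℂ) (w x)) r (volume : Measure (En n)) := by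
  refine ⟨Complex.continuous_conj.comp_aestronglyMeasurable hw.1, ?_⟩
  have : eLpNorm (fun x : En n => (starRingEnd ℂ) (w x)) r volume = eLpNorm w r volume :=
    le_antisymm (eLpNorm_mono fun x => by simp) (eLpNorm_mono fun x => by simp)
  rw [this]; exact hw.2

end Aux2

section Aux3
open MeasureTheory Complex

variable {n : ℕ}

private lemma pairing_integrable {p q τ : ℝ} (hpq : p.HolderConjugate q)
    {f w : En n → ℂ} (hf : MemLp f (ENNReal.ofReal p) (volume : Measure (En n)))
    (hw : MemLp w (ENNReal.ofReal q) (volume : Measure (En n)))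
    (x₀ ξ₀ : En n) {l : ℝ} (hl : 0 < l) :
    Integrable (fun x : En n => (((l ^ (τ * n / p) : ℝ) : ℂ) *
        Complex.exp (Complex.I * ((l * ⟪x, ξ₀⟫ : ℝ) : ℂ)) * f ((l ^ τ : ℝ) • (x - x₀))) *
        (starRingEnd ℂ) (w x)) (volume : Measure (En n)) := by
  have hF := memLp_first (τ := τ) hf x₀ ξ₀ hl
  have hwc := memLp_conj hw
  have h1 : (1 : ℝ≥0∞) / 1 = 1 / ENNReal.ofReal p + 1 / ENNReal.ofReal q := by
    simp only [one_div, inv_one]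
    exact hpq.inv_add_inv_ennreal.symm
  haveI : ENNReal.HolderTriple (ENNReal.ofReal p) (ENNReal.ofReal q) 1 :=
    ENNReal.holderConjugate_iff.mpr hpq.inv_add_inv_ennreal
  have := hwc.smul (r := 1) hF
  rw [memLp_one_iff_integrable] at this
  exact this

private lemma const_one {p τ : ℝ} (hp : 0 < p) {l : ℝ} (hl : 0 < l) :
    (l ^ (τ * (n : ℝ) / p)) ^ p * |(((l ^ τ : ℝ) ^ n : ℝ))⁻¹| = 1 := by
  have h1 : ((l ^ τ : ℝ) ^ n : ℝ) = l ^ (τ * (n : ℝ)) := by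
    rw [← Real.rpow_natCast (l ^ τ) n, ← Real.rpow_mul hl.le]
  have h2 : (l ^ (τ * (n : ℝ) / p)) ^ p = l ^ (τ * (n : ℝ)) := by
    rw [← Real.rpow_mul hl.le]
    congr 1
    field_simp
  rw [h1, h2, _root_.abs_of_nonneg (inv_nonneg.2 (Real.rpow_pos_of_pos hl _).le)]
  exact mul_inv_cancel₀ (Real.rpow_pos_of_pos hl _).ne'

private lemma pairing_bound {p q τ : ℝ} (hpq : p.HolderConjugate q)
    {f w : En n → ℂ} (hf : MemLp f (ENNReal.ofReal p) (volume : Measure (En n)))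
    (hw : MemLp w (ENNReal.ofReal q) (volume : Measure (En n)))
    (x₀ ξ₀ : En n) {l : ℝ} (hl : 0 < l) :
    ‖∫ x : En n, (((l ^ (τ * n / p) : ℝ) : ℂ) *
        Complex.exp (Complex.I * ((l * ⟪x, ξ₀⟫ : ℝ) : ℂ)) * f ((l ^ τ : ℝ) • (x - x₀))) *
        (starRingEnd ℂ) (w x)‖
      ≤ (∫ x : En n, ‖f x‖ ^ p) ^ (1 / p) * (∫ x : En n, ‖w x‖ ^ q) ^ (1 / q) := by
  have hF := memLp_first (τ := τ) hf x₀ ξ₀ hl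
  have hwc := memLp_conj hw
  have step1 : ‖∫ x : En n, (((l ^ (τ * n / p) : ℝ) : ℂ) *
        Complex.exp (Complex.I * ((l * ⟪x, ξ₀⟫ : ℝ) : ℂ)) * f ((l ^ τ : ℝ) • (x - x₀))) *
        (starRingEnd ℂ) (w x)‖ ≤
      ∫ x : En n, ‖((l ^ (τ * n / p) : ℝ) : ℂ) *
        Complex.exp (Complex.I * ((l * ⟪x, ξ₀⟫ : ℝ) : ℂ)) * f ((l ^ τ : ℝ) • (x - x₀))‖ *
        ‖(starRingEnd ℂ) (w x)‖ := by
    refine le_trans (norm_integral_le_integral_norm _) (le_of_eq ?_)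
    simp only [norm_mul]
  refine step1.trans ?_
  refine le_trans (MeasureTheory.integral_mul_norm_le_Lp_mul_Lq hpq hF hwc) (le_of_eq ?_)
  congr 1
  · -- the Lp factor
    have key : ∀ x : En n, ‖((l ^ (τ * n / p) : ℝ) : ℂ) *
        Complex.exp (Complex.I * ((l * ⟪x, ξ₀⟫ : ℝ) : ℂ)) * f ((l ^ τ : ℝ) • (x - x₀))‖ ^ p
        = (l ^ (τ * (n : ℝ) / p)) ^ p *
          (fun y : En n => ‖f y‖ ^ p) ((l ^ τ : ℝ) • (x - x₀)) := by
      intro x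
      rw [norm_mul, norm_mul, phase_norm, Complex.norm_real, Real.norm_eq_abs,
        _root_.abs_of_nonneg (Real.rpow_pos_of_pos hl _).le, mul_one,
        Real.mul_rpow (Real.rpow_pos_of_pos hl _).le (norm_nonneg _)]
    calc (∫ x : En n, ‖((l ^ (τ * n / p) : ℝ) : ℂ) *
        Complex.exp (Complex.I * ((l * ⟪x, ξ₀⟫ : ℝ) : ℂ)) * f ((l ^ τ : ℝ) • (x - x₀))‖ ^ p)
          ^ (1 / p)
        = ((l ^ (τ * (n : ℝ) / p)) ^ p *
            ∫ x : En n, (fun y : En n => ‖f y‖ ^ p) ((l ^ τ : ℝ) • (x - x₀))) ^ (1 / p) := by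
          rw [← MeasureTheory.integral_const_mul]
          congr 1
          exact integral_congr_ae (Filter.Eventually.of_forall key)
      _ = (∫ x : En n, ‖f x‖ ^ p) ^ (1 / p) := by
          rw [integral_comp_shift (fun y : En n => ‖f y‖ ^ p) (l ^ τ) x₀, ← mul_assoc,
            const_one (hpq.pos) hl, one_mul]
  · congr 1
    refine integral_congr_ae (Filter.Eventually.of_forall fun x => ?_)
    simp

end Aux3

section Aux4
open MeasureTheory Complex

variable {n : ℕ}

private lemma pairing_compact_bound {p τ : ℝ} {g h : En n → ℂ}
    (hg_cont : Continuous g) (hg_supp : HasCompactSupport g)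
    (hh_cont : Continuous h) (hh_supp : HasCompactSupport h) (x₀ ξ₀ : En n) :
    ∃ D : ℝ, 0 ≤ D ∧ ∀ l : ℝ, 0 < l →
      ‖∫ x : En n, (((l ^ (τ * n / p) : ℝ) : ℂ) *
          Complex.exp (Complex.I * ((l * ⟪x, ξ₀⟫ : ℝ) : ℂ)) * g ((l ^ τ : ℝ) • (x - x₀))) *
          (starRingEnd ℂ) (h x)‖
        ≤ D * (l ^ (τ * (n : ℝ) / p) * (((l ^ τ : ℝ) ^ n : ℝ))⁻¹) := by
  obtain ⟨z, hz⟩ := hh_cont.norm.exists_forall_ge_of_hasCompactSupport hh_supp.norm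
  set C : ℝ := ‖h z‖ with hC
  have hC0 : 0 ≤ C := norm_nonneg _
  set A : ℝ := ∫ y : En n, ‖g y‖ with hA
  have hA0 : 0 ≤ A := integral_nonneg fun y => norm_nonneg _
  refine ⟨C * A, mul_nonneg hC0 hA0, fun l hl => ?_⟩
  have hs : (0 : ℝ) < l ^ τ := Real.rpow_pos_of_pos hl τ
  have hc : (0 : ℝ) < l ^ (τ * (n : ℝ) / p) := Real.rpow_pos_of_pos hl _
  have hgi : Integrable (fun x : En n => ‖g ((l ^ τ : ℝ) • (x - x₀))‖)
      (volume : Measure (En n)) := by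
    have : Integrable g (volume : Measure (En n)) :=
      hg_cont.integrable_of_hasCompactSupport hg_supp
    have := memLp_comp_aux (memLp_one_iff_integrable.mpr this) hs.ne' x₀
    exact (memLp_one_iff_integrable.mp this).norm
  have step1 : ‖∫ x : En n, (((l ^ (τ * n / p) : ℝ) : ℂ) *
      Complex.exp (Complex.I * ((l * ⟪x, ξ₀⟫ : ℝ) : ℂ)) * g ((l ^ τ : ℝ) • (x - x₀))) *
      (starRingEnd ℂ) (h x)‖ ≤
      ∫ x : En n, (l ^ (τ * (n : ℝ) / p) * C) * ‖g ((l ^ τ : ℝ) • (x - x₀))‖ := by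
    refine norm_integral_le_of_norm_le ((hgi.const_mul _)) (Filter.Eventually.of_forall fun x => ?_)
    rw [norm_mul, norm_mul, norm_mul, phase_norm, Complex.norm_real, Real.norm_eq_abs,
      _root_.abs_of_nonneg hc.le, mul_one]
    have h1 : ‖(starRingEnd ℂ) (h x)‖ ≤ C := by
      rw [RCLike.norm_conj]; exact hz x
    calc l ^ (τ * (n : ℝ) / p) * ‖g ((l ^ τ : ℝ) • (x - x₀))‖ * ‖(starRingEnd ℂ) (h x)‖
        ≤ l ^ (τ * (n : ℝ) / p) * ‖g ((l ^ τ : ℝ) • (x - x₀))‖ * C := by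
          exact mul_le_mul_of_nonneg_left h1 (by positivity)
      _ = (l ^ (τ * (n : ℝ) / p) * C) * ‖g ((l ^ τ : ℝ) • (x - x₀))‖ := by ring
  refine step1.trans (le_of_eq ?_)
  rw [MeasureTheory.integral_const_mul, integral_comp_shift (fun y : En n => ‖g y‖) (l ^ τ) x₀,
    _root_.abs_of_nonneg (inv_nonneg.2 (pow_nonneg hs.le n))]
  ring

end Aux4

section Aux5
open MeasureTheory Complex

variable {n : ℕ}

private lemma Np_le {p : ℝ} (hp0 : 0 < p) {f : En n → ℂ}
    (hf : MemLp f (ENNReal.ofReal p) (volume : Measure (En n))) {η : ℝ} (hη : 0 < η)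
    (hle : eLpNorm f (ENNReal.ofReal p) (volume : Measure (En n)) ≤ ENNReal.ofReal η) :
    (∫ x : En n, ‖f x‖ ^ p) ^ (1 / p) ≤ η := by
  rw [hf.eLpNorm_eq_integral_rpow_norm (ENNReal.ofReal_pos.mpr hp0).ne' ENNReal.ofReal_ne_top,
    ENNReal.toReal_ofReal hp0.le] at hle
  rw [one_div]
  exact (ENNReal.ofReal_le_ofReal_iff hη.le).mp hle

end Aux5

theorem Rop_pairing_tendsto_zero' (n : ℕ) (hn : 1 ≤ n) (τ : ℝ) (hτ : 0 < τ)
    (x₀ ξ₀ : En n) (p q : ℝ) (hp : 1 < p) (hq : 1 < q) (hpq : 1 / p + 1 / q = 1)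
    (u : Lp ℂ (ENNReal.ofReal p) (volume : Measure (En n)))
    (v : Lp ℂ (ENNReal.ofReal q) (volume : Measure (En n))) :
    Tendsto (fun l : ℝ => ∫ (x : En n),
        (((l ^ (τ * n / p) : ℝ) : ℂ) * Complex.exp (Complex.I * ((l * ⟪x, ξ₀⟫ : ℝ) : ℂ)) *
          u ((l ^ τ : ℝ) • (x - x₀))) * (starRingEnd ℂ) (v x))
      atTop (nhds 0) := by
  have hp0 : (0 : ℝ) < p := lt_trans one_pos hp
  have hq0 : (0 : ℝ) < q := lt_trans one_pos hq
  have hpq' : p.HolderConjugate q := Real.holderConjugate_iff.mpr ⟨hp, by rw [← one_div, ← one_div]; exact hpq⟩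
  have hn0 : (0 : ℝ) < (n : ℝ) := by exact_mod_cast Nat.pos_of_ne_zero (by omega)
  -- exponent of decay
  have he : 0 < τ * (n : ℝ) - τ * (n : ℝ) / p := by
    have h1 : 0 < τ * (n : ℝ) := mul_pos hτ hn0
    have h2 : τ * (n : ℝ) / p < τ * (n : ℝ) := div_lt_self h1 hp
    linarith
  set e : ℝ := τ * (n : ℝ) - τ * (n : ℝ) / p with he_def
  rw [Metric.tendsto_atTop]
  intro ε hε
  -- approximate u
  set Nqv : ℝ := (∫ x : En n, ‖(v : En n → ℂ) x‖ ^ q) ^ (1 / q) with hNqv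
  have hNqv0 : 0 ≤ Nqv := Real.rpow_nonneg (integral_nonneg fun y => by positivity) _
  set η₁ : ℝ := ε / (3 * (Nqv + 1)) with hη₁def
  have hη₁ : 0 < η₁ := by positivity
  obtain ⟨g, g_supp, hg_close, g_cont, g_mem⟩ :=
    (Lp.memLp u).exists_hasCompactSupport_eLpNorm_sub_le (μ := (volume : Measure (En n)))
      ENNReal.ofReal_ne_top (ε := ENNReal.ofReal η₁) (ENNReal.ofReal_pos.mpr hη₁).ne'
  have hNp1 : (∫ x : En n, ‖((u : En n → ℂ) - g) x‖ ^ p) ^ (1 / p) ≤ η₁ :=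
    Np_le hp0 ((Lp.memLp u).sub g_mem) hη₁ hg_close
  -- approximate v
  set Npg : ℝ := (∫ x : En n, ‖g x‖ ^ p) ^ (1 / p) with hNpg
  have hNpg0 : 0 ≤ Npg := Real.rpow_nonneg (integral_nonneg fun y => by positivity) _
  set η₂ : ℝ := ε / (3 * (Npg + 1)) with hη₂def
  have hη₂ : 0 < η₂ := by positivity
  obtain ⟨h, h_supp, hh_close, h_cont, h_mem⟩ :=
    (Lp.memLp v).exists_hasCompactSupport_eLpNorm_sub_le (μ := (volume : Measure (En n)))
      ENNReal.ofReal_ne_top (ε := ENNReal.ofReal η₂) (ENNReal.ofReal_pos.mpr hη₂).ne'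
  have hNq2 : (∫ x : En n, ‖((v : En n → ℂ) - h) x‖ ^ q) ^ (1 / q) ≤ η₂ :=
    Np_le hq0 ((Lp.memLp v).sub h_mem) hη₂ hh_close
  -- compact-support decay
  obtain ⟨D, hD0, hD⟩ := pairing_compact_bound (p := p) (τ := τ) g_cont g_supp h_cont h_supp x₀ ξ₀
  have ht : Tendsto (fun l : ℝ => D * l ^ (-e)) atTop (nhds 0) := by
    simpa using (tendsto_rpow_neg_atTop he).const_mul D
  have h3 : ∀ᶠ l in (atTop : Filter ℝ), D * l ^ (-e) < ε / 3 :=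
    ht.eventually_lt_const (by positivity)
  obtain ⟨N, hN⟩ := eventually_atTop.mp ((eventually_ge_atTop (1 : ℝ)).and h3)
  refine ⟨N, fun l hl => ?_⟩
  obtain ⟨hl1, hl3⟩ := hN l hl
  have hl0 : (0 : ℝ) < l := lt_of_lt_of_le one_pos hl1
  -- split the integral
  have i1 := pairing_integrable (τ := τ) hpq' ((Lp.memLp u).sub g_mem) (Lp.memLp v) x₀ ξ₀ hl0
  have i2 := pairing_integrable (τ := τ) hpq' g_mem ((Lp.memLp v).sub h_mem) x₀ ξ₀ hl0
  have i3 := pairing_integrable (τ := τ) hpq' g_mem h_mem x₀ ξ₀ hl0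
  have splitA : (∫ x : En n,
        (((l ^ (τ * n / p) : ℝ) : ℂ) * Complex.exp (Complex.I * ((l * ⟪x, ξ₀⟫ : ℝ) : ℂ)) *
          u ((l ^ τ : ℝ) • (x - x₀))) * (starRingEnd ℂ) (v x))
      = (∫ x : En n,
        (((l ^ (τ * n / p) : ℝ) : ℂ) * Complex.exp (Complex.I * ((l * ⟪x, ξ₀⟫ : ℝ) : ℂ)) *
          ((u : En n → ℂ) - g) ((l ^ τ : ℝ) • (x - x₀))) * (starRingEnd ℂ) (v x))
      + (∫ x : En n,
        (((l ^ (τ * n / p) : ℝ) : ℂ) * Complex.exp (Complex.I * ((l * ⟪x, ξ₀⟫ : ℝ) : ℂ)) *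
          g ((l ^ τ : ℝ) • (x - x₀))) * (starRingEnd ℂ) (v x)) := by
    have iGv := pairing_integrable (τ := τ) hpq' g_mem (Lp.memLp v) x₀ ξ₀ hl0
    rw [← integral_add i1 iGv]
    refine integral_congr_ae (Filter.Eventually.of_forall fun x => ?_)
    simp only [Pi.sub_apply]
    ring
  have splitB : (∫ x : En n,
        (((l ^ (τ * n / p) : ℝ) : ℂ) * Complex.exp (Complex.I * ((l * ⟪x, ξ₀⟫ : ℝ) : ℂ)) *
          g ((l ^ τ : ℝ) • (x - x₀))) * (starRingEnd ℂ) (v x))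
      = (∫ x : En n,
        (((l ^ (τ * n / p) : ℝ) : ℂ) * Complex.exp (Complex.I * ((l * ⟪x, ξ₀⟫ : ℝ) : ℂ)) *
          g ((l ^ τ : ℝ) • (x - x₀))) * (starRingEnd ℂ) (((v : En n → ℂ) - h) x))
      + (∫ x : En n,
        (((l ^ (τ * n / p) : ℝ) : ℂ) * Complex.exp (Complex.I * ((l * ⟪x, ξ₀⟫ : ℝ) : ℂ)) *
          g ((l ^ τ : ℝ) • (x - x₀))) * (starRingEnd ℂ) (h x)) := by
    rw [← integral_add i2 i3]
    refine integral_congr_ae (Filter.Eventually.of_forall fun x => ?_)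
    simp only [Pi.sub_apply, map_sub]
    ring
  rw [dist_zero_right, splitA, splitB]
  -- bound the three pieces
  have B1 : ‖∫ x : En n,
        (((l ^ (τ * n / p) : ℝ) : ℂ) * Complex.exp (Complex.I * ((l * ⟪x, ξ₀⟫ : ℝ) : ℂ)) *
          ((u : En n → ℂ) - g) ((l ^ τ : ℝ) • (x - x₀))) * (starRingEnd ℂ) (v x)‖ < ε / 3 := by
    refine lt_of_le_of_lt
      ((pairing_bound (τ := τ) hpq' ((Lp.memLp u).sub g_mem) (Lp.memLp v) x₀ ξ₀ hl0).trans
        (mul_le_mul_of_nonneg_right hNp1 hNqv0)) ?_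
    have h1 : η₁ * Nqv < η₁ * (Nqv + 1) := mul_lt_mul_of_pos_left (lt_add_one _) hη₁
    have h2 : η₁ * (Nqv + 1) = ε / 3 := by
      rw [hη₁def]; field_simp
    linarith
  have B2 : ‖∫ x : En n,
        (((l ^ (τ * n / p) : ℝ) : ℂ) * Complex.exp (Complex.I * ((l * ⟪x, ξ₀⟫ : ℝ) : ℂ)) *
          g ((l ^ τ : ℝ) • (x - x₀))) * (starRingEnd ℂ) (((v : En n → ℂ) - h) x)‖ < ε / 3 := by
    refine lt_of_le_of_lt
      ((pairing_bound (τ := τ) hpq' g_mem ((Lp.memLp v).sub h_mem) x₀ ξ₀ hl0).trans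
        (mul_le_mul_of_nonneg_left hNq2 hNpg0)) ?_
    have h1 : Npg * η₂ < (Npg + 1) * η₂ := mul_lt_mul_of_pos_right (lt_add_one _) hη₂
    have h2 : (Npg + 1) * η₂ = ε / 3 := by
      rw [hη₂def]; field_simp
    linarith
  have B3 : ‖∫ x : En n,
        (((l ^ (τ * n / p) : ℝ) : ℂ) * Complex.exp (Complex.I * ((l * ⟪x, ξ₀⟫ : ℝ) : ℂ)) *
          g ((l ^ τ : ℝ) • (x - x₀))) * (starRingEnd ℂ) (h x)‖ < ε / 3 := by
    refine lt_of_le_of_lt (hD l hl0) ?_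
    have h1 : l ^ (τ * (n : ℝ) / p) * (((l ^ τ : ℝ) ^ n : ℝ))⁻¹ = l ^ (-e) := by
      rw [← Real.rpow_natCast (l ^ τ) n, ← Real.rpow_mul hl0.le, ← Real.rpow_neg hl0.le,
        ← Real.rpow_add hl0]
      congr 1
      rw [he_def]; ring
    rw [h1]
    exact hl3
  refine lt_of_le_of_lt (norm_add_le _ _) ?_
  refine lt_of_le_of_lt (add_le_add_right (norm_add_le _ _) _) ?_
  linarith

/-- the pairing `(R_{λ,τ}(x₀,ξ₀)u, v)` tends to `0` as `λ → ∞`. -/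
theorem Rop_pairing_tendsto_zero (n : ℕ) (hn : 1 ≤ n) (τ : ℝ) (hτ : 0 < τ)
    (x₀ ξ₀ : En n) (p q : ℝ) (hp : 1 < p) (hq : 1 < q) (hpq : 1 / p + 1 / q = 1)
    (u : Lp ℂ (ENNReal.ofReal p) (volume : Measure (En n)))
    (v : Lp ℂ (ENNReal.ofReal q) (volume : Measure (En n))) :
    Tendsto (fun l : ℝ => ∫ (x : En n),
        (((l ^ (τ * n / p) : ℝ) : ℂ) * Complex.exp (Complex.I * ((l * ⟪x, ξ₀⟫ : ℝ) : ℂ)) *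
          u ((l ^ τ : ℝ) • (x - x₀))) * (starRingEnd ℂ) (v x))
      atTop (nhds 0) := by
  exact Rop_pairing_tendsto_zero' n hn τ hτ x₀ ξ₀ p q hp hq hpq u v
end

section
/- Let σ ∈ S^0_{ρ,Λ}, and for multi-indices α, β let p_{α,β}(σ) be a constant such that |(∂_x^α ∂_ξ^β σ)(x,ξ)| ≤ p_{α,β}(σ) Λ(ξ)^{−ρ|β|} for all x, ξ ∈ ℝⁿ. Suppose λ ≥ 1, 0 ≤ τ ≤ ρμ₀/(1 + ρμ₀) and ξ₀ ≠ 0, and set σ_{λ,τ}(x,η) = σ(x₀ + λ^{−τ}x, λξ₀ + λ^τ η) for a fixed x₀ ∈ ℝⁿ. Then for all multi-indices α and β there exists a constant C_β > 0, depending only on β, n, ρ, μ₀ and Λ (but not on λ, τ, x₀, ξ₀ or σ), such that |(∂_x^α ∂_η^β σ_{λ,τ})(x,η)| ≤ C_β p_{α,β}(σ) Λ(η)^{ρ|β|} |ξ₀|^{−ρμ₀|β|} λ^{−τ|α|} λ^{−(ρμ₀−(1+ρμ₀)τ)|β|} for all x, η ∈ ℝⁿ. -/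
open MeasureTheory Real Filter
open scoped RealInnerProductSpace BigOperators ENNReal

noncomputable section

section Aux
variable {W : Type*} [NormedAddCommGroup W] [NormedSpace ℝ W]

/-- Directional derivative. -/
def pda (v : W) (G : W → ℂ) : W → ℂ := fun w => fderiv ℝ G w v

lemma pda_contDiff {G : W → ℂ} (hG : ContDiff ℝ (⊤:ℕ∞) G) (v : W) :
    ContDiff ℝ (⊤:ℕ∞) (pda v G) :=
  (hG.fderiv_right (m := (⊤:ℕ∞)) (by exact_mod_cast le_top)).clm_apply contDiff_const

lemma pda_iter_contDiff {G : W → ℂ} (hG : ContDiff ℝ (⊤:ℕ∞) G) (v : W) (k : ℕ) :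
    ContDiff ℝ (⊤:ℕ∞) ((pda v)^[k] G) := by
  induction k with
  | zero => exact hG
  | succ k ih => rw [Function.iterate_succ_apply']; exact pda_contDiff ih v

variable {n : ℕ}

def folda (A : En n →L[ℝ] W) (β : Fin n → ℕ) (L : List (Fin n)) (G : W → ℂ) : W → ℂ :=
  L.foldr (fun i g => (pda (A (EuclideanSpace.single i 1)))^[β i] g) G

def mpda (A : En n →L[ℝ] W) (β : Fin n → ℕ) (G : W → ℂ) : W → ℂ :=
  folda A β (List.finRange n) G

lemma folda_contDiff (A : En n →L[ℝ] W) (β : Fin n → ℕ) (L : List (Fin n))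
    {G : W → ℂ} (hG : ContDiff ℝ (⊤:ℕ∞) G) : ContDiff ℝ (⊤:ℕ∞) (folda A β L G) := by
  induction L with
  | nil => exact hG
  | cons i L ih => exact pda_iter_contDiff ih _ _

lemma mpda_contDiff (A : En n →L[ℝ] W) (β : Fin n → ℕ)
    {G : W → ℂ} (hG : ContDiff ℝ (⊤:ℕ∞) G) : ContDiff ℝ (⊤:ℕ∞) (mpda A β G) :=
  folda_contDiff A β _ hG

lemma pd_comp_affine {G : W → ℂ} (hG : ContDiff ℝ (⊤:ℕ∞) G)
    (A : En n →L[ℝ] W) (b : W) (i : Fin n) :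
    pd i (fun y => G (b + A y)) = fun x => pda (A (EuclideanSpace.single i 1)) G (b + A x) := by
  funext x
  have h1 : HasFDerivAt (fun y : En n => b + A y) (A : En n →L[ℝ] W) x :=
    (A.hasFDerivAt).const_add b
  have h2 : HasFDerivAt G (fderiv ℝ G (b + A x)) (b + A x) :=
    (hG.differentiable (by simp) (b + A x)).hasFDerivAt
  have h3 : HasFDerivAt (fun y => G (b + A y)) ((fderiv ℝ G (b + A x)).comp A) x :=
    h2.comp x h1
  simp [pd, h3.fderiv, pda]

lemma pd_iter_comp_affine (A : En n →L[ℝ] W) (b : W) (i : Fin n) (k : ℕ) :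
    ∀ (G : W → ℂ), ContDiff ℝ (⊤:ℕ∞) G →
    (pd i)^[k] (fun y => G (b + A y))
      = fun x => (pda (A (EuclideanSpace.single i 1)))^[k] G (b + A x) := by
  induction k with
  | zero => intro G hG; simp
  | succ k ih =>
    intro G hG
    rw [Function.iterate_succ_apply, pd_comp_affine hG A b i,
      ih _ (pda_contDiff hG _), Function.iterate_succ_apply]

lemma folda_comp_affine (A : En n →L[ℝ] W) (b : W) (β : Fin n → ℕ) (L : List (Fin n)) :
    ∀ (G : W → ℂ), ContDiff ℝ (⊤:ℕ∞) G →
    L.foldr (fun i g => (pd i)^[β i] g) (fun y => G (b + A y))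
      = fun x => folda A β L G (b + A x) := by
  induction L with
  | nil => intro G hG; rfl
  | cons i L ih =>
    intro G hG
    show (pd i)^[β i] (L.foldr _ _) = _
    rw [ih G hG, pd_iter_comp_affine A b i (β i) _ (folda_contDiff A β L hG)]
    rfl

lemma mpd_comp_affine (A : En n →L[ℝ] W) (b : W) (β : Fin n → ℕ)
    {G : W → ℂ} (hG : ContDiff ℝ (⊤:ℕ∞) G) :
    mpd β (fun y => G (b + A y)) = fun x => mpda A β G (b + A x) :=
  folda_comp_affine A b β _ G hG

end Aux

section Aux2
variable {W : Type*} [NormedAddCommGroup W] [NormedSpace ℝ W] {n : ℕ}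

lemma pda_smul_vec (r : ℝ) (v : W) (G : W → ℂ) :
    pda (r • v) G = fun w => r • pda v G w := by
  funext w; simp [pda, (fderiv ℝ G w).map_smul]

lemma pda_smul_fun (r : ℝ) (v : W) {G : W → ℂ} (hG : ContDiff ℝ (⊤:ℕ∞) G) :
    pda v (fun w => r • G w) = fun w => r • pda v G w := by
  funext w
  have h := fderiv_fun_const_smul (𝕜 := ℝ)
    ((hG.differentiable (by simp)) w) r
  show fderiv ℝ (fun w => r • G w) w v = r • fderiv ℝ G w v
  rw [h]; simp

lemma pda_iter_smul_fun (r : ℝ) (v : W) (k : ℕ) :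
    ∀ (G : W → ℂ), ContDiff ℝ (⊤:ℕ∞) G →
    (pda v)^[k] (fun w => r • G w) = fun w => r • (pda v)^[k] G w := by
  induction k with
  | zero => intro G hG; rfl
  | succ k ih =>
    intro G hG
    rw [Function.iterate_succ_apply, pda_smul_fun r v hG, ih _ (pda_contDiff hG v),
      Function.iterate_succ_apply]

lemma pda_iter_smul_vec (r : ℝ) (v : W) (k : ℕ) :
    ∀ (G : W → ℂ), ContDiff ℝ (⊤:ℕ∞) G →
    (pda (r • v))^[k] G = fun w => (r ^ k : ℝ) • (pda v)^[k] G w := by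
  induction k with
  | zero => intro G hG; simp
  | succ k ih =>
    intro G hG
    rw [Function.iterate_succ_apply, pda_smul_vec r v G,
      ih _ ((pda_contDiff hG v).const_smul r),
      pda_iter_smul_fun r v k _ (pda_contDiff hG v), Function.iterate_succ_apply]
    funext w
    simp only [smul_smul, ← pow_succ]

lemma folda_smul_fun (A : En n →L[ℝ] W) (β : Fin n → ℕ) (r : ℝ) (L : List (Fin n)) :
    ∀ (G : W → ℂ), ContDiff ℝ (⊤:ℕ∞) G →
    folda A β L (fun w => r • G w) = fun w => r • folda A β L G w := by
  induction L with
  | nil => intro G hG; rfl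
  | cons i L ih =>
    intro G hG
    show (pda _)^[β i] (folda A β L _) = _
    rw [ih G hG, pda_iter_smul_fun r _ (β i) _ (folda_contDiff A β L hG)]
    rfl

lemma folda_smul_map (A : En n →L[ℝ] W) (β : Fin n → ℕ) (r : ℝ) (L : List (Fin n)) :
    ∀ (G : W → ℂ), ContDiff ℝ (⊤:ℕ∞) G →
    folda (r • A) β L G = fun w => (r ^ ((L.map β).sum) : ℝ) • folda A β L G w := by
  induction L with
  | nil => intro G hG; funext w; simp [folda]
  | cons i L ih =>
    intro G hG
    show (pda ((r • A) _))^[β i] (folda (r • A) β L G) = _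
    rw [ih G hG, ContinuousLinearMap.smul_apply,
      pda_iter_smul_vec r _ (β i) _
        ((folda_contDiff A β L hG).const_smul (r ^ (L.map β).sum)),
      pda_iter_smul_fun (r ^ (L.map β).sum) _ (β i) _ (folda_contDiff A β L hG)]
    funext w
    show (r ^ β i : ℝ) • ((r ^ (L.map β).sum : ℝ) • _) = _
    rw [smul_smul, ← pow_add, List.map_cons, List.sum_cons]
    rfl

lemma mpda_smul_map (A : En n →L[ℝ] W) (β : Fin n → ℕ) (r : ℝ)
    {G : W → ℂ} (hG : ContDiff ℝ (⊤:ℕ∞) G) :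
    mpda (r • A) β G = fun w => (r ^ (∑ i, β i) : ℝ) • mpda A β G w := by
  rw [mpda, folda_smul_map A β r _ G hG, Fin.sum_univ_def]
  rfl

lemma mpda_smul_fun (A : En n →L[ℝ] W) (β : Fin n → ℕ) (r : ℝ)
    {G : W → ℂ} (hG : ContDiff ℝ (⊤:ℕ∞) G) :
    mpda A β (fun w => r • G w) = fun w => r • mpda A β G w :=
  folda_smul_fun A β r _ G hG

end Aux2

section Main
variable {n : ℕ}

lemma mixpd_eq_mpda {σ : En n → En n → ℂ}
    (hσ : ContDiff ℝ (⊤:ℕ∞) (fun q : En n × En n => σ q.1 q.2))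
    (α β : Fin n → ℕ) (X Ξ : En n) :
    mixpd α β σ X Ξ
      = mpda (ContinuousLinearMap.inl ℝ (En n) (En n)) α
          (mpda (ContinuousLinearMap.inr ℝ (En n) (En n)) β
            (fun q : En n × En n => σ q.1 q.2)) (X, Ξ) := by
  set F : En n × En n → ℂ := fun q => σ q.1 q.2 with hFdef
  have hHs : ContDiff ℝ (⊤:ℕ∞) (mpda (ContinuousLinearMap.inr ℝ (En n) (En n)) β F) :=
    mpda_contDiff _ β hσ
  have h1 : ∀ X : En n, mpd β (σ X)
      = fun Ξ => mpda (ContinuousLinearMap.inr ℝ (En n) (En n)) β F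
          ((X, (0:En n)) + (ContinuousLinearMap.inr ℝ (En n) (En n)) Ξ) := by
    intro X
    have e1 : σ X = fun z => F ((X, (0:En n)) + (ContinuousLinearMap.inr ℝ (En n) (En n)) z) := by
      funext z; simp [hFdef]
    rw [e1, mpd_comp_affine _ _ β hσ]
  have h2 : (fun y => mpd β (σ y) Ξ)
      = fun y => mpda (ContinuousLinearMap.inr ℝ (En n) (En n)) β F
          (((0:En n), Ξ) + (ContinuousLinearMap.inl ℝ (En n) (En n)) y) := by
    funext y
    rw [h1 y]
    congr 1
    simp
  rw [mixpd, h2, mpd_comp_affine _ _ α hHs]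
  congr 1
  simp

lemma mixpd_rescale {σ : En n → En n → ℂ}
    (hσ : ContDiff ℝ (⊤:ℕ∞) (fun q : En n × En n => σ q.1 q.2))
    (c e : ℝ) (x₀ ξ' : En n) (α β : Fin n → ℕ) (x η : En n) :
    mixpd α β (fun y η' => σ (x₀ + c • y) (ξ' + e • η')) x η
      = (c ^ (∑ i, α i) * e ^ (∑ i, β i) : ℝ) • mixpd α β σ (x₀ + c • x) (ξ' + e • η) := by
  set F : En n × En n → ℂ := fun q => σ q.1 q.2 with hFdef
  have hHs : ContDiff ℝ (⊤:ℕ∞) (mpda (ContinuousLinearMap.inr ℝ (En n) (En n)) β F) :=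
    mpda_contDiff _ β hσ
  have h1 : ∀ y : En n, mpd β (fun η' => σ (x₀ + c • y) (ξ' + e • η'))
      = fun η => (e ^ (∑ i, β i) : ℝ) •
          mpda (ContinuousLinearMap.inr ℝ (En n) (En n)) β F (x₀ + c • y, ξ' + e • η) := by
    intro y
    have e1 : (fun η' => σ (x₀ + c • y) (ξ' + e • η'))
        = fun z => F ((x₀ + c • y, ξ') + (e • ContinuousLinearMap.inr ℝ (En n) (En n)) z) := by
      funext z; simp [hFdef]
    rw [e1, mpd_comp_affine _ _ β hσ, mpda_smul_map _ β e hσ]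
    funext η'
    show (e ^ (∑ i, β i) : ℝ) • mpda _ β F _ = (e ^ (∑ i, β i) : ℝ) • mpda _ β F _
    congr 1
    simp
  have h2 : (fun y => mpd β ((fun y η' => σ (x₀ + c • y) (ξ' + e • η')) y) η)
      = fun y => (fun w => (e ^ (∑ i, β i) : ℝ) •
          mpda (ContinuousLinearMap.inr ℝ (En n) (En n)) β F w)
          ((x₀, ξ' + e • η) + (c • ContinuousLinearMap.inl ℝ (En n) (En n)) y) := by
    funext y
    rw [h1 y]
    show (e ^ (∑ i, β i) : ℝ) • mpda _ β F _ = (e ^ (∑ i, β i) : ℝ) • mpda _ β F _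
    congr 1
    simp
  rw [mixpd, h2, mpd_comp_affine _ _ α (hHs.const_smul _),
    mpda_smul_fun _ α _ hHs, mpda_smul_map _ α c hHs, mixpd_eq_mpda hσ]
  show (e ^ (∑ i, β i) : ℝ) • ((c ^ (∑ i, α i) : ℝ) •
      mpda (ContinuousLinearMap.inl ℝ (En n) (En n)) α
        (mpda (ContinuousLinearMap.inr ℝ (En n) (En n)) β F) _) = _
  rw [smul_smul, mul_comm]
  congr 2
  simp

end Main

end

/-- derivative estimates for the rescaled symbol `σ_{λ,τ}`, with constants
`C_β` depending only on `β` (and on `n`, `ρ`, `μ₀`, `Λ`), uniform in `σ, λ, τ, x₀, ξ₀, α`. -/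
theorem rescaled_symbol_estimate (n : ℕ) (hn : 1 ≤ n) (Λ : En n → ℝ) (μ₀ μ₁ μ ρ : ℝ)
    (hw : IsWeight n Λ μ₀ μ₁ μ) (hρ : 0 < ρ) (hρμ : ρ ≤ 1 / μ) :
    ∃ C : (Fin n → ℕ) → ℝ, (∀ β, 0 < C β) ∧
      ∀ σ : En n → En n → ℂ, ContDiff ℝ (⊤ : ℕ∞) (fun q : En n × En n => σ q.1 q.2) →
      ∀ pc : (Fin n → ℕ) → (Fin n → ℕ) → ℝ,
      (∀ (α β : Fin n → ℕ) (x ξ : En n),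
        ‖mixpd α β σ x ξ‖ ≤ pc α β * Λ ξ ^ (-(ρ * ∑ i, (β i : ℝ)))) →
      ∀ l τ : ℝ, 1 ≤ l → 0 ≤ τ → τ ≤ ρ * μ₀ / (1 + ρ * μ₀) →
      ∀ x₀ ξ₀ : En n, ξ₀ ≠ 0 →
      ∀ (α β : Fin n → ℕ) (x η : En n),
        ‖mixpd α β
            (fun y η' => σ (x₀ + (l ^ (-τ) : ℝ) • y) (l • ξ₀ + (l ^ τ : ℝ) • η')) x η‖ ≤
          C β * pc α β * Λ η ^ (ρ * ∑ i, (β i : ℝ)) *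
            ‖ξ₀‖ ^ (-(ρ * μ₀ * ∑ i, (β i : ℝ))) *
            l ^ (-(τ * ∑ i, (α i : ℝ))) *
            l ^ (-((ρ * μ₀ - (1 + ρ * μ₀) * τ) * ∑ i, (β i : ℝ))) := by
  obtain ⟨C₀, C₁, hC₀, hC₀₁, hg⟩ := hw.growth
  have hΛpos := hw.pos
  refine ⟨fun β => (C₀ ^ (-(2*ρ))) ^ (∑ i, (β i : ℝ)),
    fun β => Real.rpow_pos_of_pos (Real.rpow_pos_of_pos hC₀ _) _, ?_⟩
  intro σ hσ pc hpc l τ hl hτ0 hτ1 x₀ ξ₀ hξ₀ α β x η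
  have hl0 : (0:ℝ) < l := lt_of_lt_of_le one_pos hl
  have hξn : (0:ℝ) < ‖ξ₀‖ := norm_pos_iff.mpr hξ₀
  set s : ℝ := ∑ i, (β i : ℝ) with hs
  set t : ℝ := ∑ i, (α i : ℝ) with ht
  have hs0 : 0 ≤ s := Finset.sum_nonneg fun i _ => Nat.cast_nonneg _
  have hpc0 : 0 ≤ pc α β := by
    have h1 := (norm_nonneg (mixpd α β σ x x)).trans (hpc α β x x)
    have h2 : (0:ℝ) < Λ x ^ (-(ρ * ∑ i, (β i:ℝ))) := Real.rpow_pos_of_pos (hΛpos x) _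
    nlinarith [h1, h2]
  rw [mixpd_rescale hσ (l ^ (-τ)) (l ^ τ) x₀ (l • ξ₀) α β x η, norm_smul, Real.norm_eq_abs,
    abs_of_pos (by positivity : (0:ℝ) < (l ^ (-τ)) ^ (∑ i, α i) * (l ^ τ) ^ (∑ i, β i))]
  set ζ : En n := l • ξ₀ + (l ^ τ : ℝ) • η with hζ
  set X : En n := x₀ + (l ^ (-τ) : ℝ) • x with hX
  have hca : ((l ^ (-τ):ℝ)) ^ (∑ i, α i) = l ^ (-(τ * t)) := by
    rw [← Real.rpow_natCast (l ^ (-τ)) (∑ i, α i), ← Real.rpow_mul hl0.le]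
    congr 1
    push_cast
    rw [ht]; try ring
  have heb : ((l ^ τ:ℝ)) ^ (∑ i, β i) = l ^ (τ * s) := by
    rw [← Real.rpow_natCast (l ^ τ) (∑ i, β i), ← Real.rpow_mul hl0.le]
    congr 1
    push_cast
    rw [hs]; try ring
  rw [hca, heb]
  have hu : (0:ℝ) < 1 + ‖ζ‖ := by positivity
  have hv : (0:ℝ) < 1 + ‖η‖ := by positivity
  have hlτpos : (0:ℝ) < l ^ τ := Real.rpow_pos_of_pos hl0 τ
  have hlτ1 : (1:ℝ) ≤ l ^ τ := Real.one_le_rpow hl hτ0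
  have key : l * ‖ξ₀‖ ≤ (1 + ‖ζ‖) * (l ^ τ * (1 + ‖η‖)) := by
    have h1 : l * ‖ξ₀‖ ≤ ‖ζ‖ + l ^ τ * ‖η‖ := by
      have e2 : l • ξ₀ = ζ - (l ^ τ : ℝ) • η := by rw [hζ]; abel
      calc l * ‖ξ₀‖ = ‖l • ξ₀‖ := by
            rw [norm_smul, Real.norm_eq_abs, abs_of_pos hl0]
        _ ≤ ‖ζ‖ + ‖(l ^ τ : ℝ) • η‖ := by rw [e2]; exact norm_sub_le _ _
        _ = ‖ζ‖ + l ^ τ * ‖η‖ := by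
            rw [norm_smul, Real.norm_eq_abs, abs_of_pos hlτpos]
    nlinarith [norm_nonneg ζ, norm_nonneg η,
      mul_nonneg (sub_nonneg.mpr hlτ1) (norm_nonneg ζ),
      mul_nonneg (mul_nonneg hlτpos.le (norm_nonneg ζ)) (norm_nonneg η)]
  have inv_bound : (1 + ‖ζ‖)⁻¹ ≤ l ^ (τ - 1) * (‖ξ₀‖⁻¹ * (1 + ‖η‖)) := by
    have e3 : l ^ (τ - 1) * (‖ξ₀‖⁻¹ * (1 + ‖η‖)) = (l ^ τ * (1 + ‖η‖)) / (l * ‖ξ₀‖) := by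
      rw [Real.rpow_sub hl0, Real.rpow_one]
      field_simp
      try ring
    rw [e3, inv_eq_one_div, div_le_div_iff₀ hu (by positivity)]
    nlinarith [key]
  have hB : Λ ζ ^ (-ρ) ≤ C₀ ^ (-(2*ρ)) * Λ η ^ ρ * ‖ξ₀‖ ^ (-(ρ*μ₀)) * l ^ ((τ-1)*(ρ*μ₀)) := by
    have b2 : (C₀ * (1 + ‖ζ‖) ^ μ₀) ^ (-ρ) = C₀ ^ (-ρ) * ((1 + ‖ζ‖)⁻¹) ^ (μ₀ * ρ) := by
      rw [Real.mul_rpow hC₀.le (by positivity), ← Real.rpow_mul hu.le, mul_neg,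
        Real.rpow_neg hu.le, ← Real.inv_rpow hu.le]
    have b4 : (l ^ (τ-1) * (‖ξ₀‖⁻¹ * (1 + ‖η‖))) ^ (μ₀ * ρ)
        = l ^ ((τ-1)*(μ₀*ρ)) * (‖ξ₀‖ ^ (-(μ₀*ρ)) * ((1+‖η‖) ^ μ₀) ^ ρ) := by
      rw [Real.mul_rpow (by positivity) (by positivity),
        Real.mul_rpow (by positivity) (by positivity),
        ← Real.rpow_mul hl0.le, Real.inv_rpow hξn.le, ← Real.rpow_neg hξn.le,
        ← Real.rpow_mul hv.le, Real.rpow_mul hv.le]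
    have b5 : ((1+‖η‖) ^ μ₀) ^ ρ ≤ (Λ η / C₀) ^ ρ := by
      refine Real.rpow_le_rpow (by positivity) ?_ hρ.le
      rw [le_div_iff₀ hC₀]
      nlinarith [(hg η).1]
    calc Λ ζ ^ (-ρ) ≤ (C₀ * (1 + ‖ζ‖) ^ μ₀) ^ (-ρ) :=
          Real.rpow_le_rpow_of_nonpos (by positivity) (hg ζ).1 (neg_nonpos.mpr hρ.le)
      _ = C₀ ^ (-ρ) * ((1 + ‖ζ‖)⁻¹) ^ (μ₀ * ρ) := b2
      _ ≤ C₀ ^ (-ρ) * (l ^ (τ-1) * (‖ξ₀‖⁻¹ * (1 + ‖η‖))) ^ (μ₀ * ρ) := by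
          exact mul_le_mul_of_nonneg_left
            (Real.rpow_le_rpow (by positivity) inv_bound
              (mul_nonneg hw.hμ₀.le hρ.le)) (by positivity)
      _ = C₀ ^ (-ρ) * (l ^ ((τ-1)*(μ₀*ρ)) * (‖ξ₀‖ ^ (-(μ₀*ρ)) * ((1+‖η‖) ^ μ₀) ^ ρ)) := by
          rw [b4]
      _ ≤ C₀ ^ (-ρ) * (l ^ ((τ-1)*(μ₀*ρ)) * (‖ξ₀‖ ^ (-(μ₀*ρ)) * ((Λ η / C₀) ^ ρ))) := by
          gcongr
      _ = C₀ ^ (-(2*ρ)) * Λ η ^ ρ * ‖ξ₀‖ ^ (-(ρ*μ₀)) * l ^ ((τ-1)*(ρ*μ₀)) := by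
          rw [Real.div_rpow (hΛpos η).le hC₀.le, Real.rpow_neg hC₀.le,
            show (τ-1)*(μ₀*ρ) = (τ-1)*(ρ*μ₀) by ring,
            show -(μ₀*ρ) = -(ρ*μ₀) by ring,
            show C₀ ^ (-(2*ρ)) = C₀ ^ (-ρ) * C₀ ^ (-ρ) by
              rw [← Real.rpow_add hC₀]; congr 1; ring,
            Real.rpow_neg hC₀.le, div_eq_mul_inv]
          ring
  have hBs : Λ ζ ^ (-(ρ*s)) ≤ (C₀ ^ (-(2*ρ))) ^ s * Λ η ^ (ρ*s) * ‖ξ₀‖ ^ (-(ρ*μ₀*s)) *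
      l ^ ((τ-1)*(ρ*μ₀)*s) := by
    calc Λ ζ ^ (-(ρ*s)) = (Λ ζ ^ (-ρ)) ^ s := by
          rw [show -(ρ*s) = (-ρ)*s by ring, Real.rpow_mul (hΛpos ζ).le]
      _ ≤ (C₀ ^ (-(2*ρ)) * Λ η ^ ρ * ‖ξ₀‖ ^ (-(ρ*μ₀)) * l ^ ((τ-1)*(ρ*μ₀))) ^ s :=
          Real.rpow_le_rpow (Real.rpow_nonneg (hΛpos ζ).le _) hB hs0
      _ = (C₀ ^ (-(2*ρ))) ^ s * Λ η ^ (ρ*s) * ‖ξ₀‖ ^ (-(ρ*μ₀*s)) * l ^ ((τ-1)*(ρ*μ₀)*s) := by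
          rw [Real.mul_rpow
              (mul_nonneg (mul_nonneg (Real.rpow_nonneg hC₀.le _)
                (Real.rpow_nonneg (hΛpos η).le _)) (Real.rpow_nonneg hξn.le _))
              (Real.rpow_nonneg hl0.le _),
            Real.mul_rpow (mul_nonneg (Real.rpow_nonneg hC₀.le _)
                (Real.rpow_nonneg (hΛpos η).le _)) (Real.rpow_nonneg hξn.le _),
            Real.mul_rpow (Real.rpow_nonneg hC₀.le _) (Real.rpow_nonneg (hΛpos η).le _),
            ← Real.rpow_mul (hΛpos η).le, ← Real.rpow_mul hξn.le,
            ← Real.rpow_mul hl0.le,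
            show (-(ρ*μ₀))*s = -(ρ*μ₀*s) by ring]
  calc l ^ (-(τ*t)) * l ^ (τ*s) * ‖mixpd α β σ X ζ‖
      ≤ l ^ (-(τ*t)) * l ^ (τ*s) * (pc α β * Λ ζ ^ (-(ρ*s))) := by
        exact mul_le_mul_of_nonneg_left (hpc α β X ζ) (by positivity)
    _ ≤ l ^ (-(τ*t)) * l ^ (τ*s) * (pc α β * ((C₀ ^ (-(2*ρ))) ^ s * Λ η ^ (ρ*s) *
          ‖ξ₀‖ ^ (-(ρ*μ₀*s)) * l ^ ((τ-1)*(ρ*μ₀)*s))) := by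
        exact mul_le_mul_of_nonneg_left (mul_le_mul_of_nonneg_left hBs hpc0) (by positivity)
    _ = (C₀ ^ (-(2*ρ))) ^ s * pc α β * Λ η ^ (ρ*s) * ‖ξ₀‖ ^ (-(ρ*μ₀*s)) *
          l ^ (-(τ*t)) * l ^ (-((ρ*μ₀-(1+ρ*μ₀)*τ)*s)) := by
        rw [show l ^ (-((ρ*μ₀-(1+ρ*μ₀)*τ)*s)) = l ^ (τ*s) * l ^ ((τ-1)*(ρ*μ₀)*s) by
          rw [← Real.rpow_add hl0]; congr 1; ring]
        ring
end

section
/- Let σ ∈ M^0_{ρ,Λ} and let F : ℂ → ℂ be a C^∞ function (smooth as a function of two real variables). Then F ∘ σ ∈ M^0_{ρ,Λ}; that is, for every γ ∈ {0,1}ⁿ the function ξ^γ(∂_ξ^γ(F ∘ σ))(x,ξ) belongs to S^0_{ρ,Λ}: for all multi-indices α and β there exists C_{α,β} > 0 such that |∂_x^α ∂_ξ^β (ξ^γ ∂_ξ^γ (F ∘ σ))(x,ξ)| ≤ C_{α,β} Λ(ξ)^{−ρ|β|} for all x, ξ ∈ ℝⁿ. -/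
open MeasureTheory Real Filter
open scoped RealInnerProductSpace BigOperators ENNReal

noncomputable section

namespace CompMClassAux

noncomputable def dirD {E : Type*} [NormedAddCommGroup E] [NormedSpace ℝ E]
    (v : E) (f : E → ℂ) : E → ℂ := fun p => fderiv ℝ f p v

noncomputable def dirDs {E : Type*} [NormedAddCommGroup E] [NormedSpace ℝ E]
    (l : List E) (f : E → ℂ) : E → ℂ := l.foldr dirD f

variable {E : Type*} [NormedAddCommGroup E] [NormedSpace ℝ E]

@[simp] lemma dirDs_nil (f : E → ℂ) : dirDs [] f = f := rfl
@[simp] lemma dirDs_cons (v : E) (l : List E) (f : E → ℂ) :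
    dirDs (v :: l) f = dirD v (dirDs l f) := rfl
lemma dirDs_append (l₁ l₂ : List E) (f : E → ℂ) :
    dirDs (l₁ ++ l₂) f = dirDs l₁ (dirDs l₂ f) := List.foldr_append ..

lemma smooth_top_le : ((⊤:ℕ∞) : WithTop ℕ∞) + 1 ≤ ((⊤:ℕ∞) : WithTop ℕ∞) := by
  exact_mod_cast le_rfl

lemma contDiff_dirD {f : E → ℂ} (hf : ContDiff ℝ (⊤:ℕ∞) f) (v : E) :
    ContDiff ℝ (⊤:ℕ∞) (dirD v f) :=
  (hf.fderiv_right smooth_top_le).clm_apply contDiff_const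

lemma contDiff_dirDs {f : E → ℂ} (hf : ContDiff ℝ (⊤:ℕ∞) f) (l : List E) :
    ContDiff ℝ (⊤:ℕ∞) (dirDs l f) := by
  induction l with
  | nil => exact hf
  | cons v l ih => exact contDiff_dirD ih v

lemma dirD_smul_vec (c : ℝ) (v : E) (f : E → ℂ) : dirD (c • v) f = c • dirD v f := by
  funext p; simp [dirD, (fderiv ℝ f p).map_smul]

lemma dirD_const_smul {f : E → ℂ} (hf : Differentiable ℝ f) (c : ℝ) (v : E) :
    dirD v (c • f) = c • dirD v f := by
  funext p
  have : fderiv ℝ (c • f) p = c • fderiv ℝ f p := fderiv_const_smul (hf p) c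
  simp [dirD, this]

lemma dirDs_const_smul {f : E → ℂ} (hf : ContDiff ℝ (⊤:ℕ∞) f) (c : ℝ) (l : List E) :
    dirDs l (c • f) = c • dirDs l f := by
  induction l with
  | nil => rfl
  | cons v l ih =>
    simp only [dirDs_cons, ih]
    exact dirD_const_smul ((contDiff_dirDs hf l).differentiable (by simp)) c v

/-- Clairaut/Schwarz: directional derivatives commute for smooth functions. -/
lemma dirD_comm {f : E → ℂ} (hf : ContDiff ℝ (⊤:ℕ∞) f) (v w : E) :
    dirD v (dirD w f) = dirD w (dirD v f) := by
  funext p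
  have hsymm : IsSymmSndFDerivAt ℝ f p :=
    (hf.contDiffAt).isSymmSndFDerivAt (by simp; exact WithTop.coe_le_coe.mpr le_top)
  have key : ∀ a b : E, dirD a (dirD b f) p = fderiv ℝ (fderiv ℝ f) p a b := by
    intro a b
    have h1 : (dirD b f) = fun q => (ContinuousLinearMap.apply ℝ ℂ b) (fderiv ℝ f q) := rfl
    have hdf : Differentiable ℝ (fderiv ℝ f) :=
      (hf.fderiv_right smooth_top_le).differentiable (by simp)
    have h2 : fderiv ℝ (dirD b f) p =
        (ContinuousLinearMap.apply ℝ ℂ b).comp (fderiv ℝ (fderiv ℝ f) p) := by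
      rw [h1]
      exact (((ContinuousLinearMap.apply ℝ ℂ b).hasFDerivAt).comp p (hdf p).hasFDerivAt).fderiv
    simp [dirD, h2]
  rw [key, key, hsymm.eq]

lemma dirDs_perm {f : E → ℂ} (hf : ContDiff ℝ (⊤:ℕ∞) f) {l₁ l₂ : List E}
    (hp : l₁.Perm l₂) : dirDs l₁ f = dirDs l₂ f := by
  induction hp with
  | nil => rfl
  | cons v _ ih => simp [dirDs_cons, ih]
  | swap v w l => simp [dirDs_cons, dirD_comm (contDiff_dirDs hf l) v w]
  | trans _ _ ih1 ih2 => rw [ih1, ih2]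

-- PART 2
lemma iteratedFDeriv_dirD {f : E → ℂ} (hf : ContDiff ℝ (⊤:ℕ∞) f) (v : E) (N : ℕ) (p : E)
    (m : Fin N → E) :
    iteratedFDeriv ℝ N (dirD v f) p m = iteratedFDeriv ℝ (N+1) f p (Fin.snoc m v) := by
  have hdf : ContDiff ℝ (⊤:ℕ∞) (fderiv ℝ f) := hf.fderiv_right smooth_top_le
  have h1 : iteratedFDeriv ℝ N (dirD v f) p =
      (ContinuousLinearMap.apply ℝ ℂ v).compContinuousMultilinearMap
        (iteratedFDeriv ℝ N (fderiv ℝ f) p) :=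
    (ContinuousLinearMap.apply ℝ ℂ v).iteratedFDeriv_comp_left (hdf.contDiffAt (x := p)) (by exact_mod_cast le_top)
  have h2 := iteratedFDeriv_succ_apply_right (𝕜 := ℝ) (f := f) (x := p) (n := N)
    (Fin.snoc m v)
  rw [h2, Fin.init_snoc, Fin.snoc_last, h1]
  rfl

lemma iterF_index_congr {N M : ℕ} (h : N = M) (f : E → ℂ) (p : E) (m : Fin M → E) :
    iteratedFDeriv ℝ M f p m = iteratedFDeriv ℝ N f p (fun j => m (Fin.cast h j)) := by
  subst h; rfl

lemma dirDs_eq_iterF {f : E → ℂ} (hf : ContDiff ℝ (⊤:ℕ∞) f) (l : List E) {N : ℕ}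
    (hN : l.length = N) (p : E) :
    dirDs l f p = iteratedFDeriv ℝ N f p (fun j => l.get (Fin.cast hN.symm j)) := by
  induction l using List.reverseRecOn generalizing N f with
  | nil =>
    subst hN; simp [iteratedFDeriv_zero_apply]
  | append_singleton l v ih =>
    have hlen : l.length + 1 = N := by simpa using hN
    rw [iterF_index_congr hlen f p]
    have h1 : dirDs (l ++ [v]) f p = dirDs l (dirD v f) p := by
      rw [dirDs_append]; rfl
    rw [h1, ih (contDiff_dirD hf v) rfl,
      iteratedFDeriv_dirD hf v l.length p]
    congr 1
    funext j
    refine Fin.lastCases ?_ ?_ j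
    · simp [Fin.snoc_last]
    · intro i
      simp only [Fin.snoc_castSucc, Fin.cast_mk, List.get_eq_getElem, Fin.coe_castSucc,
        Fin.coe_cast]
      exact (List.getElem_append_left _).symm

lemma norm_dirDs_le {f : E → ℂ} (hf : ContDiff ℝ (⊤:ℕ∞) f) (l : List E)
    (hl : ∀ v ∈ l, ‖v‖ ≤ 1) (p : E) :
    ‖dirDs l f p‖ ≤ ‖iteratedFDeriv ℝ l.length f p‖ := by
  rw [dirDs_eq_iterF hf l rfl p]
  calc ‖iteratedFDeriv ℝ l.length f p (fun j => l.get (Fin.cast rfl j))‖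
      ≤ ‖iteratedFDeriv ℝ l.length f p‖ * ∏ j, ‖l.get (Fin.cast rfl j)‖ :=
        (iteratedFDeriv ℝ l.length f p).le_opNorm _
    _ ≤ ‖iteratedFDeriv ℝ l.length f p‖ * 1 :=
        mul_le_mul_of_nonneg_left
          (Finset.prod_le_one (fun j _ => norm_nonneg _) (fun j _ => hl _ (l.get_mem _)))
          (norm_nonneg _)
    _ = _ := mul_one _


variable {n : ℕ}
variable {n : ℕ}

/-- coordinate bound in Euclidean space -/
lemma abs_coord_le (x : En n) (i : Fin n) : |x i| ≤ ‖x‖ := by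
  rw [EuclideanSpace.norm_eq]
  rw [← Real.sqrt_sq_eq_abs]
  apply Real.sqrt_le_sqrt
  simpa [Real.norm_eq_abs, sq_abs] using
    Finset.single_le_sum (f := fun j => ‖x j‖^2) (fun j _ => sq_nonneg _) (Finset.mem_univ i)

noncomputable def bv (n : ℕ) : (Fin n ⊕ Fin n) → En n × En n :=
  Sum.elim (fun i => (EuclideanSpace.single i 1, 0)) (fun i => (0, EuclideanSpace.single i 1))

lemma norm_bv (k : Fin n ⊕ Fin n) : ‖bv n k‖ = 1 := by
  cases k <;> simp [bv, Prod.norm_def, EuclideanSpace.norm_single]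

noncomputable def coef (v : En n × En n) : (Fin n ⊕ Fin n) → ℝ :=
  Sum.elim (fun i => v.1 i) (fun i => v.2 i)

lemma abs_coef_le (v : En n × En n) (k : Fin n ⊕ Fin n) : |coef v k| ≤ ‖v‖ := by
  cases k with
  | inl i => exact le_trans (abs_coord_le v.1 i) (norm_fst_le v)
  | inr i => exact le_trans (abs_coord_le v.2 i) (norm_snd_le v)

lemma euclid_expansion (x : En n) : ∑ i : Fin n, x i • EuclideanSpace.single i (1:ℝ) = x := by
  ext j
  simp [EuclideanSpace.single_apply, PiLp.smul_apply, Pi.single_apply, mul_ite, Finset.sum_ite_eq]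

lemma vec_expansion (v : En n × En n) : ∑ k : Fin n ⊕ Fin n, coef v k • bv n k = v := by
  rw [Fintype.sum_sum_type]
  have h1 : ∀ i : Fin n, coef v (Sum.inl i) • bv n (Sum.inl i)
      = ((v.1 i • EuclideanSpace.single i (1:ℝ) : En n), (0 : En n)) := by
    intro i; simp [coef, bv, Prod.smul_mk]
  have h2 : ∀ i : Fin n, coef v (Sum.inr i) • bv n (Sum.inr i)
      = ((0 : En n), (v.2 i • EuclideanSpace.single i (1:ℝ) : En n)) := by
    intro i; simp [coef, bv, Prod.smul_mk]
  simp only [h1, h2]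
  apply Prod.ext
  · rw [Prod.fst_add, Prod.fst_sum, Prod.fst_sum]
    simp [euclid_expansion]
  · rw [Prod.snd_add, Prod.snd_sum, Prod.snd_sum]
    simp [euclid_expansion]

lemma norm_iterF_le_sum (f : En n × En n → ℂ) (p : En n × En n) (N : ℕ) :
    ‖iteratedFDeriv ℝ N f p‖ ≤
      ∑ d : Fin N → (Fin n ⊕ Fin n), ‖iteratedFDeriv ℝ N f p (fun j => bv n (d j))‖ := by
  set A := iteratedFDeriv ℝ N f p
  apply A.opNorm_le_bound
  · exact Finset.sum_nonneg fun d _ => norm_nonneg _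
  intro m
  have hexp0 : A.toMultilinearMap (fun j => ∑ k : Fin n ⊕ Fin n, coef (m j) k • bv n k)
      = ∑ d : Fin N → (Fin n ⊕ Fin n),
        (∏ j, coef (m j) (d j)) • A (fun j => bv n (d j)) := by
    rw [A.toMultilinearMap.map_sum (g := fun j k => coef (m j) k • bv n k)]
    apply Finset.sum_congr rfl
    intro d _
    exact A.toMultilinearMap.map_smul_univ (fun j => coef (m j) (d j)) (fun j => bv n (d j))
  have hexp : A m = ∑ d : Fin N → (Fin n ⊕ Fin n),
      (∏ j, coef (m j) (d j)) • A (fun j => bv n (d j)) := by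
    have hm : m = fun j => ∑ k : Fin n ⊕ Fin n, coef (m j) k • bv n k :=
      funext fun j => (vec_expansion (m j)).symm
    calc A m = A.toMultilinearMap (fun j => ∑ k : Fin n ⊕ Fin n, coef (m j) k • bv n k) := by
          rw [← hm]; rfl
      _ = _ := hexp0
  rw [hexp]
  calc ‖∑ d : Fin N → (Fin n ⊕ Fin n), (∏ j, coef (m j) (d j)) • A (fun j => bv n (d j))‖
      ≤ ∑ d : Fin N → (Fin n ⊕ Fin n), ‖(∏ j, coef (m j) (d j)) • A (fun j => bv n (d j))‖ :=
        norm_sum_le _ _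
    _ ≤ ∑ d : Fin N → (Fin n ⊕ Fin n), ‖A (fun j => bv n (d j))‖ * ∏ j, ‖m j‖ := by
        apply Finset.sum_le_sum
        intro d _
        rw [norm_smul]
        rw [mul_comm]
        apply mul_le_mul_of_nonneg_left _ (norm_nonneg _)
        calc ‖∏ j, coef (m j) (d j)‖ = ∏ j, |coef (m j) (d j)| := by
              rw [Real.norm_eq_abs, Finset.abs_prod]
          _ ≤ ∏ j, ‖m j‖ := Finset.prod_le_prod (fun j _ => abs_nonneg _)
              (fun j _ => abs_coef_le (m j) (d j))
    _ = (∑ d : Fin N → (Fin n ⊕ Fin n), ‖A (fun j => bv n (d j))‖) * ∏ j, ‖m j‖ := by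
        rw [Finset.sum_mul]
-- PART 4: multi-index lists and the mpd/mixpd bridge
lemma dirDs_replicate {E : Type*} [NormedAddCommGroup E] [NormedSpace ℝ E]
    (k : ℕ) (v : E) (f : E → ℂ) :
    dirDs (List.replicate k v) f = (dirD v)^[k] f := by
  induction k with
  | zero => rfl
  | succ k ih =>
    rw [List.replicate_succ, dirDs_cons, ih, Function.iterate_succ_apply']

def eI (i : Fin n) : Fin n → ℕ := fun j => if j = i then 1 else 0

def cE (β : Fin n → ℕ) : List (Fin n) :=
  (List.finRange n).flatMap (fun i => List.replicate (β i) i)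

lemma count_flat (β : Fin n → ℕ) (i : Fin n) (l : List (Fin n)) :
    (l.flatMap (fun j => List.replicate (β j) j)).count i = β i * l.count i := by
  induction l with
  | nil => simp
  | cons j t ih =>
    rw [List.flatMap_cons, List.count_append, ih, List.count_cons]
    by_cases h : j = i
    · subst h; simp [List.count_replicate, mul_add]; ring
    · simp [List.count_replicate, h, Ne.symm h]

lemma count_cE (β : Fin n → ℕ) (i : Fin n) : (cE β).count i = β i := by
  rw [cE, count_flat,
    List.count_eq_one_of_mem (List.nodup_finRange n) (List.mem_finRange i), mul_one]

lemma length_cE (β : Fin n → ℕ) : (cE β).length = ∑ i, β i := by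
  rw [cE, List.length_flatMap, Fin.sum_univ_def]
  congr 1
  simp [Function.comp_def]

def cL (α β : Fin n → ℕ) : List (Fin n ⊕ Fin n) :=
  (cE α).map Sum.inl ++ (cE β).map Sum.inr

lemma cE_zero : cE (0 : Fin n → ℕ) = [] :=
  List.eq_nil_of_length_eq_zero (by rw [length_cE]; simp)

lemma perm_cE_add (δ : Fin n → ℕ) (i : Fin n) : (cE (δ + eI i)).Perm (i :: cE δ) := by
  rw [List.perm_iff_count]
  intro a
  rw [count_cE, List.count_cons, count_cE]
  by_cases h : a = i
  · simp [eI, Pi.add_apply, h]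
  · simp [eI, Pi.add_apply, h, Ne.symm h]

lemma exists_perm_cL (l : List (Fin n ⊕ Fin n)) :
    ∃ α β : Fin n → ℕ, l.Perm (cL α β) := by
  induction l with
  | nil =>
    refine ⟨0, 0, ?_⟩
    rw [cL, cE_zero]
    simp
  | cons a t ih =>
    obtain ⟨α, β, hp⟩ := ih
    cases a with
    | inl i =>
      refine ⟨α + eI i, β, ?_⟩
      have h1 : (cL (α + eI i) β).Perm (Sum.inl i :: cL α β) := by
        rw [cL, cL]
        have h2 : ((cE (α + eI i)).map Sum.inl).Perm
            ((Sum.inl i : Fin n ⊕ Fin n) :: (cE α).map Sum.inl) :=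
          (perm_cE_add α i).map Sum.inl
        exact h2.append_right _
      exact (hp.cons (Sum.inl i)).trans h1.symm
    | inr i =>
      refine ⟨α, β + eI i, ?_⟩
      have h1 : (cL α (β + eI i)).Perm (Sum.inr i :: cL α β) := by
        rw [cL, cL]
        have h2 : ((cE (β + eI i)).map Sum.inr).Perm
            ((Sum.inr i : Fin n ⊕ Fin n) :: (cE β).map Sum.inr) :=
          (perm_cE_add β i).map Sum.inr
        exact (h2.append_left ((cE α).map Sum.inl)).trans List.perm_middle
      exact (hp.cons (Sum.inr i)).trans h1.symm

lemma countP_isRight_cL (α β : Fin n → ℕ) :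
    (cL α β).countP (fun k => k.isRight) = ∑ i, β i := by
  rw [cL, List.countP_append, List.countP_map, List.countP_map]
  have h1 : (cE α).countP ((fun k : Fin n ⊕ Fin n => k.isRight) ∘ Sum.inl) = 0 := by
    simp [Function.comp_def]
  have h2 : (cE β).countP ((fun k : Fin n ⊕ Fin n => k.isRight) ∘ Sum.inr) = (cE β).length := by
    simp [Function.comp_def]
  rw [h1, h2, length_cE, zero_add]

lemma pd_eq_dirD (i : Fin n) :
    (pd i : (En n → ℂ) → En n → ℂ) = dirD (EuclideanSpace.single i 1) := rfl

lemma mpd_eq_dirDs (β : Fin n → ℕ) (f : En n → ℂ) :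
    mpd β f = dirDs ((cE β).map (fun i => EuclideanSpace.single i (1:ℝ))) f := by
  rw [mpd, cE]
  generalize List.finRange n = l
  induction l with
  | nil => rfl
  | cons j t ih =>
    rw [List.foldr_cons, ih, List.flatMap_cons, List.map_append, dirDs_append,
      List.map_replicate, dirDs_replicate, pd_eq_dirD]

lemma contDiff_mpd {f : En n → ℂ} (hf : ContDiff ℝ (⊤:ℕ∞) f) (β : Fin n → ℕ) :
    ContDiff ℝ (⊤:ℕ∞) (mpd β f) := by
  rw [mpd_eq_dirDs]; exact contDiff_dirDs hf _

lemma mpd_zero (f : En n → ℂ) : mpd 0 f = f := by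
  rw [mpd_eq_dirDs, cE_zero]
  rfl

lemma pd_mpd {f : En n → ℂ} (hf : ContDiff ℝ (⊤:ℕ∞) f) (δ : Fin n → ℕ) (i : Fin n) :
    mpd (δ + eI i) f = pd i (mpd δ f) := by
  rw [mpd_eq_dirDs, mpd_eq_dirDs, pd_eq_dirD]
  rw [dirDs_perm hf ((perm_cE_add δ i).map (fun i => (EuclideanSpace.single i (1:ℝ) : En n)))]
  rfl

lemma mpd_single {f : En n → ℂ} (hf : ContDiff ℝ (⊤:ℕ∞) f) (i : Fin n) :
    mpd (eI i) f = pd i f := by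
  have h := pd_mpd hf 0 i
  rw [zero_add, mpd_zero] at h
  exact h

-- partial slot lemmas
lemma contDiff_partial_right {g : En n × En n → ℂ} (hg : ContDiff ℝ (⊤:ℕ∞) g) (x : En n) :
    ContDiff ℝ (⊤:ℕ∞) (fun η => g (x, η)) := hg.comp (contDiff_const.prodMk contDiff_id)

lemma contDiff_partial_left {g : En n × En n → ℂ} (hg : ContDiff ℝ (⊤:ℕ∞) g) (ξ : En n) :
    ContDiff ℝ (⊤:ℕ∞) (fun y => g (y, ξ)) := hg.comp (contDiff_id.prodMk contDiff_const)

lemma dirD_partial_right {g : En n × En n → ℂ} (hg : ContDiff ℝ (⊤:ℕ∞) g)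
    (v : En n) (x ξ : En n) :
    dirD v (fun η => g (x, η)) ξ = dirD ((0:En n), v) g (x, ξ) := by
  have h1 : HasFDerivAt (fun η : En n => (x, η)) (ContinuousLinearMap.inr ℝ (En n) (En n)) ξ :=
    hasFDerivAt_prodMk_right x ξ
  have h2 : HasFDerivAt g (fderiv ℝ g (x,ξ)) (x,ξ) :=
    ((hg.differentiable (by simp)) (x,ξ)).hasFDerivAt
  have h3 := h2.comp ξ h1
  have h4 : dirD v (fun η => g (x, η)) ξ
      = fderiv ℝ (g ∘ fun η : En n => (x, η)) ξ v := rfl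
  rw [h4, h3.fderiv]
  simp [dirD]

lemma dirD_partial_left {g : En n × En n → ℂ} (hg : ContDiff ℝ (⊤:ℕ∞) g)
    (v : En n) (x ξ : En n) :
    dirD v (fun y => g (y, ξ)) x = dirD (v, (0:En n)) g (x, ξ) := by
  have h1 : HasFDerivAt (fun y : En n => (y, ξ)) (ContinuousLinearMap.inl ℝ (En n) (En n)) x :=
    hasFDerivAt_prodMk_left x ξ
  have h2 : HasFDerivAt g (fderiv ℝ g (x,ξ)) (x,ξ) :=
    ((hg.differentiable (by simp)) (x,ξ)).hasFDerivAt
  have h3 := h2.comp x h1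
  have h4 : dirD v (fun y => g (y, ξ)) x
      = fderiv ℝ (g ∘ fun y : En n => (y, ξ)) x v := rfl
  rw [h4, h3.fderiv]
  simp [dirD]

lemma dirDs_partial_right {g : En n × En n → ℂ} (hg : ContDiff ℝ (⊤:ℕ∞) g)
    (l : List (En n)) (x ξ : En n) :
    dirDs l (fun η => g (x, η)) ξ = dirDs (l.map (fun v => ((0:En n), v))) g (x, ξ) := by
  induction l generalizing ξ with
  | nil => rfl
  | cons v t ih =>
    have hfun : (dirDs t (fun η => g (x, η)))
        = fun η => dirDs (t.map (fun v => ((0:En n), v))) g (x, η) := funext fun η => ih η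
    rw [dirDs_cons, hfun,
      dirD_partial_right (contDiff_dirDs hg (t.map (fun v => ((0:En n), v)))) v x ξ]
    rfl

lemma dirDs_partial_left {g : En n × En n → ℂ} (hg : ContDiff ℝ (⊤:ℕ∞) g)
    (l : List (En n)) (x ξ : En n) :
    dirDs l (fun y => g (y, ξ)) x = dirDs (l.map (fun v => (v, (0:En n)))) g (x, ξ) := by
  induction l generalizing x with
  | nil => rfl
  | cons v t ih =>
    have hfun : (dirDs t (fun y => g (y, ξ)))
        = fun y => dirDs (t.map (fun v => (v, (0:En n)))) g (y, ξ) := funext fun y => ih y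
    rw [dirDs_cons, hfun,
      dirD_partial_left (contDiff_dirDs hg (t.map (fun v => (v, (0:En n))))) v x ξ]
    rfl

lemma mixpd_eq_dirDs {τ : En n → En n → ℂ}
    (hτ : ContDiff ℝ (⊤:ℕ∞) (fun q : En n × En n => τ q.1 q.2))
    (α β : Fin n → ℕ) (x ξ : En n) :
    mixpd α β τ x ξ
      = dirDs ((cL α β).map (bv n)) (fun q : En n × En n => τ q.1 q.2) (x, ξ) := by
  set g := fun q : En n × En n => τ q.1 q.2 with hg
  have hinner : ∀ y η : En n, mpd β (τ y) η
      = dirDs ((cE β).map (fun i => ((0:En n), (EuclideanSpace.single i (1:ℝ) : En n)))) g (y, η) := by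
    intro y η
    rw [mpd_eq_dirDs]
    have h1 : (τ y) = fun η => g (y, η) := rfl
    rw [h1, dirDs_partial_right hτ _ y η, List.map_map]
    rfl
  have houter : (fun y => mpd β (τ y) ξ)
      = fun y => dirDs ((cE β).map (fun i => ((0:En n), (EuclideanSpace.single i (1:ℝ) : En n)))) g (y, ξ) :=
    funext fun y => hinner y ξ
  show mpd α (fun y => mpd β (τ y) ξ) x = _
  rw [houter, mpd_eq_dirDs,
    dirDs_partial_left (contDiff_dirDs hτ _) _ x ξ, ← dirDs_append]
  congr 1
  rw [cL, List.map_append, List.map_map, List.map_map, List.map_map]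
  rfl

lemma contDiff_uncurried_mpd {τ : En n → En n → ℂ}
    (hτ : ContDiff ℝ (⊤:ℕ∞) (fun q : En n × En n => τ q.1 q.2)) (β : Fin n → ℕ) :
    ContDiff ℝ (⊤:ℕ∞) (fun q : En n × En n => mpd β (τ q.1) q.2) := by
  have h : (fun q : En n × En n => mpd β (τ q.1) q.2)
      = dirDs ((cL 0 β).map (bv n)) (fun q : En n × En n => τ q.1 q.2) := by
    funext q
    have := mixpd_eq_dirDs hτ 0 β q.1 q.2
    rw [mixpd, mpd_zero] at this
    rw [← this]
  rw [h]
  exact contDiff_dirDs hτ _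

-- PART 5: scaling
def AL (t : ℝ) : (En n × En n) →L[ℝ] (En n × En n) :=
  (ContinuousLinearMap.fst ℝ (En n) (En n)).prod
    (t • (ContinuousLinearMap.snd ℝ (En n) (En n)))

def Sm (ξ₀ : En n) (t : ℝ) : (En n × En n) → (En n × En n) :=
  fun p => (p.1, ξ₀ + t • p.2)

lemma hasFDerivAt_Sm (ξ₀ : En n) (t : ℝ) (p : En n × En n) :
    HasFDerivAt (Sm ξ₀ t) (AL (n:=n) t) p := by
  have h1 : HasFDerivAt (fun p : En n × En n => p.1)
      (ContinuousLinearMap.fst ℝ (En n) (En n)) p := hasFDerivAt_fst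
  have h2 : HasFDerivAt (fun p : En n × En n => ξ₀ + t • p.2)
      (t • ContinuousLinearMap.snd ℝ (En n) (En n)) p :=
    ((hasFDerivAt_snd).const_smul t).const_add ξ₀
  exact h1.prodMk h2

lemma contDiff_Sm (ξ₀ : En n) (t : ℝ) : ContDiff ℝ (⊤:ℕ∞) (Sm ξ₀ t) :=
  contDiff_fst.prodMk (contDiff_const.add (contDiff_snd.const_smul t))

lemma dirD_comp_Sm {f : En n × En n → ℂ} (hf : Differentiable ℝ f) (ξ₀ : En n) (t : ℝ)
    (v : En n × En n) :
    dirD v (f ∘ Sm ξ₀ t) = fun p => dirD (AL (n:=n) t v) f (Sm ξ₀ t p) := by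
  funext p
  have h := (hf (Sm ξ₀ t p)).hasFDerivAt.comp p (hasFDerivAt_Sm ξ₀ t p)
  have h4 : dirD v (f ∘ Sm ξ₀ t) p = fderiv ℝ (f ∘ Sm ξ₀ t) p v := rfl
  rw [h4, h.fderiv]
  rfl

lemma dirDs_comp_Sm {f : En n × En n → ℂ} (hf : ContDiff ℝ (⊤:ℕ∞) f) (ξ₀ : En n) (t : ℝ)
    (l : List (En n × En n)) :
    dirDs l (f ∘ Sm ξ₀ t) = fun p => dirDs (l.map (AL (n:=n) t)) f (Sm ξ₀ t p) := by
  induction l with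
  | nil => rfl
  | cons v tl ih =>
    rw [dirDs_cons, ih, List.map_cons]
    have := dirD_comp_Sm (f := dirDs (tl.map (AL (n:=n) t)) f)
      ((contDiff_dirDs hf _).differentiable (by simp)) ξ₀ t v
    rw [show (fun p => dirDs (tl.map (AL (n:=n) t)) f (Sm ξ₀ t p))
        = (dirDs (tl.map (AL (n:=n) t)) f) ∘ Sm ξ₀ t from rfl, this]
    rfl

lemma AL_bv_inl (t : ℝ) (i : Fin n) : AL (n:=n) t (bv n (Sum.inl i)) = bv n (Sum.inl i) := by
  apply Prod.ext <;> simp [AL, bv]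

lemma AL_bv_inr (t : ℝ) (i : Fin n) : AL (n:=n) t (bv n (Sum.inr i)) = t • bv n (Sum.inr i) := by
  apply Prod.ext <;> simp [AL, bv]

lemma dirDs_map_AL {f : En n × En n → ℂ} (hf : ContDiff ℝ (⊤:ℕ∞) f) (t : ℝ)
    (l : List (Fin n ⊕ Fin n)) :
    dirDs ((l.map (bv n)).map (AL (n:=n) t)) f
      = t ^ (l.countP (fun k => k.isRight)) • dirDs (l.map (bv n)) f := by
  induction l with
  | nil => simp
  | cons k tl ih =>
    simp only [List.map_cons, dirDs_cons, List.countP_cons, ih]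
    have hdiff : Differentiable ℝ (dirDs (tl.map (bv n)) f) :=
      (contDiff_dirDs hf _).differentiable (by simp)
    cases k with
    | inl i =>
      rw [AL_bv_inl, dirD_const_smul hdiff]
      simp
    | inr i =>
      rw [AL_bv_inr, dirD_smul_vec, dirD_const_smul hdiff, smul_smul]
      simp [pow_succ, mul_comm]

-- PART 6: rescaled functions
def rescaled (τ : En n → En n → ℂ) (Λ : En n → ℝ) (ρ : ℝ) (ξ₀ : En n) :
    (En n × En n) → ℂ :=
  (fun q : En n × En n => τ q.1 q.2) ∘ Sm ξ₀ (Λ ξ₀ ^ ρ)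

def Resc (Λ : En n → ℝ) (ρ : ℝ) (τ : En n → En n → ℂ) : Prop :=
  ∀ N : ℕ, ∃ C : ℝ, ∀ x₀ ξ₀ : En n,
    ‖iteratedFDeriv ℝ N (rescaled τ Λ ρ ξ₀) ((x₀, 0) : En n × En n)‖ ≤ C

lemma contDiff_rescaled {τ : En n → En n → ℂ}
    (hτ : ContDiff ℝ (⊤:ℕ∞) (fun q : En n × En n => τ q.1 q.2))
    (Λ : En n → ℝ) (ρ : ℝ) (ξ₀ : En n) :
    ContDiff ℝ (⊤:ℕ∞) (rescaled τ Λ ρ ξ₀) := hτ.comp (contDiff_Sm ξ₀ _)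

lemma Sm_base (ξ₀ : En n) (t : ℝ) (x₀ : En n) :
    Sm ξ₀ t ((x₀, 0) : En n × En n) = (x₀, ξ₀) := by
  simp [Sm]

lemma dirDs_rescaled {τ : En n → En n → ℂ}
    (hτ : ContDiff ℝ (⊤:ℕ∞) (fun q : En n × En n => τ q.1 q.2))
    (Λ : En n → ℝ) (ρ : ℝ) (l : List (Fin n ⊕ Fin n)) (x₀ ξ₀ : En n) :
    dirDs (l.map (bv n)) (rescaled τ Λ ρ ξ₀) ((x₀, 0) : En n × En n)
      = ((Λ ξ₀ ^ ρ) ^ (l.countP (fun k => k.isRight)))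
          • dirDs (l.map (bv n)) (fun q : En n × En n => τ q.1 q.2) (x₀, ξ₀) := by
  set t := Λ ξ₀ ^ ρ with ht
  have h1 : dirDs (l.map (bv n)) (rescaled τ Λ ρ ξ₀) ((x₀, 0) : En n × En n)
      = dirDs ((l.map (bv n)).map (AL (n:=n) t)) (fun q : En n × En n => τ q.1 q.2)
          (Sm ξ₀ t ((x₀, 0) : En n × En n)) :=
    congrFun (dirDs_comp_Sm hτ ξ₀ t (l.map (bv n))) _
  rw [h1, Sm_base, dirDs_map_AL hτ t l]
  rfl

lemma rpow_pow_eq (Λξ : ℝ) (hΛ : 0 < Λξ) (ρ : ℝ) (k : ℕ) :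
    (Λξ ^ ρ) ^ k = Λξ ^ (ρ * (k:ℝ)) := by
  rw [← Real.rpow_natCast (Λξ ^ ρ) k, ← Real.rpow_mul (le_of_lt hΛ)]

lemma rpow_cancel (Λξ : ℝ) (hΛ : 0 < Λξ) (s : ℝ) :
    Λξ ^ (ρ' : ℝ) * Λξ ^ (0 - ρ') = 1 := by
  rw [← Real.rpow_add hΛ]
  norm_num

lemma resc_to_bounds {Λ : En n → ℝ} {ρ : ℝ} (hΛ : ∀ ξ, 0 < Λ ξ) {τ : En n → En n → ℂ}
    (hτ : ContDiff ℝ (⊤:ℕ∞) (fun q : En n × En n => τ q.1 q.2)) (hR : Resc Λ ρ τ)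
    (α β : Fin n → ℕ) :
    ∃ C > 0, ∀ x ξ : En n, ‖mixpd α β τ x ξ‖ ≤ C * Λ ξ ^ ((0:ℝ) - ρ * ∑ i, (β i : ℝ)) := by
  obtain ⟨C, hC⟩ := hR ((cL α β).map (bv n)).length
  refine ⟨max C 1, lt_of_lt_of_le one_pos (le_max_right _ _), ?_⟩
  intro x₀ ξ₀
  set t := Λ ξ₀ ^ ρ with ht
  have ht0 : 0 < t := Real.rpow_pos_of_pos (hΛ ξ₀) ρ
  set k := (cL α β).countP (fun k => k.isRight) with hk
  have h1 : dirDs ((cL α β).map (bv n)) (rescaled τ Λ ρ ξ₀) ((x₀, 0) : En n × En n)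
      = (t ^ k) • mixpd α β τ x₀ ξ₀ := by
    rw [dirDs_rescaled hτ Λ ρ (cL α β) x₀ ξ₀, ← mixpd_eq_dirDs hτ]
  have h2 : ‖dirDs ((cL α β).map (bv n)) (rescaled τ Λ ρ ξ₀) ((x₀, 0) : En n × En n)‖ ≤ C := by
    refine le_trans (norm_dirDs_le (contDiff_rescaled hτ Λ ρ ξ₀) _ ?_ _) (hC x₀ ξ₀)
    intro v hv
    obtain ⟨kk, _, rfl⟩ := List.mem_map.mp hv
    rw [norm_bv]
  have h3 : t ^ k * ‖mixpd α β τ x₀ ξ₀‖ ≤ C := by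
    have := h2
    rw [h1, norm_smul, Real.norm_eq_abs, abs_of_pos (pow_pos ht0 k)] at this
    exact this
  have hs : t ^ k = Λ ξ₀ ^ (ρ * ∑ i, (β i : ℝ)) := by
    rw [ht, rpow_pow_eq (Λ ξ₀) (hΛ ξ₀) ρ k, hk, countP_isRight_cL]
    congr 1
    push_cast
    rfl
  have hone : Λ ξ₀ ^ (ρ * ∑ i, (β i : ℝ)) * Λ ξ₀ ^ ((0:ℝ) - ρ * ∑ i, (β i : ℝ)) = 1 := by
    rw [← Real.rpow_add (hΛ ξ₀)]
    norm_num
  have hnn : (0:ℝ) ≤ Λ ξ₀ ^ ((0:ℝ) - ρ * ∑ i, (β i : ℝ)) := Real.rpow_nonneg (le_of_lt (hΛ ξ₀)) _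
  calc ‖mixpd α β τ x₀ ξ₀‖
      = (Λ ξ₀ ^ (ρ * ∑ i, (β i : ℝ)) * ‖mixpd α β τ x₀ ξ₀‖)
          * Λ ξ₀ ^ ((0:ℝ) - ρ * ∑ i, (β i : ℝ)) := by
        rw [mul_comm (Λ ξ₀ ^ (ρ * ∑ i, (β i : ℝ))), mul_assoc, hone, mul_one]
    _ ≤ C * Λ ξ₀ ^ ((0:ℝ) - ρ * ∑ i, (β i : ℝ)) := by
        apply mul_le_mul_of_nonneg_right _ hnn
        rw [← hs]
        exact h3
    _ ≤ max C 1 * Λ ξ₀ ^ ((0:ℝ) - ρ * ∑ i, (β i : ℝ)) :=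
        mul_le_mul_of_nonneg_right (le_max_left _ _) hnn

lemma bounds_to_resc {Λ : En n → ℝ} {ρ : ℝ} (hΛ : ∀ ξ, 0 < Λ ξ) {τ : En n → En n → ℂ}
    (hτ : ContDiff ℝ (⊤:ℕ∞) (fun q : En n × En n => τ q.1 q.2))
    (hb : ∀ α β : Fin n → ℕ, ∃ C > 0, ∀ x ξ : En n,
      ‖mixpd α β τ x ξ‖ ≤ C * Λ ξ ^ ((0:ℝ) - ρ * ∑ i, (β i : ℝ))) :
    Resc Λ ρ τ := by
  intro N
  classical
  let P := fun d : Fin N → (Fin n ⊕ Fin n) => exists_perm_cL (n := n) (List.ofFn d)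
  let αd := fun d => (P d).choose
  let βd := fun d => (P d).choose_spec.choose
  have hpd : ∀ d, (List.ofFn d).Perm (cL (αd d) (βd d)) := fun d => (P d).choose_spec.choose_spec
  let Cd := fun d => (hb (αd d) (βd d)).choose
  have hCd : ∀ d, 0 < Cd d := fun d => (hb (αd d) (βd d)).choose_spec.1
  have hCd2 : ∀ d (x ξ : En n), ‖mixpd (αd d) (βd d) τ x ξ‖
      ≤ Cd d * Λ ξ ^ ((0:ℝ) - ρ * ∑ i, (βd d i : ℝ)) :=
    fun d => (hb (αd d) (βd d)).choose_spec.2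
  refine ⟨∑ d : Fin N → (Fin n ⊕ Fin n), Cd d, ?_⟩
  intro x₀ ξ₀
  set t := Λ ξ₀ ^ ρ with ht
  have ht0 : 0 < t := Real.rpow_pos_of_pos (hΛ ξ₀) ρ
  refine le_trans (norm_iterF_le_sum (rescaled τ Λ ρ ξ₀) ((x₀, 0) : En n × En n) N) ?_
  apply Finset.sum_le_sum
  intro d _
  have hlen : ((List.ofFn d).map (bv n)).length = N := by simp
  have e1 : iteratedFDeriv ℝ N (rescaled τ Λ ρ ξ₀) ((x₀, 0) : En n × En n)
        (fun j => bv n (d j))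
      = dirDs ((List.ofFn d).map (bv n)) (rescaled τ Λ ρ ξ₀) ((x₀, 0) : En n × En n) := by
    have hfun : (fun j : Fin N => (((List.ofFn d).map (bv n)).get (Fin.cast hlen.symm j)))
        = fun j => bv n (d j) := by
      funext j
      simp [List.get_eq_getElem, List.getElem_map, List.getElem_ofFn]
    rw [dirDs_eq_iterF (contDiff_rescaled hτ Λ ρ ξ₀) _ hlen]
    exact congrArg (iteratedFDeriv ℝ N (rescaled τ Λ ρ ξ₀) ((x₀, 0) : En n × En n)) hfun.symm
  have e2 := dirDs_rescaled hτ Λ ρ (List.ofFn d) x₀ ξ₀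
  have e3 : dirDs ((List.ofFn d).map (bv n)) (fun q : En n × En n => τ q.1 q.2)
      = dirDs ((cL (αd d) (βd d)).map (bv n)) (fun q : En n × En n => τ q.1 q.2) :=
    dirDs_perm hτ ((hpd d).map (bv n))
  have e4 : dirDs ((cL (αd d) (βd d)).map (bv n)) (fun q : En n × En n => τ q.1 q.2) (x₀, ξ₀)
      = mixpd (αd d) (βd d) τ x₀ ξ₀ := (mixpd_eq_dirDs hτ (αd d) (βd d) x₀ ξ₀).symm
  have hkd : (List.ofFn d).countP (fun k => k.isRight) = ∑ i, βd d i := by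
    rw [(hpd d).countP_eq, countP_isRight_cL]
  have hs : t ^ ((List.ofFn d).countP (fun k => k.isRight))
      = Λ ξ₀ ^ (ρ * ∑ i, (βd d i : ℝ)) := by
    rw [ht, rpow_pow_eq (Λ ξ₀) (hΛ ξ₀) ρ, hkd]
    congr 1
    push_cast
    rfl
  have hone : Λ ξ₀ ^ (ρ * ∑ i, (βd d i : ℝ)) * Λ ξ₀ ^ ((0:ℝ) - ρ * ∑ i, (βd d i : ℝ)) = 1 := by
    rw [← Real.rpow_add (hΛ ξ₀)]
    norm_num
  rw [e1, e2, e3, e4, norm_smul, Real.norm_eq_abs,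
    abs_of_pos (pow_pos ht0 _), hs]
  calc Λ ξ₀ ^ (ρ * ∑ i, (βd d i : ℝ)) * ‖mixpd (αd d) (βd d) τ x₀ ξ₀‖
      ≤ Λ ξ₀ ^ (ρ * ∑ i, (βd d i : ℝ))
          * (Cd d * Λ ξ₀ ^ ((0:ℝ) - ρ * ∑ i, (βd d i : ℝ))) :=
        mul_le_mul_of_nonneg_left (hCd2 d x₀ ξ₀) (Real.rpow_nonneg (le_of_lt (hΛ ξ₀)) _)
    _ = Cd d * (Λ ξ₀ ^ (ρ * ∑ i, (βd d i : ℝ)) * Λ ξ₀ ^ ((0:ℝ) - ρ * ∑ i, (βd d i : ℝ))) := by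
        ring
    _ = Cd d := by rw [hone, mul_one]

-- PART 7: closure properties of Resc
lemma Resc.upto {Λ : En n → ℝ} {ρ : ℝ} {τ : En n → En n → ℂ} (h : Resc Λ ρ τ) (N : ℕ) :
    ∃ C : ℝ, 0 ≤ C ∧ ∀ i ≤ N, ∀ x₀ ξ₀ : En n,
      ‖iteratedFDeriv ℝ i (rescaled τ Λ ρ ξ₀) ((x₀,0) : En n × En n)‖ ≤ C := by
  induction N with
  | zero =>
    obtain ⟨C, hC⟩ := h 0
    refine ⟨max C 0, le_max_right _ _, fun i hi x₀ ξ₀ => ?_⟩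
    obtain rfl := Nat.le_zero.mp hi
    exact (hC x₀ ξ₀).trans (le_max_left _ _)
  | succ N ih =>
    obtain ⟨C, hC0, hC⟩ := ih
    obtain ⟨C', hC'⟩ := h (N+1)
    refine ⟨max C (max C' 0), le_trans hC0 (le_max_left _ _), ?_⟩
    intro i hi x₀ ξ₀
    rcases Nat.lt_or_ge i (N+1) with h1 | h1
    · exact (hC i (Nat.lt_succ_iff.mp h1) x₀ ξ₀).trans (le_max_left _ _)
    · obtain rfl : i = N+1 := le_antisymm hi h1
      exact (hC' x₀ ξ₀).trans (le_trans (le_max_left _ _) (le_max_right _ _))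

lemma Resc.mul {Λ : En n → ℝ} {ρ : ℝ} {τ₁ τ₂ : En n → En n → ℂ}
    (h1s : ContDiff ℝ (⊤:ℕ∞) (fun q : En n × En n => τ₁ q.1 q.2))
    (h2s : ContDiff ℝ (⊤:ℕ∞) (fun q : En n × En n => τ₂ q.1 q.2))
    (h1 : Resc Λ ρ τ₁) (h2 : Resc Λ ρ τ₂) :
    Resc Λ ρ (fun x ξ => τ₁ x ξ * τ₂ x ξ) := by
  intro N
  obtain ⟨C₁, hC₁0, hC₁⟩ := h1.upto N
  obtain ⟨C₂, hC₂0, hC₂⟩ := h2.upto N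
  refine ⟨∑ i ∈ Finset.range (N+1), (N.choose i : ℝ) * C₁ * C₂, ?_⟩
  intro x₀ ξ₀
  have key : rescaled (fun x ξ => τ₁ x ξ * τ₂ x ξ) Λ ρ ξ₀
      = fun p => rescaled τ₁ Λ ρ ξ₀ p * rescaled τ₂ Λ ρ ξ₀ p := rfl
  rw [key]
  refine le_trans (norm_iteratedFDeriv_mul_le (𝕜 := ℝ)
    (contDiff_rescaled h1s Λ ρ ξ₀) (contDiff_rescaled h2s Λ ρ ξ₀) _
    (by exact_mod_cast le_top : (N : WithTop ℕ∞) ≤ ((⊤:ℕ∞) : WithTop ℕ∞))) ?_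
  apply Finset.sum_le_sum
  intro i hi
  have hiN : i ≤ N := Nat.lt_succ_iff.mp (Finset.mem_range.mp hi)
  apply mul_le_mul
  · exact mul_le_mul_of_nonneg_left (hC₁ i hiN x₀ ξ₀) (by positivity)
  · exact hC₂ (N - i) (Nat.sub_le N i) x₀ ξ₀
  · exact norm_nonneg _
  · positivity

lemma Resc.clm {Λ : En n → ℝ} {ρ : ℝ} (L : ℂ →L[ℝ] ℂ) {τ : En n → En n → ℂ}
    (hs : ContDiff ℝ (⊤:ℕ∞) (fun q : En n × En n => τ q.1 q.2))
    (h : Resc Λ ρ τ) : Resc Λ ρ (fun x ξ => L (τ x ξ)) := by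
  intro N
  obtain ⟨C, hC⟩ := h N
  refine ⟨‖L‖ * C, ?_⟩
  intro x₀ ξ₀
  have key : rescaled (fun x ξ => L (τ x ξ)) Λ ρ ξ₀ = ⇑L ∘ rescaled τ Λ ρ ξ₀ := rfl
  rw [key, L.iteratedFDeriv_comp_left (contDiff_rescaled hs Λ ρ ξ₀).contDiffAt
    (by exact_mod_cast le_top : (N : WithTop ℕ∞) ≤ ((⊤:ℕ∞) : WithTop ℕ∞))]
  exact le_trans (L.norm_compContinuousMultilinearMap_le _)
    (mul_le_mul_of_nonneg_left (hC x₀ ξ₀) (norm_nonneg L))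

lemma Resc.comp {Λ : En n → ℝ} {ρ : ℝ} {τ : En n → En n → ℂ}
    (hs : ContDiff ℝ (⊤:ℕ∞) (fun q : En n × En n => τ q.1 q.2))
    (h : Resc Λ ρ τ) {F : ℂ → ℂ} (hF : ContDiff ℝ (⊤:ℕ∞) F) :
    Resc Λ ρ (fun x ξ => F (τ x ξ)) := by
  intro N
  obtain ⟨R, hR0, hR⟩ := h.upto 0
  obtain ⟨C', hC'0, hC'⟩ := h.upto N
  have hFb : ∀ M : ℕ, ∃ CF : ℝ, ∀ i ≤ M, ∀ z : ℂ, ‖z‖ ≤ R → ‖iteratedFDeriv ℝ i F z‖ ≤ CF := by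
    intro M
    induction M with
    | zero =>
      obtain ⟨C0, hC0⟩ := (isCompact_closedBall (0:ℂ) R).exists_bound_of_continuousOn
        ((hF.continuous_iteratedFDeriv (m := 0) (by exact_mod_cast le_top)).continuousOn)
      refine ⟨C0, fun i hi z hz => ?_⟩
      obtain rfl := Nat.le_zero.mp hi
      exact hC0 z (by simpa [Metric.mem_closedBall, dist_zero_right] using hz)
    | succ M ihM =>
      obtain ⟨CF, hCF⟩ := ihM
      obtain ⟨C1, hC1⟩ := (isCompact_closedBall (0:ℂ) R).exists_bound_of_continuousOn
        ((hF.continuous_iteratedFDeriv (m := M+1) (by exact_mod_cast le_top)).continuousOn)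
      refine ⟨max CF C1, fun i hi z hz => ?_⟩
      rcases Nat.lt_or_ge i (M+1) with hlt | hge
      · exact (hCF i (Nat.lt_succ_iff.mp hlt) z hz).trans (le_max_left _ _)
      · obtain rfl : i = M+1 := le_antisymm hi hge
        exact (hC1 z (by simpa [Metric.mem_closedBall, dist_zero_right] using hz)).trans
          (le_max_right _ _)
  obtain ⟨CF, hCF⟩ := hFb N
  set D := max 1 C' with hD
  refine ⟨(N.factorial : ℝ) * max CF 0 * D ^ N, ?_⟩
  intro x₀ ξ₀
  have key : rescaled (fun x ξ => F (τ x ξ)) Λ ρ ξ₀ = F ∘ rescaled τ Λ ρ ξ₀ := rfl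
  rw [key]
  have hzb : ‖rescaled τ Λ ρ ξ₀ ((x₀,0) : En n × En n)‖ ≤ R := by
    have := hR 0 le_rfl x₀ ξ₀
    rwa [norm_iteratedFDeriv_zero] at this
  have hCc : ∀ i, i ≤ N →
      ‖iteratedFDeriv ℝ i F (rescaled τ Λ ρ ξ₀ ((x₀,0) : En n × En n))‖ ≤ max CF 0 :=
    fun i hi => (hCF i hi _ hzb).trans (le_max_left _ _)
  have hDc : ∀ i, 1 ≤ i → i ≤ N →
      ‖iteratedFDeriv ℝ i (rescaled τ Λ ρ ξ₀) ((x₀,0) : En n × En n)‖ ≤ D ^ i := by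
    intro i hi1 hiN
    calc ‖iteratedFDeriv ℝ i (rescaled τ Λ ρ ξ₀) ((x₀,0) : En n × En n)‖
        ≤ C' := hC' i hiN x₀ ξ₀
      _ ≤ D := le_max_right 1 C'
      _ ≤ D ^ i := le_self_pow₀ (le_max_left 1 C') (Nat.one_le_iff_ne_zero.mp hi1)
  exact norm_iteratedFDeriv_comp_le hF (contDiff_rescaled hs Λ ρ ξ₀)
    (by exact_mod_cast le_top : (N : WithTop ℕ∞) ≤ ((⊤:ℕ∞) : WithTop ℕ∞))
    ((x₀,0) : En n × En n) hCc hDc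

lemma Resc.zero {Λ : En n → ℝ} {ρ : ℝ} : Resc Λ ρ (fun _ _ => (0:ℂ)) := by
  intro N
  refine ⟨0, fun x₀ ξ₀ => ?_⟩
  have key : rescaled (fun _ _ => (0:ℂ)) Λ ρ ξ₀ = fun _ => (0:ℂ) := rfl
  rw [key, iteratedFDeriv_zero_fun]
  simp

lemma Resc.add {Λ : En n → ℝ} {ρ : ℝ} {τ₁ τ₂ : En n → En n → ℂ}
    (h1s : ContDiff ℝ (⊤:ℕ∞) (fun q : En n × En n => τ₁ q.1 q.2))
    (h2s : ContDiff ℝ (⊤:ℕ∞) (fun q : En n × En n => τ₂ q.1 q.2))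
    (h1 : Resc Λ ρ τ₁) (h2 : Resc Λ ρ τ₂) :
    Resc Λ ρ (fun x ξ => τ₁ x ξ + τ₂ x ξ) := by
  intro N
  obtain ⟨C₁, hC₁⟩ := h1 N
  obtain ⟨C₂, hC₂⟩ := h2 N
  refine ⟨C₁ + C₂, ?_⟩
  intro x₀ ξ₀
  have key : rescaled (fun x ξ => τ₁ x ξ + τ₂ x ξ) Λ ρ ξ₀
      = rescaled τ₁ Λ ρ ξ₀ + rescaled τ₂ Λ ρ ξ₀ := rfl
  rw [key, iteratedFDeriv_add_apply
    ((contDiff_rescaled h1s Λ ρ ξ₀).of_le (by exact_mod_cast le_top)).contDiffAt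
    ((contDiff_rescaled h2s Λ ρ ξ₀).of_le (by exact_mod_cast le_top)).contDiffAt]
  exact (norm_add_le _ _).trans (add_le_add (hC₁ x₀ ξ₀) (hC₂ x₀ ξ₀))

-- PART 8a: pd calculus
lemma pd_add {f g : En n → ℂ} (hf : ContDiff ℝ (⊤:ℕ∞) f) (hg : ContDiff ℝ (⊤:ℕ∞) g)
    (i : Fin n) :
    pd i (fun ξ => f ξ + g ξ) = fun ξ => pd i f ξ + pd i g ξ := by
  funext ξ
  have h := fderiv_fun_add (𝕜 := ℝ)
    (hf.differentiable (by simp) ξ)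
    (hg.differentiable (by simp) ξ)
  show fderiv ℝ (fun ξ => f ξ + g ξ) ξ (EuclideanSpace.single i 1) = _
  rw [h]
  rfl

lemma pd_mul {f g : En n → ℂ} (hf : ContDiff ℝ (⊤:ℕ∞) f) (hg : ContDiff ℝ (⊤:ℕ∞) g)
    (i : Fin n) :
    pd i (fun ξ => f ξ * g ξ) = fun ξ => f ξ * pd i g ξ + g ξ * pd i f ξ := by
  funext ξ
  have h := fderiv_fun_mul (𝕜 := ℝ)
    (hf.differentiable (by simp) ξ)
    (hg.differentiable (by simp) ξ)
  show fderiv ℝ (fun ξ => f ξ * g ξ) ξ (EuclideanSpace.single i 1) = _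
  rw [h]
  simp only [ContinuousLinearMap.add_apply, ContinuousLinearMap.coe_smul', Pi.smul_apply,
    smul_eq_mul]
  rfl

lemma pd_clm {f : En n → ℂ} (hf : ContDiff ℝ (⊤:ℕ∞) f) (L : ℂ →L[ℝ] ℂ) (i : Fin n) :
    pd i (fun ξ => L (f ξ)) = fun ξ => L (pd i f ξ) := by
  funext ξ
  have h := (L.hasFDerivAt.comp ξ
    ((hf.differentiable (by simp) ξ).hasFDerivAt)).fderiv
  show fderiv ℝ (⇑L ∘ f) ξ (EuclideanSpace.single i 1) = _
  rw [h]
  rfl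

def Pc (δ : Fin n → ℕ) : En n → ℝ := fun ξ => ∏ j, ξ j ^ δ j

lemma contDiff_coord (j : Fin n) : ContDiff ℝ (⊤:ℕ∞) (fun ξ : En n => ξ j) := by
  have h : (fun ξ : En n => ξ j) = fun ξ : En n => (EuclideanSpace.proj (𝕜 := ℝ) j) ξ := by
    funext ξ
    simp
  rw [h]
  exact (EuclideanSpace.proj (𝕜 := ℝ) j).contDiff

lemma contDiff_prod_pow (δ : Fin n → ℕ) (s : Finset (Fin n)) :
    ContDiff ℝ (⊤:ℕ∞) (fun ξ : En n => ∏ j ∈ s, ξ j ^ δ j) := by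
  induction s using Finset.induction with
  | empty => simpa using contDiff_const (c := (1:ℝ))
  | @insert a s ha ih =>
    have h : (fun ξ : En n => ∏ j ∈ insert a s, ξ j ^ δ j)
        = fun ξ : En n => ξ a ^ δ a * ∏ j ∈ s, ξ j ^ δ j := by
      funext ξ
      rw [Finset.prod_insert ha]
    rw [h]
    exact ((contDiff_coord a).pow (δ a)).mul ih

lemma contDiff_Pc (δ : Fin n → ℕ) : ContDiff ℝ (⊤:ℕ∞) (Pc δ) := contDiff_prod_pow δ _

lemma contDiff_PcC (δ : Fin n → ℕ) :
    ContDiff ℝ (⊤:ℕ∞) (fun ξ : En n => ((Pc δ ξ : ℝ) : ℂ)) :=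
  Complex.ofRealCLM.contDiff.comp (contDiff_Pc δ)

lemma Pc_single (i : Fin n) (ξ : En n) : Pc (eI i) ξ = ξ i := by
  rw [Pc]
  have h : ∀ j : Fin n, ξ j ^ (eI i j) = if j = i then ξ j else 1 := by
    intro j
    by_cases hj : j = i <;> simp [eI, hj]
  rw [Finset.prod_congr rfl (fun j _ => h j), Finset.prod_ite_eq' Finset.univ i (fun j => ξ j)]
  simp

lemma Pc_add_single (δ : Fin n → ℕ) (i : Fin n) (ξ : En n) :
    Pc (δ + eI i) ξ = ξ i * Pc δ ξ := by
  have h : Pc (δ + eI i) ξ = Pc δ ξ * Pc (eI i) ξ := by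
    rw [Pc, Pc, Pc, ← Finset.prod_mul_distrib]
    exact Finset.prod_congr rfl (fun j _ => by rw [Pi.add_apply, pow_add])
  rw [h, Pc_single]
  ring

lemma pd_Pc_zero (δ : Fin n → ℕ) (i : Fin n) (hδi : δ i = 0) :
    pd i (fun ξ : En n => ((Pc δ ξ : ℝ) : ℂ)) = fun _ => 0 := by
  set prj : En n →L[ℝ] En n :=
    ContinuousLinearMap.id ℝ (En n)
      - (EuclideanSpace.proj (𝕜 := ℝ) i).smulRight (EuclideanSpace.single i 1) with hprj
  have hprj_apply : ∀ ξ : En n, prj ξ = ξ - (ξ i) • EuclideanSpace.single i 1 := by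
    intro ξ
    simp [hprj, ContinuousLinearMap.smulRight_apply]
  have hprj_coord : ∀ (ξ : En n) (j : Fin n), j ≠ i → (prj ξ) j = ξ j := by
    intro ξ j hj
    rw [hprj_apply]
    simp [EuclideanSpace.single_apply, hj]
  have hcomp : (fun ξ : En n => ((Pc δ ξ : ℝ) : ℂ))
      = fun ξ : En n => ((Pc δ (prj ξ) : ℝ) : ℂ) := by
    funext ξ
    have : Pc δ (prj ξ) = Pc δ ξ := by
      rw [Pc, Pc]
      apply Finset.prod_congr rfl
      intro j _
      by_cases hj : j = i
      · subst hj
        rw [hδi, pow_zero, pow_zero]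
      · rw [hprj_coord ξ j hj]
    rw [this]
  have hprj_single : prj (EuclideanSpace.single i 1) = 0 := by
    rw [hprj_apply]
    simp [EuclideanSpace.single_apply]
  funext ξ
  rw [hcomp]
  have hdiff : DifferentiableAt ℝ (fun ξ : En n => ((Pc δ ξ : ℝ) : ℂ)) (prj ξ) :=
    (contDiff_PcC δ).differentiable (by simp) (prj ξ)
  have hchain := (hdiff.hasFDerivAt.comp ξ (prj.hasFDerivAt (x := ξ))).fderiv
  show fderiv ℝ ((fun ξ : En n => ((Pc δ ξ : ℝ) : ℂ)) ∘ ⇑prj) ξ (EuclideanSpace.single i 1) = 0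
  rw [hchain]
  simp [hprj_single]

def TT (τ : En n → En n → ℂ) (δ : Fin n → ℕ) : En n → En n → ℂ :=
  fun x ξ => ((Pc δ ξ : ℝ) : ℂ) * mpd δ (τ x) ξ

lemma contDiff_TT {τ : En n → En n → ℂ}
    (hτ : ContDiff ℝ (⊤:ℕ∞) (fun q : En n × En n => τ q.1 q.2)) (δ : Fin n → ℕ) :
    ContDiff ℝ (⊤:ℕ∞) (fun q : En n × En n => TT τ δ q.1 q.2) :=
  ((contDiff_PcC δ).comp contDiff_snd).mul (contDiff_uncurried_mpd hτ δ)

def Ui (i : Fin n) (T : En n → En n → ℂ) : En n → En n → ℂ :=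
  fun x ξ => ((ξ i : ℝ) : ℂ) * pd i (T x) ξ

lemma Ustep {τ : En n → En n → ℂ}
    (hτ : ContDiff ℝ (⊤:ℕ∞) (fun q : En n × En n => τ q.1 q.2))
    (δ : Fin n → ℕ) (i : Fin n) (hδi : δ i = 0) :
    Ui i (TT τ δ) = TT τ (δ + eI i) := by
  funext x ξ
  have hpart : ContDiff ℝ (⊤:ℕ∞) (τ x) := contDiff_partial_right hτ x
  have h1 : pd i (TT τ δ x) ξ
      = ((Pc δ ξ : ℝ) : ℂ) * pd i (mpd δ (τ x)) ξ
          + mpd δ (τ x) ξ * pd i (fun η : En n => ((Pc δ η : ℝ) : ℂ)) ξ := by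
    have := pd_mul (f := fun η : En n => ((Pc δ η : ℝ) : ℂ)) (g := mpd δ (τ x))
      (contDiff_PcC δ) (contDiff_mpd hpart δ) i
    exact congrFun this ξ
  show ((ξ i : ℝ) : ℂ) * pd i (TT τ δ x) ξ = _
  rw [h1, pd_Pc_zero δ i hδi]
  rw [← pd_mpd hpart δ i]
  show ((ξ i : ℝ) : ℂ) * (((Pc δ ξ : ℝ) : ℂ) * mpd (δ + eI i) (τ x) ξ + mpd δ (τ x) ξ * 0)
      = ((Pc (δ + eI i) ξ : ℝ) : ℂ) * mpd (δ + eI i) (τ x) ξ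
  rw [Pc_add_single δ i ξ]
  push_cast
  ring

def reCL : ℂ →L[ℝ] ℂ := Complex.ofRealCLM.comp Complex.reCLM
def imCL : ℂ →L[ℝ] ℂ := Complex.ofRealCLM.comp Complex.imCLM

lemma UBase {τ : En n → En n → ℂ}
    (hτ : ContDiff ℝ (⊤:ℕ∞) (fun q : En n × En n => τ q.1 q.2))
    {G : ℂ → ℂ} (hG : ContDiff ℝ (⊤:ℕ∞) G) (i : Fin n) :
    Ui i (fun x ξ => G (τ x ξ))
      = fun x ξ => dirD 1 G (τ x ξ) * reCL (TT τ (eI i) x ξ)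
          + dirD Complex.I G (τ x ξ) * imCL (TT τ (eI i) x ξ) := by
  funext x ξ
  have hpart : ContDiff ℝ (⊤:ℕ∞) (τ x) := contDiff_partial_right hτ x
  have hdG : DifferentiableAt ℝ G (τ x ξ) :=
    hG.differentiable (by simp) (τ x ξ)
  have hdτ : DifferentiableAt ℝ (τ x) ξ :=
    hpart.differentiable (by simp) ξ
  have hchain : fderiv ℝ (G ∘ (τ x)) ξ = (fderiv ℝ G (τ x ξ)).comp (fderiv ℝ (τ x) ξ) :=
    fderiv_comp ξ hdG hdτ
  have h0 : pd i (fun η => G (τ x η)) ξ = fderiv ℝ G (τ x ξ) (pd i (τ x) ξ) := by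
    show fderiv ℝ (G ∘ (τ x)) ξ (EuclideanSpace.single i 1) = _
    rw [hchain]
    rfl
  set w := pd i (τ x) ξ with hwdef
  have hsplit : w = w.re • (1:ℂ) + w.im • Complex.I := by
    rw [Complex.real_smul, Complex.real_smul, mul_one]
    exact (Complex.re_add_im w).symm
  have hw : fderiv ℝ G (τ x ξ) w
      = w.re • dirD 1 G (τ x ξ) + w.im • dirD Complex.I G (τ x ξ) := by
    conv_lhs => rw [hsplit]
    rw [map_add, _root_.map_smul, _root_.map_smul]
    rfl
  have hTT : TT τ (eI i) x ξ = ((ξ i : ℝ) : ℂ) * w := by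
    show ((Pc (eI i) ξ : ℝ) : ℂ) * mpd (eI i) (τ x) ξ = _
    rw [mpd_single hpart i, Pc_single]
  show ((ξ i : ℝ) : ℂ) * pd i (fun η => G (τ x η)) ξ = _
  rw [h0, hw, hTT]
  have hre : reCL (((ξ i : ℝ) : ℂ) * w) = ((ξ i * w.re : ℝ) : ℂ) := by
    simp [reCL]
  have him : imCL (((ξ i : ℝ) : ℂ) * w) = ((ξ i * w.im : ℝ) : ℂ) := by
    simp [imCL]
  rw [hre, him]
  simp only [Complex.real_smul]
  push_cast
  ring

-- PART 8b: the inductive class of good terms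
inductive GT (σ : En n → En n → ℂ) (s : Finset (Fin n)) : (En n → En n → ℂ) → Prop where
  | base (G : ℂ → ℂ) (hG : ContDiff ℝ (⊤:ℕ∞) G) : GT σ s (fun x ξ => G (σ x ξ))
  | mul (T : En n → En n → ℂ) (δ : Fin n → ℕ) (L : ℂ →L[ℝ] ℂ) (hT : GT σ s T)
      (hδ1 : ∀ i, δ i ≤ 1) (hδs : ∀ i, δ i ≠ 0 → i ∈ s) :
      GT σ s (fun x ξ => T x ξ * L (TT σ δ x ξ))

lemma GT.mono {σ : En n → En n → ℂ} {s s' : Finset (Fin n)} {T : En n → En n → ℂ}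
    (hss : s ⊆ s') (h : GT σ s T) : GT σ s' T := by
  induction h with
  | base G hG => exact .base G hG
  | mul T δ L hT hδ1 hδs ih => exact .mul T δ L ih hδ1 (fun i hi => hss (hδs i hi))

lemma GT.smooth {σ : En n → En n → ℂ}
    (hσs : ContDiff ℝ (⊤:ℕ∞) (fun q : En n × En n => σ q.1 q.2))
    {s : Finset (Fin n)} {T : En n → En n → ℂ} (h : GT σ s T) :
    ContDiff ℝ (⊤:ℕ∞) (fun q : En n × En n => T q.1 q.2) := by
  induction h with
  | base G hG => exact hG.comp hσs
  | mul T δ L hT hδ1 hδs ih => exact ih.mul (L.contDiff.comp (contDiff_TT hσs δ))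

lemma GT.resc {Λ : En n → ℝ} {ρ : ℝ} {σ : En n → En n → ℂ}
    (hσs : ContDiff ℝ (⊤:ℕ∞) (fun q : En n × En n => σ q.1 q.2))
    (hσR : Resc Λ ρ σ)
    (hTTR : ∀ δ : Fin n → ℕ, (∀ i, δ i ≤ 1) → Resc Λ ρ (TT σ δ))
    {s : Finset (Fin n)} {T : En n → En n → ℂ} (h : GT σ s T) :
    Resc Λ ρ T := by
  induction h with
  | base G hG => exact Resc.comp hσs hσR hG
  | mul T δ L hT hδ1 hδs ih =>
    exact Resc.mul (hT.smooth hσs) (L.contDiff.comp (contDiff_TT hσs δ)) ih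
      (Resc.clm L (contDiff_TT hσs δ) (hTTR δ hδ1))

-- sums of lists of functions
lemma contDiff_list_sum1 (Ls : List (En n → ℂ))
    (h : ∀ f ∈ Ls, ContDiff ℝ (⊤:ℕ∞) f) :
    ContDiff ℝ (⊤:ℕ∞) (fun η => (Ls.map (fun f => f η)).sum) := by
  induction Ls with
  | nil => simpa using contDiff_const (c := (0:ℂ))
  | cons f t ih =>
    have h1 : (fun η => (((f :: t).map (fun f => f η)).sum))
        = fun η => f η + ((t.map (fun f => f η)).sum) := rfl
    rw [h1]
    exact (h f (List.mem_cons_self)).add (ih (fun g hg => h g (List.mem_cons_of_mem f hg)))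

lemma contDiff_list_sum2 (Ls : List (En n → En n → ℂ))
    (h : ∀ T ∈ Ls, ContDiff ℝ (⊤:ℕ∞) (fun q : En n × En n => T q.1 q.2)) :
    ContDiff ℝ (⊤:ℕ∞) (fun q : En n × En n => (Ls.map (fun T => T q.1 q.2)).sum) := by
  induction Ls with
  | nil => simpa using contDiff_const (c := (0:ℂ))
  | cons f t ih =>
    have h1 : (fun q : En n × En n => (((f :: t).map (fun T => T q.1 q.2)).sum))
        = fun q : En n × En n => f q.1 q.2 + ((t.map (fun T => T q.1 q.2)).sum) := rfl
    rw [h1]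
    exact (h f (List.mem_cons_self)).add (ih (fun g hg => h g (List.mem_cons_of_mem f hg)))

lemma Resc_list_sum {Λ : En n → ℝ} {ρ : ℝ} (Ls : List (En n → En n → ℂ))
    (hs : ∀ T ∈ Ls, ContDiff ℝ (⊤:ℕ∞) (fun q : En n × En n => T q.1 q.2))
    (hr : ∀ T ∈ Ls, Resc Λ ρ T) :
    Resc Λ ρ (fun x ξ => (Ls.map (fun T => T x ξ)).sum) := by
  induction Ls with
  | nil => exact Resc.zero
  | cons f t ih =>
    have h1 : (fun (x ξ : En n) => (((f :: t).map (fun T => T x ξ)).sum))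
        = fun x ξ => f x ξ + ((t.map (fun T => T x ξ)).sum) := rfl
    rw [h1]
    exact Resc.add (hs f (List.mem_cons_self))
      (contDiff_list_sum2 t (fun g hg => hs g (List.mem_cons_of_mem f hg)))
      (hr f (List.mem_cons_self))
      (ih (fun g hg => hs g (List.mem_cons_of_mem f hg))
          (fun g hg => hr g (List.mem_cons_of_mem f hg)))

lemma pd_list_sum (Ls : List (En n → ℂ)) (h : ∀ f ∈ Ls, ContDiff ℝ (⊤:ℕ∞) f) (i : Fin n) :
    pd i (fun η => (Ls.map (fun f => f η)).sum) = fun η => (Ls.map (fun f => pd i f η)).sum := by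
  induction Ls with
  | nil =>
    have h1 : (fun η : En n => ((([]:List (En n → ℂ)).map (fun f => f η)).sum))
        = fun _ : En n => (0:ℂ) := rfl
    rw [h1]
    funext η
    show fderiv ℝ (fun _ : En n => (0:ℂ)) η (EuclideanSpace.single i 1) = _
    rw [fderiv_fun_const]
    rfl
  | cons f t ih =>
    have h1 : (fun η => (((f :: t).map (fun f => f η)).sum))
        = fun η => f η + ((t.map (fun f => f η)).sum) := rfl
    rw [h1, pd_add (h f (List.mem_cons_self))
      (contDiff_list_sum1 t (fun g hg => h g (List.mem_cons_of_mem f hg))) i,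
      ih (fun g hg => h g (List.mem_cons_of_mem f hg))]
    rfl

lemma GT_U {σ : En n → En n → ℂ}
    (hσs : ContDiff ℝ (⊤:ℕ∞) (fun q : En n × En n => σ q.1 q.2))
    {s : Finset (Fin n)} {i : Fin n} (hi : i ∉ s)
    {T : En n → En n → ℂ} (hT : GT σ s T) :
    ∃ Ls : List (En n → En n → ℂ), (∀ T' ∈ Ls, GT σ (insert i s) T') ∧
      ∀ x ξ : En n, Ui i T x ξ = (Ls.map (fun T' => T' x ξ)).sum := by
  induction hT with
  | base G hG =>
    refine ⟨[fun x ξ => dirD 1 G (σ x ξ) * reCL (TT σ (eI i) x ξ),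
             fun x ξ => dirD Complex.I G (σ x ξ) * imCL (TT σ (eI i) x ξ)], ?_, ?_⟩
    · intro T' hT'
      have heI1 : ∀ j, eI i j ≤ 1 := by
        intro j
        by_cases hj : j = i <;> simp [eI, hj]
      have heIs : ∀ j, eI i j ≠ 0 → j ∈ insert i s := by
        intro j hj
        by_cases hji : j = i
        · subst hji; exact Finset.mem_insert_self j s
        · exfalso; apply hj; simp [eI, hji]
      rcases List.mem_cons.mp hT' with h | h
      · rw [h]
        exact GT.mul _ (eI i) reCL (GT.base (dirD 1 G) (contDiff_dirD hG 1)) heI1 heIs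
      rcases List.mem_cons.mp h with h2 | h2
      · rw [h2]
        exact GT.mul _ (eI i) imCL (GT.base (dirD Complex.I G) (contDiff_dirD hG Complex.I))
          heI1 heIs
      · exact absurd h2 (List.not_mem_nil)
    · intro x ξ
      have h := congrFun (congrFun (UBase hσs hG i) x) ξ
      rw [h]
      simp [List.sum_cons]
  | mul T δ L hT hδ1 hδs ih =>
    obtain ⟨Ls, hLs, hsum⟩ := ih
    have hδi : δ i = 0 := by
      by_contra h
      exact hi (hδs i h)
    refine ⟨Ls.map (fun T' => fun x ξ => T' x ξ * L (TT σ δ x ξ))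
        ++ [fun x ξ => T x ξ * L (TT σ (δ + eI i) x ξ)], ?_, ?_⟩
    · intro T' hT'
      rcases List.mem_append.mp hT' with h | h
      · obtain ⟨T'', hT'', rfl⟩ := List.mem_map.mp h
        exact GT.mul T'' δ L (hLs T'' hT'') hδ1
          (fun j hj => Finset.mem_insert_of_mem (hδs j hj))
      · have hT'eq : T' = fun x ξ => T x ξ * L (TT σ (δ + eI i) x ξ) := by simpa using h
        rw [hT'eq]
        have hδ1' : ∀ j, (δ + eI i) j ≤ 1 := by
          intro j
          by_cases hj : j = i
          · subst hj; simp [Pi.add_apply, eI, hδi]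
          · simpa [Pi.add_apply, eI, hj] using hδ1 j
        have hδs' : ∀ j, (δ + eI i) j ≠ 0 → j ∈ insert i s := by
          intro j hj
          by_cases hji : j = i
          · subst hji; exact Finset.mem_insert_self j s
          · apply Finset.mem_insert_of_mem
            apply hδs j
            simpa [Pi.add_apply, eI, hji] using hj
        exact GT.mul T (δ + eI i) L (hT.mono (Finset.subset_insert i s)) hδ1' hδs'
    · intro x ξ
      have hTsm : ContDiff ℝ (⊤:ℕ∞) (T x) := contDiff_partial_right (hT.smooth hσs) x
      have hAsm : ContDiff ℝ (⊤:ℕ∞) (fun η => L (TT σ δ x η)) :=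
        contDiff_partial_right (L.contDiff.comp (contDiff_TT hσs δ)) x
      have hmul := congrFun (pd_mul hTsm hAsm i) ξ
      have hclm := congrFun (pd_clm (contDiff_partial_right (contDiff_TT hσs δ) x) L i) ξ
      have hUTT := congrFun (congrFun (Ustep hσs δ i hδi) x) ξ
      -- compute
      show ((ξ i : ℝ) : ℂ) * pd i (fun η => T x η * L (TT σ δ x η)) ξ = _
      rw [hmul, hclm]
      have hLsmul : ∀ z : ℂ, ((ξ i : ℝ) : ℂ) * L z = L (((ξ i : ℝ) : ℂ) * z) := by
        intro z
        rw [← Complex.real_smul, ← Complex.real_smul, _root_.map_smul]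
      have hre : ((ξ i : ℝ) : ℂ) * (T x ξ * L (pd i (TT σ δ x) ξ)
            + L (TT σ δ x ξ) * pd i (T x) ξ)
          = T x ξ * L (TT σ (δ + eI i) x ξ)
            + (Ui i T x ξ) * L (TT σ δ x ξ) := by
        have h1 : ((ξ i : ℝ) : ℂ) * L (pd i (TT σ δ x) ξ) = L (TT σ (δ + eI i) x ξ) := by
          rw [hLsmul]
          exact congrArg L hUTT
        calc ((ξ i : ℝ) : ℂ) * (T x ξ * L (pd i (TT σ δ x) ξ)
              + L (TT σ δ x ξ) * pd i (T x) ξ)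
            = T x ξ * (((ξ i : ℝ) : ℂ) * L (pd i (TT σ δ x) ξ))
              + (((ξ i : ℝ) : ℂ) * pd i (T x) ξ) * L (TT σ δ x ξ) := by ring
          _ = _ := by rw [h1]; rfl
      rw [hre, hsum x ξ]
      rw [List.map_append, List.sum_append, List.map_map]
      have hmm : (Ls.map ((fun T' => T' x ξ) ∘ (fun T' => fun x ξ => T' x ξ * L (TT σ δ x ξ)))).sum
          = (Ls.map (fun T' => T' x ξ)).sum * L (TT σ δ x ξ) := by
        rw [← List.sum_map_mul_right]
        rfl
      rw [hmm]
      simp [add_comm]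

-- PART 8c: decomposition
def ind (s : Finset (Fin n)) : Fin n → ℕ := fun j => if j ∈ s then 1 else 0

lemma ind_insert {i : Fin n} {s : Finset (Fin n)} (hi : i ∉ s) :
    ind (insert i s) = ind s + eI i := by
  funext j
  by_cases hj : j = i
  · subst hj
    simp [ind, eI, hi]
  · simp [ind, eI, hj, Finset.mem_insert]

lemma GT_U_list {σ : En n → En n → ℂ}
    (hσs : ContDiff ℝ (⊤:ℕ∞) (fun q : En n × En n => σ q.1 q.2))
    {s : Finset (Fin n)} {i : Fin n} (hi : i ∉ s)
    (Ls : List (En n → En n → ℂ)) (h : ∀ T ∈ Ls, GT σ s T) :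
    ∃ Ls' : List (En n → En n → ℂ), (∀ T ∈ Ls', GT σ (insert i s) T) ∧
      ∀ x ξ : En n, (Ls.map (fun T => Ui i T x ξ)).sum = (Ls'.map (fun T => T x ξ)).sum := by
  induction Ls with
  | nil => exact ⟨[], by simp, by simp⟩
  | cons T t ih =>
    obtain ⟨L1, hL1, hs1⟩ := GT_U hσs hi (h T (List.mem_cons_self))
    obtain ⟨L2, hL2, hs2⟩ := ih (fun g hg => h g (List.mem_cons_of_mem T hg))
    refine ⟨L1 ++ L2, ?_, ?_⟩
    · intro T' hT'
      rcases List.mem_append.mp hT' with h' | h'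
      · exact hL1 _ h'
      · exact hL2 _ h'
    · intro x ξ
      rw [List.map_cons, List.sum_cons, hs1 x ξ, hs2 x ξ, List.map_append, List.sum_append]

lemma decomposition {σ : En n → En n → ℂ}
    (hσs : ContDiff ℝ (⊤:ℕ∞) (fun q : En n × En n => σ q.1 q.2))
    {F : ℂ → ℂ} (hF : ContDiff ℝ (⊤:ℕ∞) F) (s : Finset (Fin n)) :
    ∃ Ls : List (En n → En n → ℂ), (∀ T ∈ Ls, GT σ s T) ∧
      ∀ x ξ : En n, TT (fun x ξ => F (σ x ξ)) (ind s) x ξ = (Ls.map (fun T => T x ξ)).sum := by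
  induction s using Finset.induction with
  | empty =>
    refine ⟨[fun x ξ => F (σ x ξ)], ?_, ?_⟩
    · intro T' hT'
      have hT'eq : T' = fun x ξ => F (σ x ξ) := by simpa using hT'
      rw [hT'eq]
      exact GT.base F hF
    · intro x ξ
      show ((Pc (ind ∅) ξ : ℝ) : ℂ) * mpd (ind ∅) ((fun x ξ => F (σ x ξ)) x) ξ = _
      have hind : ind (∅ : Finset (Fin n)) = 0 := by funext j; simp [ind]
      rw [hind, mpd_zero]
      have hPc : Pc (0 : Fin n → ℕ) ξ = 1 := by simp [Pc]
      rw [hPc]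
      simp
  | @insert i s hi ih =>
    obtain ⟨Ls, hLs, hsum⟩ := ih
    have hFσ : ContDiff ℝ (⊤:ℕ∞) (fun q : En n × En n => F (σ q.1 q.2)) := hF.comp hσs
    have hindi : ind s i = 0 := by simp [ind, hi]
    have hstep := Ustep (τ := fun x ξ => F (σ x ξ)) hFσ (ind s) i hindi
    obtain ⟨Ls', hLs', hsum'⟩ := GT_U_list hσs hi Ls hLs
    refine ⟨Ls', hLs', ?_⟩
    intro x ξ
    have e1 : TT (fun x ξ => F (σ x ξ)) (ind (insert i s)) x ξ
        = Ui i (TT (fun x ξ => F (σ x ξ)) (ind s)) x ξ := by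
      rw [ind_insert hi]
      exact (congrFun (congrFun hstep x) ξ).symm
    have hsm1 : ∀ f ∈ Ls.map (fun T => T x), ContDiff ℝ (⊤:ℕ∞) f := by
      intro f hf
      obtain ⟨T, hT, rfl⟩ := List.mem_map.mp hf
      exact contDiff_partial_right ((hLs T hT).smooth hσs) x
    have e2 : Ui i (TT (fun x ξ => F (σ x ξ)) (ind s)) x ξ
        = (Ls.map (fun T => Ui i T x ξ)).sum := by
      show ((ξ i : ℝ) : ℂ) * pd i (TT (fun x ξ => F (σ x ξ)) (ind s) x) ξ = _
      have hfx : (TT (fun x ξ => F (σ x ξ)) (ind s) x)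
          = fun η => (((Ls.map (fun T => T x)).map (fun f => f η)).sum) := by
        funext η
        rw [List.map_map]
        exact hsum x η
      rw [hfx, pd_list_sum (Ls.map (fun T => T x)) hsm1 i]
      rw [← List.sum_map_mul_left, List.map_map]
      rfl
    rw [e1, e2, hsum' x ξ]

lemma TT_eq_hyp (τ : En n → En n → ℂ) (δ : Fin n → ℕ) :
    (fun (x ξ : En n) => ((∏ i, ξ i ^ δ i : ℝ) : ℂ) * mixpd 0 δ τ x ξ) = TT τ δ := by
  funext x ξ
  show _ * mpd 0 (fun y => mpd δ (τ y) ξ) x = _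
  rw [mpd_zero]
  rfl

end CompMClassAux
end

/-- if `σ ∈ M^0_{ρ,Λ}` and `F : ℂ → ℂ` is smooth, then `F ∘ σ ∈ M^0_{ρ,Λ}`. -/
theorem comp_MClass_zero (n : ℕ) (hn : 1 ≤ n) (Λ : En n → ℝ) (μ₀ μ₁ μ ρ : ℝ)
    (hw : IsWeight n Λ μ₀ μ₁ μ) (hρ : 0 < ρ) (hρμ : ρ ≤ 1 / μ)
    (σ : En n → En n → ℂ) (hσ : MClass Λ ρ 0 σ)
    (F : ℂ → ℂ) (hF : ContDiff ℝ (⊤ : ℕ∞) F) :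
    MClass Λ ρ 0 (fun x ξ => F (σ x ξ)) := by
  classical
  intro γ hγ
  -- extract data about σ from the hypothesis
  have hσσ := hσ 0 (fun i => by simp)
  rw [CompMClassAux.TT_eq_hyp σ 0] at hσσ
  have hTT0 : CompMClassAux.TT σ 0 = σ := by
    funext x ξ
    show ((CompMClassAux.Pc 0 ξ : ℝ) : ℂ) * mpd 0 (σ x) ξ = σ x ξ
    rw [CompMClassAux.mpd_zero]
    simp [CompMClassAux.Pc]
  rw [hTT0] at hσσ
  have hσunc : ContDiff ℝ (⊤:ℕ∞) (fun q : En n × En n => σ q.1 q.2) := hσσ.1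
  have hσR : CompMClassAux.Resc Λ ρ σ :=
    CompMClassAux.bounds_to_resc hw.pos hσunc hσσ.2
  have hTTR : ∀ δ : Fin n → ℕ, (∀ i, δ i ≤ 1) → CompMClassAux.Resc Λ ρ (CompMClassAux.TT σ δ) := by
    intro δ hδ
    have h := hσ δ hδ
    rw [CompMClassAux.TT_eq_hyp σ δ] at h
    exact CompMClassAux.bounds_to_resc hw.pos h.1 h.2
  -- rewrite the goal
  rw [CompMClassAux.TT_eq_hyp (fun x ξ => F (σ x ξ)) γ]
  set s : Finset (Fin n) := Finset.univ.filter (fun j => γ j = 1) with hs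
  have hγs : γ = CompMClassAux.ind s := by
    funext j
    rcases Nat.le_one_iff_eq_zero_or_eq_one.mp (hγ j) with h | h <;>
      simp [CompMClassAux.ind, hs, Finset.mem_filter, h]
  rw [hγs]
  obtain ⟨Ls, hLs, hsum⟩ := CompMClassAux.decomposition hσunc hF s
  have hWeq : CompMClassAux.TT (fun x ξ => F (σ x ξ)) (CompMClassAux.ind s)
      = fun x ξ => (Ls.map (fun T => T x ξ)).sum := by
    funext x ξ
    exact hsum x ξ
  constructor
  · exact CompMClassAux.contDiff_TT (hF.comp hσunc) (CompMClassAux.ind s)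
  · intro α β
    have hsm : ∀ T ∈ Ls, ContDiff ℝ (⊤:ℕ∞) (fun q : En n × En n => T q.1 q.2) :=
      fun T hT => (hLs T hT).smooth hσunc
    have hR0 : CompMClassAux.Resc Λ ρ (fun x ξ => (Ls.map (fun T => T x ξ)).sum) :=
      CompMClassAux.Resc_list_sum Ls hsm
        (fun T hT => (hLs T hT).resc hσunc hσR hTTR)
    have hR : CompMClassAux.Resc Λ ρ
        (CompMClassAux.TT (fun x ξ => F (σ x ξ)) (CompMClassAux.ind s)) := by
      rw [hWeq]
      exact hR0
    exact CompMClassAux.resc_to_bounds hw.pos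
      (CompMClassAux.contDiff_TT (hF.comp hσunc) (CompMClassAux.ind s)) hR α β
end

section
/- Let σ ∈ S^{0,0}_{ρ,Λ} and let F : ℂ → ℂ be a C^∞ function (smooth as a function of two real variables). Then F ∘ σ ∈ S^{0,0}_{ρ,Λ}; that is, for all multi-indices α and β there exists a constant C_{α,β} > 0 such that |(∂_x^α ∂_ξ^β (F ∘ σ))(x,ξ)| ≤ C_{α,β} Λ(x)^{−ρ|α|} Λ(ξ)^{−ρ|β|} for all x, ξ ∈ ℝⁿ. -/
open MeasureTheory Real Filter
open scoped RealInnerProductSpace BigOperators ENNReal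

noncomputable section Aux1
variable {n : ℕ}

local notation "E" => En n

lemma topsucc : ((⊤ : ℕ∞) : WithTop ℕ∞) + 1 ≤ ((⊤ : ℕ∞) : WithTop ℕ∞) := le_of_eq (by rfl)

lemma pd_contDiff {g : E → ℂ} (i : Fin n) (hg : ContDiff ℝ (⊤ : ℕ∞) g) :
    ContDiff ℝ (⊤ : ℕ∞) (pd i g) :=
  (hg.fderiv_right topsucc).clm_apply contDiff_const

lemma pd_add {f g : E → ℂ} (i : Fin n) (hf : Differentiable ℝ f) (hg : Differentiable ℝ g) :
    pd i (fun x => f x + g x) = fun x => pd i f x + pd i g x := by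
  funext x
  simp only [pd, fderiv_fun_add (hf x) (hg x)]
  rfl

lemma smooth_diff {g : E → ℂ} (hg : ContDiff ℝ (⊤ : ℕ∞) g) : Differentiable ℝ g :=
  hg.differentiable (by simp)

lemma pd_comm {g : E → ℂ} (i j : Fin n) (hg : ContDiff ℝ (⊤ : ℕ∞) g) :
    pd i (pd j g) = pd j (pd i g) := by
  funext x
  have hd : ∀ y, HasFDerivAt g (fderiv ℝ g y) y := fun y =>
    ((smooth_diff hg) y).hasFDerivAt
  have hd2 : DifferentiableAt ℝ (fderiv ℝ g) x :=
    ((hg.fderiv_right topsucc).differentiable (by simp)) x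
  have hsym := second_derivative_symmetric hd hd2.hasFDerivAt
    (EuclideanSpace.single i 1) (EuclideanSpace.single j 1)
  have e1 : ∀ (k m : Fin n), pd k (pd m g) x
      = fderiv ℝ (fderiv ℝ g) x (EuclideanSpace.single k 1) (EuclideanSpace.single m 1) := by
    intro k m
    have : pd m g = fun y => (fderiv ℝ g y) ((fun _ => EuclideanSpace.single m 1) y) := rfl
    rw [pd, this, fderiv_clm_apply hd2 (differentiableAt_const _)]
    simp
  rw [e1, e1, hsym]

lemma pd_zero (i : Fin n) : pd i (fun _ : E => (0 : ℂ)) = fun _ => 0 := by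
  funext x; simp [pd, fderiv_const]

end Aux1
noncomputable section Aux2
variable {n : ℕ}

local notation "E" => En n

/-- Iterated partial derivatives along a list of directions. -/
def Pl (l : List (Fin n)) (g : E → ℂ) : E → ℂ := l.foldr (fun i h => pd i h) g

@[simp] lemma Pl_nil (g : E → ℂ) : Pl [] g = g := rfl
@[simp] lemma Pl_cons (i : Fin n) (l : List (Fin n)) (g : E → ℂ) :
    Pl (i :: l) g = pd i (Pl l g) := rfl

lemma Pl_append (l₁ l₂ : List (Fin n)) (g : E → ℂ) :
    Pl (l₁ ++ l₂) g = Pl l₁ (Pl l₂ g) := by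
  induction l₁ with
  | nil => rfl
  | cons i l ih => simp [ih]

lemma Pl_contDiff {g : E → ℂ} (l : List (Fin n)) (hg : ContDiff ℝ (⊤ : ℕ∞) g) :
    ContDiff ℝ (⊤ : ℕ∞) (Pl l g) := by
  induction l with
  | nil => exact hg
  | cons i l ih => exact pd_contDiff i ih

lemma Pl_pd_comm {g : E → ℂ} (i : Fin n) (l : List (Fin n)) (hg : ContDiff ℝ (⊤ : ℕ∞) g) :
    Pl l (pd i g) = pd i (Pl l g) := by
  induction l with
  | nil => rfl
  | cons j l ih => simp [ih, pd_comm i j (Pl_contDiff l hg)]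

lemma Pl_perm {g : E → ℂ} {l l' : List (Fin n)} (hp : l.Perm l')
    (hg : ContDiff ℝ (⊤ : ℕ∞) g) : Pl l g = Pl l' g := by
  induction hp with
  | nil => rfl
  | cons x _ ih => simp [ih]
  | swap x y l => simp [pd_comm x y (Pl_contDiff l hg)]
  | trans _ _ ih₁ ih₂ => rw [ih₁, ih₂]

lemma Pl_replicate (k : ℕ) (i : Fin n) (g : E → ℂ) :
    Pl (List.replicate k i) g = (pd i)^[k] g := by
  induction k with
  | zero => rfl
  | succ m ih => rw [Function.iterate_succ_apply', List.replicate_succ]; simp [ih]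

/-- The canonical list of a multi-index. -/
def Ll (α : Fin n → ℕ) : List (Fin n) :=
  (List.finRange n).flatMap (fun i => List.replicate (α i) i)

lemma mpd_eq_Pl (α : Fin n → ℕ) (g : E → ℂ) : mpd α g = Pl (Ll α) g := by
  rw [mpd, Ll]
  induction (List.finRange n) with
  | nil => rfl
  | cons i L ih => simp only [List.foldr_cons, List.flatMap_cons, Pl_append, ih, Pl_replicate]

lemma count_Ll (α : Fin n → ℕ) (i : Fin n) : (Ll α).count i = α i := by
  rw [Ll, List.count_flatMap]
  have : (List.count i ∘ fun j => List.replicate (α j) j) = fun a => if i = a then α a else 0 := by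
    funext a; simp only [Function.comp_apply, List.count_replicate, beq_iff_eq]
    by_cases h : a = i
    · simp [h]
    · simp [h, if_neg (fun hh : i = a => h hh.symm)]
  rw [this, ← Fin.sum_univ_def, Finset.sum_ite_eq]
  simp

lemma length_Ll (α : Fin n → ℕ) : (Ll α).length = ∑ i, α i := by
  rw [Ll, List.length_flatMap]
  have : (fun j => (List.replicate (α j) j).length) = α := by
    funext a; simp
  rw [this, ← Fin.sum_univ_def]

lemma mpd_zero (g : E → ℂ) : mpd 0 g = g := by
  rw [mpd_eq_Pl]
  have : Ll (0 : Fin n → ℕ) = [] := by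
    simp [Ll]
  simp [this]

lemma Ll_add_single_perm (α : Fin n → ℕ) (j : Fin n) :
    (Ll (α + Pi.single j 1)).Perm (j :: Ll α) := by
  rw [List.perm_iff_count]
  intro i
  rw [count_Ll, List.count_cons, count_Ll]
  by_cases h : i = j
  · simp [h]
  · simp [h, Pi.single_apply, if_neg (fun hh : j = i => h hh.symm)]

lemma mpd_add_single {g : E → ℂ} (α : Fin n → ℕ) (j : Fin n)
    (hg : ContDiff ℝ (⊤ : ℕ∞) g) :
    mpd (α + Pi.single j 1) g = mpd α (pd j g) := by
  rw [mpd_eq_Pl, mpd_eq_Pl, Pl_perm (Ll_add_single_perm α j) hg, Pl_cons,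
    Pl_pd_comm j _ hg]

end Aux2
noncomputable section Aux3
variable {n : ℕ}

local notation "E" => En n

/-- Joint smoothness of a curried symbol. -/
def JS (h : E → E → ℂ) : Prop := ContDiff ℝ (⊤ : ℕ∞) (fun q : E × E => h q.1 q.2)

lemma JS.slice1 {h : E → E → ℂ} (hh : JS h) (ξ : E) :
    ContDiff ℝ (⊤ : ℕ∞) (fun y => h y ξ) :=
  hh.comp (contDiff_id.prodMk contDiff_const)

lemma JS.slice2 {h : E → E → ℂ} (hh : JS h) (x : E) :
    ContDiff ℝ (⊤ : ℕ∞) (h x) :=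
  hh.comp (contDiff_const.prodMk contDiff_id)

lemma smooth_diff2 {h : E → E → ℂ} (hh : JS h) :
    Differentiable ℝ (fun q : E × E => h q.1 q.2) :=
  hh.differentiable (by simp)

/-- Partial derivative in the first (x) variable. -/
def D1 (i : Fin n) (h : E → E → ℂ) : E → E → ℂ := fun x ξ => pd i (fun y => h y ξ) x

/-- Partial derivative in the second (ξ) variable. -/
def D2 (j : Fin n) (h : E → E → ℂ) : E → E → ℂ := fun x ξ => pd j (h x) ξ

lemma fderiv_slice1 {h : E → E → ℂ} (hh : JS h) (x ξ : E) (v : E) :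
    fderiv ℝ (fun y => h y ξ) x v = fderiv ℝ (fun q : E × E => h q.1 q.2) (x, ξ) (v, 0) := by
  have hc : HasFDerivAt (fun y : E => (y, ξ))
      (ContinuousLinearMap.inl ℝ E E) x := hasFDerivAt_prodMk_left x ξ
  have hu : HasFDerivAt (fun q : E × E => h q.1 q.2)
      (fderiv ℝ (fun q : E × E => h q.1 q.2) (x, ξ)) (x, ξ) :=
    ((smooth_diff2 hh) (x, ξ)).hasFDerivAt
  have := (hu.comp x hc).fderiv
  rw [show (fun y => h y ξ) = (fun q : E × E => h q.1 q.2) ∘ (fun y : E => (y, ξ)) from rfl, this]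
  rfl

lemma fderiv_slice2 {h : E → E → ℂ} (hh : JS h) (x ξ : E) (v : E) :
    fderiv ℝ (h x) ξ v = fderiv ℝ (fun q : E × E => h q.1 q.2) (x, ξ) (0, v) := by
  have hc : HasFDerivAt (fun η : E => (x, η))
      (ContinuousLinearMap.inr ℝ E E) ξ := hasFDerivAt_prodMk_right x ξ
  have hu : HasFDerivAt (fun q : E × E => h q.1 q.2)
      (fderiv ℝ (fun q : E × E => h q.1 q.2) (x, ξ)) (x, ξ) :=
    ((smooth_diff2 hh) (x, ξ)).hasFDerivAt
  have := (hu.comp ξ hc).fderiv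
  rw [show (h x) = (fun q : E × E => h q.1 q.2) ∘ (fun η : E => (x, η)) from rfl, this]
  rfl

lemma JS_D1 {h : E → E → ℂ} (hh : JS h) (i : Fin n) : JS (D1 i h) := by
  have : (fun q : E × E => D1 i h q.1 q.2)
      = fun q : E × E => fderiv ℝ (fun q : E × E => h q.1 q.2) q
          ((EuclideanSpace.single i 1 : E), (0 : E)) := by
    funext q
    exact fderiv_slice1 hh q.1 q.2 _
  rw [JS, this]
  exact (hh.fderiv_right topsucc).clm_apply contDiff_const

lemma JS_D2 {h : E → E → ℂ} (hh : JS h) (j : Fin n) : JS (D2 j h) := by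
  have : (fun q : E × E => D2 j h q.1 q.2)
      = fun q : E × E => fderiv ℝ (fun q : E × E => h q.1 q.2) q
          ((0 : E), (EuclideanSpace.single j 1 : E)) := by
    funext q
    exact fderiv_slice2 hh q.1 q.2 _
  rw [JS, this]
  exact (hh.fderiv_right topsucc).clm_apply contDiff_const

end Aux3
noncomputable section Aux4
variable {n : ℕ}

local notation "E" => En n

/-- Canonical factor shape: `x`-derivatives along `k` of `ξ`-derivatives along `l`. -/
def Th (k l : List (Fin n)) (τ : E → E → ℂ) : E → E → ℂ :=
  fun x ξ => Pl k (fun y => Pl l (τ y) ξ) x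

@[simp] lemma Th_nil_nil (τ : E → E → ℂ) : Th ([] : List (Fin n)) [] τ = τ := rfl

lemma D1_Th (i : Fin n) (k l : List (Fin n)) (τ : E → E → ℂ) :
    D1 i (Th k l τ) = Th (i :: k) l τ := rfl

lemma D2_Th (j : Fin n) (l : List (Fin n)) (τ : E → E → ℂ) :
    D2 j (Th [] l τ) = Th [] (j :: l) τ := rfl

lemma JS_Th {τ : E → E → ℂ} (hτ : JS τ) (k l : List (Fin n)) : JS (Th k l τ) := by
  induction k with
  | nil =>
    induction l with
    | nil => exact hτ
    | cons j l ih => rw [← D2_Th]; exact JS_D2 ih j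
  | cons i k ih => rw [← D1_Th]; exact JS_D1 ih i

/-- conjugation commutes with pd -/
lemma pd_conj {g : E → ℂ} (i : Fin n) (hg : Differentiable ℝ g) :
    pd i (fun x => (starRingEnd ℂ) (g x)) = fun x => (starRingEnd ℂ) (pd i g x) := by
  funext x
  have h1 : fderiv ℝ (fun x => Complex.conjCLE (g x)) x
      = (Complex.conjCLE : ℂ ≃L[ℝ] ℂ).toContinuousLinearMap.comp (fderiv ℝ g x) :=
    (Complex.conjCLE.toContinuousLinearMap.hasFDerivAt.comp x (hg x).hasFDerivAt).fderiv
  have : pd i (fun x => (starRingEnd ℂ) (g x)) x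
      = ((Complex.conjCLE : ℂ ≃L[ℝ] ℂ).toContinuousLinearMap.comp (fderiv ℝ g x))
        (EuclideanSpace.single i 1) := by
    rw [pd, ← h1]; rfl
  rw [this]; rfl

lemma Pl_conj {g : E → ℂ} (l : List (Fin n)) (hg : ContDiff ℝ (⊤ : ℕ∞) g) :
    Pl l (fun x => (starRingEnd ℂ) (g x)) = fun x => (starRingEnd ℂ) (Pl l g x) := by
  induction l with
  | nil => rfl
  | cons i l ih => rw [Pl_cons, ih, pd_conj i (smooth_diff (Pl_contDiff l hg)), Pl_cons]

/-- conj of a symbol -/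
def cj (τ : E → E → ℂ) : E → E → ℂ := fun x ξ => (starRingEnd ℂ) (τ x ξ)

lemma JS_cj {τ : E → E → ℂ} (hτ : JS τ) : JS (cj τ) := by
  have : (fun q : E × E => cj τ q.1 q.2)
      = fun q : E × E => Complex.conjCLE ((fun q : E × E => τ q.1 q.2) q) := rfl
  rw [JS, this]
  exact (Complex.conjCLE : ℂ ≃L[ℝ] ℂ).toContinuousLinearMap.contDiff.comp hτ

/-- mixpd of the conjugate equals conjugate of mixpd -/
lemma mixpd_cj {τ : E → E → ℂ} (hτ : JS τ) (α β : Fin n → ℕ) (x ξ : E) :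
    mixpd α β (cj τ) x ξ = (starRingEnd ℂ) (mixpd α β τ x ξ) := by
  rw [mixpd, mixpd]
  have h1 : ∀ y, mpd β (cj τ y) = fun η => (starRingEnd ℂ) (mpd β (τ y) η) := by
    intro y
    rw [mpd_eq_Pl, mpd_eq_Pl]
    exact Pl_conj (Ll β) (hτ.slice2 y)
  have h2 : (fun y => mpd β (cj τ y) ξ) = fun y => (starRingEnd ℂ) ((fun y' => mpd β (τ y') ξ) y) := by
    funext y; rw [h1 y]
  rw [h2, mpd_eq_Pl, mpd_eq_Pl,
    Pl_conj (Ll α) (by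
      have := JS_Th hτ [] (Ll β)
      have h3 : (fun y => mpd β (τ y) ξ) = fun y => Th [] (Ll β) τ y ξ := by
        funext y; rw [Th, Pl_nil, mpd_eq_Pl]
      rw [h3]
      exact (JS_Th hτ [] (Ll β)).slice1 ξ)]

/-- Th equals a mixpd with count multi-indices -/
lemma Th_eq_mixpd {τ : E → E → ℂ} (hτ : JS τ) (k l : List (Fin n)) :
    Th k l τ = mixpd (fun i => k.count i) (fun i => l.count i) τ := by
  funext x ξ
  have hil : ∀ y, Pl l (τ y) = mpd (fun i => l.count i) (τ y) := by
    intro y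
    rw [mpd_eq_Pl]
    exact Pl_perm (by rw [List.perm_iff_count]; intro i; rw [count_Ll]) (hτ.slice2 y)
  have h2 : (fun y => Pl l (τ y) ξ) = fun y => mpd (fun i => l.count i) (τ y) ξ := by
    funext y; rw [hil y]
  rw [Th, mixpd, h2, mpd_eq_Pl]
  refine congrFun (Pl_perm (by rw [List.perm_iff_count]; intro i; rw [count_Ll]) ?_) x
  have h3 : (fun y => mpd (fun i => l.count i) (τ y) ξ) = fun y => Th [] (Ll (fun i => l.count i)) τ y ξ := by
    funext y; rw [Th, Pl_nil, mpd_eq_Pl]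
  rw [h3]
  exact (JS_Th hτ [] _).slice1 ξ

end Aux4
noncomputable section Aux5
variable {n : ℕ}

local notation "E" => En n

lemma mixpd_zero_zero (g : E → E → ℂ) : mixpd 0 0 g = g := by
  funext x ξ
  rw [mixpd, mpd_zero, mpd_zero]

lemma slice1_inner {g : E → E → ℂ} (hg : JS g) (β : Fin n → ℕ) (ξ : E) :
    ContDiff ℝ (⊤ : ℕ∞) (fun y => mpd β (g y) ξ) := by
  have h3 : (fun y => mpd β (g y) ξ) = fun y => Th [] (Ll β) g y ξ := by
    funext y; rw [Th, Pl_nil, mpd_eq_Pl]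
  rw [h3]
  exact (JS_Th hg [] _).slice1 ξ

lemma mixpd_peel2 {g : E → E → ℂ} (hg : JS g) (α β : Fin n → ℕ) (j : Fin n) :
    mixpd α (β + Pi.single j 1) g = mixpd α β (D2 j g) := by
  funext x ξ
  rw [mixpd, mixpd]
  have h1 : (fun y => mpd (β + Pi.single j 1) (g y) ξ) = fun y => mpd β (D2 j g y) ξ := by
    funext y
    rw [mpd_add_single β j (hg.slice2 y)]
    rfl
  rw [h1]

lemma mixpd_peel1 {g : E → E → ℂ} (hg : JS g) (α : Fin n → ℕ) (i : Fin n) :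
    mixpd (α + Pi.single i 1) 0 g = mixpd α 0 (D1 i g) := by
  funext x ξ
  rw [mixpd, mixpd]
  have h0 : ∀ (h : E → E → ℂ), (fun y => mpd 0 (h y) ξ) = fun y => h y ξ := by
    intro h; funext y; rw [mpd_zero]
  rw [h0, h0]
  rw [mpd_add_single α i (hg.slice1 ξ)]
  rfl

lemma listsum_contDiff (G : List (E → ℂ)) (hG : ∀ g ∈ G, ContDiff ℝ (⊤ : ℕ∞) g) :
    ContDiff ℝ (⊤ : ℕ∞) (fun y => (G.map (fun g => g y)).sum) := by
  induction G with
  | nil => simpa using contDiff_const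
  | cons g G ih =>
    simp only [List.map_cons, List.sum_cons]
    exact (hG g (List.mem_cons_self)).add
      (ih (fun g' h => hG g' (List.mem_cons_of_mem g h)))

lemma Pl_listsum (l : List (Fin n)) (G : List (E → ℂ)) (hG : ∀ g ∈ G, ContDiff ℝ (⊤ : ℕ∞) g) :
    Pl l (fun y => (G.map (fun g => g y)).sum) = fun y => (G.map (fun g => Pl l g y)).sum := by
  induction G with
  | nil =>
    simp only [List.map_nil, List.sum_nil]
    induction l with
    | nil => rfl
    | cons i l ih => rw [Pl_cons, ih, pd_zero]
  | cons g G ih =>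
    have hg := hG g (List.mem_cons_self)
    have hG' : ∀ g' ∈ G, ContDiff ℝ (⊤ : ℕ∞) g' := fun g' h => hG g' (List.mem_cons_of_mem g h)
    have hsum := listsum_contDiff G hG'
    simp only [List.map_cons, List.sum_cons]
    have hadd : Pl l (fun y => g y + (G.map (fun g' => g' y)).sum)
        = fun y => Pl l g y + Pl l (fun y' => (G.map (fun g' => g' y')).sum) y := by
      clear ih
      induction l with
      | nil => rfl
      | cons i l ihl =>
        rw [Pl_cons, ihl, pd_add i (smooth_diff (Pl_contDiff l hg)) (smooth_diff (Pl_contDiff l hsum)), Pl_cons, Pl_cons]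
    rw [hadd, ih hG']

lemma mixpd_listsum (α β : Fin n → ℕ) (G : List (E → E → ℂ)) (hG : ∀ g ∈ G, JS g) (x ξ : E) :
    mixpd α β (fun x' ξ' => (G.map (fun g => g x' ξ')).sum) x ξ
      = (G.map (fun g => mixpd α β g x ξ)).sum := by
  rw [mixpd]
  have h1 : (fun y => mpd β (fun ξ' => (G.map (fun g => g y ξ')).sum) ξ)
      = fun y => (G.map (fun g => mpd β (g y) ξ)).sum := by
    funext y
    rw [mpd_eq_Pl]
    have h2 := Pl_listsum (Ll β) (G.map (fun g => g y)) (by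
      intro g' hg'
      obtain ⟨g, hgmem, rfl⟩ := List.mem_map.mp hg'
      exact (hG g hgmem).slice2 y)
    simp only [List.map_map, Function.comp_def] at h2
    rw [h2]
    beta_reduce
    congr 1
    refine List.map_congr_left (fun g _ => ?_)
    rw [mpd_eq_Pl]
  rw [h1, mpd_eq_Pl]
  have h3 := Pl_listsum (Ll α) (G.map (fun g y => mpd β (g y) ξ)) (by
    intro g' hg'
    obtain ⟨g, hgmem, rfl⟩ := List.mem_map.mp hg'
    exact slice1_inner (hG g hgmem) β ξ)
  simp only [List.map_map, Function.comp_def] at h3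
  rw [h3]
  beta_reduce
  congr 1
  refine List.map_congr_left (fun g _ => ?_)
  rw [mixpd, mpd_eq_Pl]

end Aux5
noncomputable section Aux6
variable {n : ℕ}

local notation "E" => En n

/-- Wirtinger-type coefficients of a smooth `F : ℂ → ℂ`. -/
def Fd1 (F : ℂ → ℂ) (z : ℂ) : ℂ := (fderiv ℝ F z 1 - Complex.I * fderiv ℝ F z Complex.I) / 2
def Fd2 (F : ℂ → ℂ) (z : ℂ) : ℂ := (fderiv ℝ F z 1 + Complex.I * fderiv ℝ F z Complex.I) / 2

lemma Fd1_contDiff {F : ℂ → ℂ} (hF : ContDiff ℝ (⊤ : ℕ∞) F) :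
    ContDiff ℝ (⊤ : ℕ∞) (Fd1 F) := by
  have h1 : ContDiff ℝ (⊤ : ℕ∞) (fun z => fderiv ℝ F z (1 : ℂ)) :=
    (hF.fderiv_right topsucc).clm_apply contDiff_const
  have h2 : ContDiff ℝ (⊤ : ℕ∞) (fun z => fderiv ℝ F z Complex.I) :=
    (hF.fderiv_right topsucc).clm_apply contDiff_const
  exact (h1.sub (contDiff_const.mul h2)).div_const 2

lemma Fd2_contDiff {F : ℂ → ℂ} (hF : ContDiff ℝ (⊤ : ℕ∞) F) :
    ContDiff ℝ (⊤ : ℕ∞) (Fd2 F) := by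
  have h1 : ContDiff ℝ (⊤ : ℕ∞) (fun z => fderiv ℝ F z (1 : ℂ)) :=
    (hF.fderiv_right topsucc).clm_apply contDiff_const
  have h2 : ContDiff ℝ (⊤ : ℕ∞) (fun z => fderiv ℝ F z Complex.I) :=
    (hF.fderiv_right topsucc).clm_apply contDiff_const
  exact (h1.add (contDiff_const.mul h2)).div_const 2

lemma fderiv_wirtinger (F : ℂ → ℂ) (z w : ℂ) :
    fderiv ℝ F z w = Fd1 F z * w + Fd2 F z * (starRingEnd ℂ) w := by
  set L := fderiv ℝ F z with hL
  have h1 : w = (w.re : ℝ) • (1 : ℂ) + (w.im : ℝ) • Complex.I := by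
    simp [Complex.real_smul, Complex.re_add_im]
  have h2 : L w = (w.re : ℂ) * L 1 + (w.im : ℂ) * L Complex.I := by
    conv_lhs => rw [h1]
    rw [map_add, _root_.map_smul, _root_.map_smul]
    simp [Complex.real_smul]
  have hre : (w.re : ℂ) = (w + (starRingEnd ℂ) w) / 2 := by
    rw [Complex.add_conj]; push_cast; ring
  have him : (w.im : ℂ) = (w - (starRingEnd ℂ) w) / (2 * Complex.I) := by
    rw [Complex.sub_conj]
    field_simp [Complex.I_ne_zero]
    push_cast
    ring
  rw [h2, hre, him, Fd1, Fd2]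
  field_simp [Complex.I_ne_zero]
  ring_nf
  simp [Complex.I_sq]
  ring

/-- chain rule for pd : ℂ-valued, single variable. -/
lemma pd_comp {g : E → ℂ} {F : ℂ → ℂ} (i : Fin n) (hg : Differentiable ℝ g)
    (hF : ContDiff ℝ (⊤ : ℕ∞) F) :
    pd i (fun x => F (g x)) = fun x =>
      Fd1 F (g x) * pd i g x + Fd2 F (g x) * (starRingEnd ℂ) (pd i g x) := by
  funext x
  have hFd : DifferentiableAt ℝ F (g x) := (hF.differentiable (by simp)) (g x)
  have : pd i (fun x => F (g x)) x = fderiv ℝ F (g x) (pd i g x) := by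
    rw [pd, show (fun x => F (g x)) = F ∘ g from rfl, fderiv_comp x hFd (hg x)]
    rfl
  rw [this, fderiv_wirtinger]

lemma D2_comp {σ : E → E → ℂ} {F : ℂ → ℂ} (j : Fin n) (hσ : JS σ)
    (hF : ContDiff ℝ (⊤ : ℕ∞) F) :
    D2 j (fun x ξ => F (σ x ξ)) = fun x ξ =>
      Fd1 F (σ x ξ) * D2 j σ x ξ + Fd2 F (σ x ξ) * D2 j (cj σ) x ξ := by
  funext x ξ
  have h1 : D2 j (cj σ) x ξ = (starRingEnd ℂ) (D2 j σ x ξ) := by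
    rw [D2, show (cj σ x) = (fun η => (starRingEnd ℂ) (σ x η)) from rfl,
      pd_conj j (smooth_diff (hσ.slice2 x))]
    rfl
  rw [h1, D2]
  rw [pd_comp j (smooth_diff (hσ.slice2 x)) hF]
  rfl

lemma D1_comp {σ : E → E → ℂ} {F : ℂ → ℂ} (i : Fin n) (hσ : JS σ)
    (hF : ContDiff ℝ (⊤ : ℕ∞) F) :
    D1 i (fun x ξ => F (σ x ξ)) = fun x ξ =>
      Fd1 F (σ x ξ) * D1 i σ x ξ + Fd2 F (σ x ξ) * D1 i (cj σ) x ξ := by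
  funext x ξ
  have h1 : D1 i (cj σ) x ξ = (starRingEnd ℂ) (D1 i σ x ξ) := by
    rw [D1, show (fun y => cj σ y ξ) = (fun y => (starRingEnd ℂ) (σ y ξ)) from rfl,
      pd_conj i (smooth_diff (hσ.slice1 ξ))]
    rfl
  rw [h1, D1]
  rw [show (fun y => F (σ y ξ)) = fun y => F ((fun y' => σ y' ξ) y) from rfl,
    pd_comp i (smooth_diff (hσ.slice1 ξ)) hF]
  rfl

lemma pd_mul {f g : E → ℂ} (i : Fin n) (hf : Differentiable ℝ f) (hg : Differentiable ℝ g) :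
    pd i (fun x => f x * g x) = fun x => pd i f x * g x + f x * pd i g x := by
  funext x
  rw [pd, fderiv_fun_mul (hf x) (hg x)]
  simp only [ContinuousLinearMap.add_apply, ContinuousLinearMap.smul_apply]
  simp [pd, smul_eq_mul]
  ring

lemma D2_mul {g g' : E → E → ℂ} (j : Fin n) (hg : JS g) (hg' : JS g') :
    D2 j (fun x ξ => g x ξ * g' x ξ) = fun x ξ =>
      D2 j g x ξ * g' x ξ + g x ξ * D2 j g' x ξ := by
  funext x ξ
  rw [D2]
  rw [pd_mul j (smooth_diff (hg.slice2 x)) (smooth_diff (hg'.slice2 x))]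
  rfl

lemma D1_mul {g g' : E → E → ℂ} (i : Fin n) (hg : JS g) (hg' : JS g') :
    D1 i (fun x ξ => g x ξ * g' x ξ) = fun x ξ =>
      D1 i g x ξ * g' x ξ + g x ξ * D1 i g' x ξ := by
  funext x ξ
  rw [D1, show (fun y => (fun x ξ => g x ξ * g' x ξ) y ξ) = fun y => g y ξ * g' y ξ from rfl,
    pd_mul i (smooth_diff (hg.slice1 ξ)) (smooth_diff (hg'.slice1 ξ))]
  rfl

/-- `σ` or its conjugate. -/
def tauc (σ : E → E → ℂ) (b : Bool) : E → E → ℂ := if b then cj σ else σ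

lemma JS_tauc {σ : E → E → ℂ} (hσ : JS σ) (b : Bool) : JS (tauc σ b) := by
  cases b
  · exact hσ
  · exact JS_cj hσ

/-- Inductive class of "shapes" appearing in derivatives of `F ∘ σ`. -/
inductive Sh (σ : E → E → ℂ) : Bool → (E → E → ℂ) → ℕ → ℕ → Prop
  | head (p : Bool) (F : ℂ → ℂ) (hF : ContDiff ℝ (⊤ : ℕ∞) F) :
      Sh σ p (fun x ξ => F (σ x ξ)) 0 0
  | fac (k l : List (Fin n)) (b : Bool) :
      Sh σ false (Th k l (tauc σ b)) k.length l.length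
  | fac0 (p : Bool) (l : List (Fin n)) (b : Bool) :
      Sh σ p (Th [] l (tauc σ b)) 0 l.length
  | mul {p g g' a b c d} : Sh σ p g a b → Sh σ p g' c d →
      Sh σ p (fun x ξ => g x ξ * g' x ξ) (a + c) (b + d)

lemma Sh_weaken {σ : E → E → ℂ} {g a b} (h : Sh σ true g a b) : Sh σ false g a b := by
  generalize hp : true = p at h
  induction h with
  | head p F hF => exact Sh.head false F hF
  | fac k l b => exact Sh.fac k l b
  | fac0 p l b => exact Sh.fac0 false l b
  | mul hg hg' ih ih' => exact Sh.mul (ih hp) (ih' hp)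

lemma Sh_JS {σ : E → E → ℂ} (hσ : JS σ) {p g a b} (h : Sh σ p g a b) : JS g := by
  induction h with
  | head p F hF => exact hF.comp hσ
  | fac k l b => exact JS_Th (JS_tauc hσ b) k l
  | fac0 p l b => exact JS_Th (JS_tauc hσ b) [] l
  | mul hg hg' ih ih' => exact ih.mul ih'

lemma D2Sh {σ : E → E → ℂ} (hσ : JS σ) (j : Fin n) {g : E → E → ℂ} {a b : ℕ}
    (h : Sh σ true g a b) :
    ∃ G : List (E → E → ℂ), (∀ g' ∈ G, Sh σ true g' a (b + 1)) ∧
      ∀ x ξ, D2 j g x ξ = (G.map (fun g' => g' x ξ)).sum := by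
  generalize hp : true = p at h
  induction h with
  | head p F hF =>
    refine ⟨[fun x ξ => Fd1 F (σ x ξ) * Th [] [j] (tauc σ false) x ξ,
             fun x ξ => Fd2 F (σ x ξ) * Th [] [j] (tauc σ true) x ξ], ?_, ?_⟩
    · subst hp
      intro g' hg'
      simp only [List.mem_cons, List.mem_singleton, List.not_mem_nil, or_false] at hg'
      rcases hg' with h' | h'
      · exact h' ▸ Sh.mul (Sh.head true (Fd1 F) (Fd1_contDiff hF)) (Sh.fac0 true [j] false)
      · exact h' ▸ Sh.mul (Sh.head true (Fd2 F) (Fd2_contDiff hF)) (Sh.fac0 true [j] true)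
    · intro x ξ
      rw [D2_comp j hσ hF]
      show _ = _ + (_ + 0)
      rw [add_zero]
      rfl
  | fac k l b => exact absurd hp (by simp)
  | fac0 p l b =>
    subst hp
    refine ⟨[Th [] (j :: l) (tauc σ b)], ?_, ?_⟩
    · intro g' hg'
      rw [List.mem_singleton] at hg'
      subst hg'
      exact Sh.fac0 true (j :: l) b
    · intro x ξ
      rw [← D2_Th]
      show _ = _ + 0
      rw [add_zero]
  | @mul p g g' a b c d hg hg' ih ih' =>
    subst hp
    obtain ⟨G, hGsh, hGeq⟩ := ih rfl
    obtain ⟨G', hGsh', hGeq'⟩ := ih' rfl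
    refine ⟨G.map (fun h x ξ => h x ξ * g' x ξ) ++ G'.map (fun h x ξ => g x ξ * h x ξ), ?_, ?_⟩
    · intro g'' hg''
      rw [List.mem_append] at hg''
      rcases hg'' with h'' | h''
      · obtain ⟨h0, hmem, rfl⟩ := List.mem_map.mp h''
        have := Sh.mul (hGsh h0 hmem) hg'
        rwa [show b + 1 + d = b + d + 1 from by omega] at this
      · obtain ⟨h0, hmem, rfl⟩ := List.mem_map.mp h''
        have := Sh.mul hg (hGsh' h0 hmem)
        rwa [show b + (d + 1) = b + d + 1 from by omega] at this
    · intro x ξ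
      rw [D2_mul j (Sh_JS hσ hg) (Sh_JS hσ hg')]
      simp only [List.map_append, List.sum_append, List.map_map, Function.comp_def]
      rw [show (List.map (fun h => h x ξ * g' x ξ) G).sum = (List.map (fun h => h x ξ) G).sum * g' x ξ
          from List.sum_map_mul_right _ _ _, 
        show (List.map (fun h => g x ξ * h x ξ) G').sum = g x ξ * (List.map (fun h => h x ξ) G').sum
          from List.sum_map_mul_left _ _ _, ← hGeq, ← hGeq']

lemma D1Sh {σ : E → E → ℂ} (hσ : JS σ) (i : Fin n) {g : E → E → ℂ} {a b : ℕ}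
    (h : Sh σ false g a b) :
    ∃ G : List (E → E → ℂ), (∀ g' ∈ G, Sh σ false g' (a + 1) b) ∧
      ∀ x ξ, D1 i g x ξ = (G.map (fun g' => g' x ξ)).sum := by
  generalize hp : false = p at h
  induction h with
  | head p F hF =>
    refine ⟨[fun x ξ => Fd1 F (σ x ξ) * Th [i] [] (tauc σ false) x ξ,
             fun x ξ => Fd2 F (σ x ξ) * Th [i] [] (tauc σ true) x ξ], ?_, ?_⟩
    · subst hp
      intro g' hg'
      simp only [List.mem_cons, List.mem_singleton, List.not_mem_nil, or_false] at hg'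
      rcases hg' with h' | h'
      · exact h' ▸ Sh.mul (Sh.head false (Fd1 F) (Fd1_contDiff hF)) (Sh.fac [i] [] false)
      · exact h' ▸ Sh.mul (Sh.head false (Fd2 F) (Fd2_contDiff hF)) (Sh.fac [i] [] true)
    · intro x ξ
      rw [D1_comp i hσ hF]
      show _ = _ + (_ + 0)
      rw [add_zero]
      rfl
  | fac k l b =>
    refine ⟨[Th (i :: k) l (tauc σ b)], ?_, ?_⟩
    · intro g' hg'
      rw [List.mem_singleton] at hg'
      subst hg'
      exact Sh.fac (i :: k) l b
    · intro x ξ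
      rw [← D1_Th]
      show _ = _ + 0
      rw [add_zero]
  | fac0 p l b =>
    subst hp
    refine ⟨[Th [i] l (tauc σ b)], ?_, ?_⟩
    · intro g' hg'
      rw [List.mem_singleton] at hg'
      subst hg'
      exact Sh.fac [i] l b
    · intro x ξ
      rw [show Th [i] l (tauc σ b) = D1 i (Th [] l (tauc σ b)) from (D1_Th i [] l _).symm]
      show _ = _ + 0
      rw [add_zero]
  | @mul p g g' a b c d hg hg' ih ih' =>
    subst hp
    obtain ⟨G, hGsh, hGeq⟩ := ih rfl
    obtain ⟨G', hGsh', hGeq'⟩ := ih' rfl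
    refine ⟨G.map (fun h x ξ => h x ξ * g' x ξ) ++ G'.map (fun h x ξ => g x ξ * h x ξ), ?_, ?_⟩
    · intro g'' hg''
      rw [List.mem_append] at hg''
      rcases hg'' with h'' | h''
      · obtain ⟨h0, hmem, rfl⟩ := List.mem_map.mp h''
        have := Sh.mul (hGsh h0 hmem) hg'
        rwa [show a + 1 + c = a + c + 1 from by omega] at this
      · obtain ⟨h0, hmem, rfl⟩ := List.mem_map.mp h''
        have := Sh.mul hg (hGsh' h0 hmem)
        rwa [show a + (c + 1) = a + c + 1 from by omega] at this
    · intro x ξ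
      rw [D1_mul i (Sh_JS hσ hg) (Sh_JS hσ hg')]
      simp only [List.map_append, List.sum_append, List.map_map, Function.comp_def]
      rw [show (List.map (fun h => h x ξ * g' x ξ) G).sum = (List.map (fun h => h x ξ) G).sum * g' x ξ
          from List.sum_map_mul_right _ _ _,
        show (List.map (fun h => g x ξ * h x ξ) G').sum = g x ξ * (List.map (fun h => h x ξ) G').sum
          from List.sum_map_mul_left _ _ _, ← hGeq, ← hGeq']

end Aux6
noncomputable section Aux7
variable {n : ℕ} {Λ : En n → ℝ} {ρ : ℝ}

local notation "E" => En n

/-- The bound predicate with decay weights `a` in `x` and `b` in `ξ`. -/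
def Bnd (Λ : E → ℝ) (ρ : ℝ) (a b : ℕ) (h : E → E → ℂ) : Prop :=
  ∃ C > 0, ∀ x ξ : E, ‖h x ξ‖ ≤ C * Λ x ^ (-(ρ * a)) * Λ ξ ^ (-(ρ * b))

lemma Bnd_mul (hΛ : ∀ x, 0 < Λ x) {g g' : E → E → ℂ} {a b c d : ℕ}
    (hg : Bnd Λ ρ a b g) (hg' : Bnd Λ ρ c d g') :
    Bnd Λ ρ (a + c) (b + d) (fun x ξ => g x ξ * g' x ξ) := by
  obtain ⟨C, hC, h1⟩ := hg
  obtain ⟨C', hC', h2⟩ := hg'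
  refine ⟨C * C', mul_pos hC hC', fun x ξ => ?_⟩
  have e1 : Λ x ^ (-(ρ * ((a : ℝ) + c))) = Λ x ^ (-(ρ * a)) * Λ x ^ (-(ρ * c)) := by
    rw [← Real.rpow_add (hΛ x)]; ring_nf
  have e2 : Λ ξ ^ (-(ρ * ((b : ℝ) + d))) = Λ ξ ^ (-(ρ * b)) * Λ ξ ^ (-(ρ * d)) := by
    rw [← Real.rpow_add (hΛ ξ)]; ring_nf
  have : ‖g x ξ * g' x ξ‖ = ‖g x ξ‖ * ‖g' x ξ‖ := norm_mul _ _
  rw [this]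
  calc ‖g x ξ‖ * ‖g' x ξ‖
      ≤ (C * Λ x ^ (-(ρ * a)) * Λ ξ ^ (-(ρ * b))) * (C' * Λ x ^ (-(ρ * c)) * Λ ξ ^ (-(ρ * d))) := by
        apply mul_le_mul (h1 x ξ) (h2 x ξ) (norm_nonneg _)
        exact mul_nonneg (mul_nonneg hC.le (Real.rpow_nonneg (hΛ x).le _))
          (Real.rpow_nonneg (hΛ ξ).le _)
    _ = C * C' * Λ x ^ (-(ρ * ((a : ℝ) + c))) * Λ ξ ^ (-(ρ * ((b : ℝ) + d))) := by
        rw [e1, e2]; ring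
    _ = C * C' * Λ x ^ (-(ρ * ((a + c : ℕ) : ℝ))) * Λ ξ ^ (-(ρ * ((b + d : ℕ) : ℝ))) := by
        push_cast; ring_nf

lemma Bnd_listsum (hΛ : ∀ x, 0 < Λ x) {a b : ℕ} (G : List (E → E → ℂ))
    (hG : ∀ g ∈ G, Bnd Λ ρ a b g) :
    Bnd Λ ρ a b (fun x ξ => (G.map (fun g => g x ξ)).sum) := by
  induction G with
  | nil =>
    refine ⟨1, one_pos, fun x ξ => ?_⟩
    simp only [List.map_nil, List.sum_nil, norm_zero, one_mul]
    exact mul_nonneg (Real.rpow_nonneg (hΛ x).le _) (Real.rpow_nonneg (hΛ ξ).le _)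
  | cons g G ih =>
    obtain ⟨C, hC, h1⟩ := hG g (List.mem_cons_self)
    obtain ⟨C', hC', h2⟩ := ih (fun g' h => hG g' (List.mem_cons_of_mem g h))
    refine ⟨C + C', by positivity, fun x ξ => ?_⟩
    simp only [List.map_cons, List.sum_cons]
    calc ‖g x ξ + (G.map (fun g' => g' x ξ)).sum‖
        ≤ ‖g x ξ‖ + ‖(G.map (fun g' => g' x ξ)).sum‖ := norm_add_le _ _
      _ ≤ C * Λ x ^ (-(ρ * a)) * Λ ξ ^ (-(ρ * b)) + C' * Λ x ^ (-(ρ * a)) * Λ ξ ^ (-(ρ * b)) :=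
          add_le_add (h1 x ξ) (h2 x ξ)
      _ = (C + C') * Λ x ^ (-(ρ * a)) * Λ ξ ^ (-(ρ * b)) := by ring

lemma sum_count_length (k : List (Fin n)) : ∑ i, k.count i = k.length := by
  induction k with
  | nil => simp
  | cons i k ih =>
    simp only [List.count_cons, List.length_cons]
    rw [Finset.sum_add_distrib, ih]
    congr 1
    simp [beq_iff_eq]

end Aux7
noncomputable section Aux8
variable {n : ℕ} {Λ : En n → ℝ} {ρ : ℝ} {σ : En n → En n → ℂ}

local notation "E" => En n

lemma hb_Bnd (hb : ∀ α β : Fin n → ℕ, ∃ C > 0, ∀ x ξ : E,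
      ‖mixpd α β σ x ξ‖ ≤ C * Λ x ^ ((0:ℝ) - ρ * ∑ i, (α i : ℝ)) * Λ ξ ^ ((0:ℝ) - ρ * ∑ i, (β i : ℝ)))
    (α β : Fin n → ℕ) : Bnd Λ ρ (∑ i, α i) (∑ i, β i) (mixpd α β σ) := by
  obtain ⟨C, hC, h1⟩ := hb α β
  refine ⟨C, hC, fun x ξ => ?_⟩
  have e1 : ((0:ℝ) - ρ * ∑ i, (α i : ℝ)) = -(ρ * ((∑ i, α i : ℕ) : ℝ)) := by
    push_cast; ring
  have e2 : ((0:ℝ) - ρ * ∑ i, (β i : ℝ)) = -(ρ * ((∑ i, β i : ℕ) : ℝ)) := by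
    push_cast; ring
  rw [← e1, ← e2]
  exact h1 x ξ

lemma Bnd_Th (hσJS : JS σ)
    (hb : ∀ α β : Fin n → ℕ, ∃ C > 0, ∀ x ξ : E,
      ‖mixpd α β σ x ξ‖ ≤ C * Λ x ^ ((0:ℝ) - ρ * ∑ i, (α i : ℝ)) * Λ ξ ^ ((0:ℝ) - ρ * ∑ i, (β i : ℝ)))
    (k l : List (Fin n)) (b : Bool) :
    Bnd Λ ρ k.length l.length (Th k l (tauc σ b)) := by
  have hkey := hb_Bnd hb (fun i => k.count i) (fun i => l.count i)
  rw [sum_count_length, sum_count_length] at hkey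
  cases b with
  | false =>
    rw [show tauc σ false = σ from rfl, Th_eq_mixpd hσJS]
    exact hkey
  | true =>
    rw [show tauc σ true = cj σ from rfl, Th_eq_mixpd (JS_cj hσJS)]
    obtain ⟨C, hC, h1⟩ := hkey
    refine ⟨C, hC, fun x ξ => ?_⟩
    rw [mixpd_cj hσJS]
    calc ‖(starRingEnd ℂ) (mixpd (fun i => k.count i) (fun i => l.count i) σ x ξ)‖
        = ‖mixpd (fun i => k.count i) (fun i => l.count i) σ x ξ‖ := norm_star _
      _ ≤ _ := h1 x ξ

lemma Sh_Bnd (hΛ : ∀ x, 0 < Λ x) (hσJS : JS σ)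
    (hb : ∀ α β : Fin n → ℕ, ∃ C > 0, ∀ x ξ : E,
      ‖mixpd α β σ x ξ‖ ≤ C * Λ x ^ ((0:ℝ) - ρ * ∑ i, (α i : ℝ)) * Λ ξ ^ ((0:ℝ) - ρ * ∑ i, (β i : ℝ)))
    {p g a b} (h : Sh σ p g a b) : Bnd Λ ρ a b g := by
  induction h with
  | head p F hF =>
    -- σ is bounded
    have hσbd : ∃ R > 0, ∀ x ξ : E, ‖σ x ξ‖ ≤ R := by
      have h00 := hb_Bnd hb 0 0
      rw [mixpd_zero_zero] at h00
      obtain ⟨C, hC, h1⟩ := h00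
      refine ⟨C, hC, fun x ξ => ?_⟩
      have := h1 x ξ
      simpa using this
    obtain ⟨R, hR, hRb⟩ := hσbd
    obtain ⟨M, hM⟩ := (isCompact_closedBall (0:ℂ) R).exists_bound_of_continuousOn
      hF.continuous.continuousOn
    refine ⟨max M 1, lt_of_lt_of_le one_pos (le_max_right M 1), fun x ξ => ?_⟩
    have h2 : ‖F (σ x ξ)‖ ≤ M := hM (σ x ξ) (by
      simp only [Metric.mem_closedBall, dist_zero_right]
      exact hRb x ξ)
    calc ‖F (σ x ξ)‖ ≤ max M 1 := le_trans h2 (le_max_left M 1)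
      _ = max M 1 * Λ x ^ (-(ρ * ((0:ℕ):ℝ))) * Λ ξ ^ (-(ρ * ((0:ℕ):ℝ))) := by
        norm_num
  | fac k l b => exact Bnd_Th hσJS hb k l b
  | fac0 p l b => exact Bnd_Th hσJS hb [] l b
  | mul hg hg' ih ih' => exact Bnd_mul hΛ ih ih'

lemma sum_update_succ (β : Fin n → ℕ) (j : Fin n) (hj : β j ≠ 0) :
    β = Function.update β j (β j - 1) + Pi.single j 1
      ∧ (∑ i, Function.update β j (β j - 1) i) + 1 = ∑ i, β i := by
  constructor
  · funext i
    by_cases h : i = j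
    · subst h; simp only [Pi.add_apply, Function.update_self, Pi.single_eq_same]; omega
    · simp [h, Function.update_of_ne h, Pi.single_apply, fun hh : j = i => h hh.symm]
  · have h1 : ∑ i, β i = ∑ i, (Function.update β j (β j - 1) + Pi.single j 1 : Fin n → ℕ) i := by
      congr 1
      funext i
      by_cases h : i = j
      · subst h; simp only [Pi.add_apply, Function.update_self, Pi.single_eq_same]; omega
      · simp [h, Function.update_of_ne h, Pi.single_apply, fun hh : j = i => h hh.symm]
    rw [h1]
    simp only [Pi.add_apply]
    rw [Finset.sum_add_distrib]
    have : ∑ i, Pi.single j 1 i = 1 := by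
      rw [show (∑ i, Pi.single j (1:ℕ) i) = ∑ i, if i = j then 1 else 0 from by
        congr 1; funext i; simp [Pi.single_apply]]
      simp
    omega

end Aux8
noncomputable section Aux9
variable {n : ℕ} {Λ : En n → ℝ} {ρ : ℝ} {σ : En n → En n → ℂ}

local notation "E" => En n

lemma master (hΛ : ∀ x, 0 < Λ x) (hσJS : JS σ)
    (hb : ∀ α β : Fin n → ℕ, ∃ C > 0, ∀ x ξ : E,
      ‖mixpd α β σ x ξ‖ ≤ C * Λ x ^ ((0:ℝ) - ρ * ∑ i, (α i : ℝ)) * Λ ξ ^ ((0:ℝ) - ρ * ∑ i, (β i : ℝ))) :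
    ∀ N : ℕ, ∀ α β : Fin n → ℕ, (∑ i, α i) + (∑ i, β i) ≤ N →
      ∀ (p : Bool) (g : E → E → ℂ) (a b : ℕ), Sh σ p g a b → (β ≠ 0 → p = true) →
      Bnd Λ ρ ((∑ i, α i) + a) ((∑ i, β i) + b) (mixpd α β g) := by
  intro N
  induction N with
  | zero =>
    intro α β hle p g a b hsh _
    have hα : α = 0 := by
      funext i
      have := Finset.sum_eq_zero_iff.mp (Nat.le_zero.mp (le_trans (Nat.le_add_right _ _) hle)) i (Finset.mem_univ i)
      exact this
    have hβ : β = 0 := by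
      funext i
      have := Finset.sum_eq_zero_iff.mp (Nat.le_zero.mp (le_trans (Nat.le_add_left _ _) hle)) i (Finset.mem_univ i)
      exact this
    subst hα; subst hβ
    rw [mixpd_zero_zero]
    have hz : (∑ i : Fin n, (0 : Fin n → ℕ) i) = 0 := by simp
    rw [hz]
    simpa using Sh_Bnd hΛ hσJS hb hsh
  | succ N ih =>
    intro α β hle p g a b hsh hcond
    by_cases hβ : β = 0
    · subst hβ
      by_cases hα : α = 0
      · subst hα
        rw [mixpd_zero_zero]
        have hz : (∑ i : Fin n, (0 : Fin n → ℕ) i) = 0 := by simp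
        rw [hz]
        simpa using Sh_Bnd hΛ hσJS hb hsh
      · -- peel an x-derivative
        obtain ⟨i, hi⟩ : ∃ i, α i ≠ 0 := by
          by_contra hc
          push_neg at hc
          exact hα (funext fun i => hc i)
        obtain ⟨heq, hsum⟩ := sum_update_succ α i hi
        set α' := Function.update α i (α i - 1) with hα'
        have hgJS : JS g := Sh_JS hσJS hsh
        have hgf : Sh σ false g a b := by
          cases p
          · exact hsh
          · exact Sh_weaken hsh
        obtain ⟨G, hGsh, hGeq⟩ := D1Sh hσJS i hgf
        have hD1 : D1 i g = fun x ξ => (G.map (fun g' => g' x ξ)).sum := by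
          funext x ξ; exact hGeq x ξ
        have hpeel : mixpd α 0 g = mixpd α' 0 (D1 i g) := by
          conv_lhs => rw [heq]
          exact mixpd_peel1 hgJS α' i
        rw [hpeel, hD1]
        have hBsum : Bnd Λ ρ ((∑ j, α' j) + (a + 1)) ((∑ j : Fin n, (0:ℕ)) + b)
            (mixpd α' 0 (fun x ξ => (G.map (fun g' => g' x ξ)).sum)) := by
          have hterm : ∀ g' ∈ G, Bnd Λ ρ ((∑ j, α' j) + (a + 1)) ((∑ j : Fin n, (0:ℕ)) + b)
              (mixpd α' 0 g') := by
            intro g' hg'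
            exact ih α' 0 (by
                have : (∑ j, α' j) + 1 = ∑ j, α j := hsum
                omega) false g' (a+1) b (hGsh g' hg') (fun h => absurd rfl h)
          obtain ⟨C, hC, hCb⟩ := Bnd_listsum hΛ (G.map (fun g' => mixpd α' 0 g'))
            (by
              intro g'' hg''
              obtain ⟨g', hg'mem, rfl⟩ := List.mem_map.mp hg''
              exact hterm g' hg'mem)
          refine ⟨C, hC, fun x ξ => ?_⟩
          have hrw := mixpd_listsum α' 0 G (fun g' hg' => Sh_JS hσJS (hGsh g' hg')) x ξ
          rw [hrw]
          have := hCb x ξ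
          simpa [List.map_map, Function.comp_def] using this
        have hw1 : (∑ j, α' j) + (a + 1) = (∑ j, α j) + a := by omega
        rw [hw1] at hBsum
        exact hBsum
    · -- peel a ξ-derivative
      have hp : p = true := hcond hβ
      subst hp
      obtain ⟨j, hj⟩ : ∃ j, β j ≠ 0 := by
        by_contra hc
        push_neg at hc
        exact hβ (funext fun j => hc j)
      obtain ⟨heq, hsum⟩ := sum_update_succ β j hj
      set β' := Function.update β j (β j - 1) with hβ'
      have hgJS : JS g := Sh_JS hσJS hsh
      obtain ⟨G, hGsh, hGeq⟩ := D2Sh hσJS j hsh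
      have hD2 : D2 j g = fun x ξ => (G.map (fun g' => g' x ξ)).sum := by
        funext x ξ; exact hGeq x ξ
      have hpeel : mixpd α β g = mixpd α β' (D2 j g) := by
        conv_lhs => rw [heq]
        exact mixpd_peel2 hgJS α β' j
      rw [hpeel, hD2]
      have hBsum : Bnd Λ ρ ((∑ i, α i) + a) ((∑ i, β' i) + (b + 1))
          (mixpd α β' (fun x ξ => (G.map (fun g' => g' x ξ)).sum)) := by
        have hterm : ∀ g' ∈ G, Bnd Λ ρ ((∑ i, α i) + a) ((∑ i, β' i) + (b + 1))
            (mixpd α β' g') := by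
          intro g' hg'
          exact ih α β' (by
              have : (∑ i, β' i) + 1 = ∑ i, β i := hsum
              omega) true g' a (b+1) (hGsh g' hg') (fun _ => rfl)
        obtain ⟨C, hC, hCb⟩ := Bnd_listsum hΛ (G.map (fun g' => mixpd α β' g'))
          (by
            intro g'' hg''
            obtain ⟨g', hg'mem, rfl⟩ := List.mem_map.mp hg''
            exact hterm g' hg'mem)
        refine ⟨C, hC, fun x ξ => ?_⟩
        have hrw := mixpd_listsum α β' G (fun g' hg' => Sh_JS hσJS (hGsh g' hg')) x ξ
        rw [hrw]
        have := hCb x ξ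
        simpa [List.map_map, Function.comp_def] using this
      have hw2 : (∑ i, β' i) + (b + 1) = (∑ i, β i) + b := by omega
      rw [hw2] at hBsum
      exact hBsum

end Aux9
/-- if `σ ∈ S^{0,0}_{ρ,Λ}` and `F : ℂ → ℂ` is smooth, then
`F ∘ σ ∈ S^{0,0}_{ρ,Λ}`. -/
theorem comp_SGClass_zero (n : ℕ) (hn : 1 ≤ n) (Λ : En n → ℝ) (μ₀ μ₁ μ ρ : ℝ)
    (hw : IsWeight n Λ μ₀ μ₁ μ) (hρ : 0 < ρ) (hρμ : ρ ≤ 1 / μ)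
    (σ : En n → En n → ℂ) (hσ : SGClass Λ ρ 0 0 σ)
    (F : ℂ → ℂ) (hF : ContDiff ℝ (⊤ : ℕ∞) F) :
    SGClass Λ ρ 0 0 (fun x ξ => F (σ x ξ)) := by
  obtain ⟨hσs, hσb⟩ := hσ
  have hσJS : JS σ := hσs
  constructor
  · exact hF.comp hσs
  · intro α β
    have hm := master hw.pos hσJS hσb ((∑ i, α i) + (∑ i, β i)) α β le_rfl true
      (fun x ξ => F (σ x ξ)) 0 0 (Sh.head true F hF) (fun _ => rfl)
    obtain ⟨C, hC, hCb⟩ := hm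
    refine ⟨C, hC, fun x ξ => ?_⟩
    have e1 : ((0:ℝ) - ρ * ∑ i, (α i : ℝ)) = -(ρ * (((∑ i, α i) + 0 : ℕ) : ℝ)) := by
      push_cast; ring
    have e2 : ((0:ℝ) - ρ * ∑ i, (β i : ℝ)) = -(ρ * (((∑ i, β i) + 0 : ℕ) : ℝ)) := by
      push_cast; ring
    rw [e1, e2]
    exact hCb x ξ
end
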